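/- arXiv:1801.00028 — 8 statements merged into one kernel-verified Lean document; each statement's English description precedes it below -/
import Mathlib

section
/- Let σ be an automorphism of an abelian variety A fixing the origin with σ^r = 1, and suppose E_σ = im(1 - σ) has dimension 1 (i.e., σ is a pseudoreflection). Then σ restricts to an automorphism of the elliptic curve E_σ, and consequently r ∈ {2, 3, 4, 6}. -/
noncomputable section

abbrev Vn (n : ℕ) := Fin n → ℂ

/-- `Λ` is a lattice in `ℂ^n`: a discrete subgroup spanning `ℂ^n` over `ℝ`. -/
def IsLattice {n : ℕ} (Λ : AddSubgroup (Vn n)) : Prop :=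
  DiscreteTopology Λ ∧ Submodule.span ℝ (Λ : Set (Vn n)) = ⊤

open Module LinearMap Submodule

theorem int_trace (L : Submodule ℤ ℂ) [DiscreteTopology L] [IsZLattice ℝ L]
    (g : ℂ →ₗ[ℝ] ℂ) (hg : ∀ x ∈ L, g x ∈ L) :
    ∃ m : ℤ, LinearMap.trace ℝ ℂ g = m := by
  haveI := ZLattice.module_free ℝ L
  haveI := ZLattice.module_finite ℝ L
  set b := Module.Free.chooseBasis ℤ L with hb
  set c := b.ofZLatticeBasis ℝ L with hc
  have hgi : ∀ i, g (c i) ∈ L := fun i => by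
    rw [hc, b.ofZLatticeBasis_apply ℝ L]; exact hg _ (b i).2
  refine ⟨∑ i, b.repr ⟨g (c i), hgi i⟩ i, ?_⟩
  rw [LinearMap.trace_eq_matrix_trace ℝ c g, Matrix.trace]
  push_cast
  refine Finset.sum_congr rfl fun i _ => ?_
  rw [Matrix.diag_apply, LinearMap.toMatrix_apply]
  have := b.ofZLatticeBasis_repr_apply ℝ L ⟨g (c i), hgi i⟩ i
  rw [← hc] at this
  simpa using this
theorem trace_mulLeft (ζ : ℂ) :
    LinearMap.trace ℝ ℂ ((LinearMap.mulLeft ℝ ζ) : ℂ →ₗ[ℝ] ℂ) = 2 * ζ.re := by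
  rw [LinearMap.trace_eq_matrix_trace ℝ Complex.basisOneI, Matrix.trace]
  simp [Fin.sum_univ_two, Matrix.diag_apply, LinearMap.toMatrix_apply, Algebra.leftMulMatrix_complex]
  ring
theorem order_of_root (ζ : ℂ) (t : ℤ) (ht : (t:ℝ) = 2*ζ.re) (hζ1 : ζ ≠ 1)
    (habs : ‖ζ‖ = 1) : orderOf ζ ∈ ({2,3,4,6} : Set ℕ) := by
  have hmc : ζ * (starRingEnd ℂ) ζ = 1 := by
    rw [Complex.mul_conj]; norm_cast
    rw [← Complex.sq_norm, habs]; norm_num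
  have hac : ζ + (starRingEnd ℂ) ζ = ((2*ζ.re : ℝ) : ℂ) := by
    rw [Complex.add_conj]
  have htC : (t : ℂ) = ((2*ζ.re : ℝ) : ℂ) := by exact_mod_cast congrArg Complex.ofReal ht
  have heq : ζ^2 + 1 = (t : ℂ) * ζ := by linear_combination ζ * hac - hmc - ζ * htC
  have h1 : |ζ.re| ≤ 1 := by rw [← habs]; exact Complex.abs_re_le_norm ζ
  rw [abs_le] at h1
  have hl : -2 ≤ t := by exact_mod_cast (by linarith : (-2:ℝ) ≤ (t:ℝ))
  have hu : t ≤ 2 := by exact_mod_cast (by linarith : (t:ℝ) ≤ (2:ℝ))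
  have hζ2 : ζ ≠ 2 := fun h => by rw [h] at habs; simp at habs
  simp only [Set.mem_insert_iff, Set.mem_singleton_iff]
  interval_cases t
  · -- ζ = -1, order 2
    have hz : ζ = -1 := by
      have h0 : (ζ + 1)^2 = 0 := by push_cast at heq; linear_combination heq
      have := pow_eq_zero_iff (n := 2) (by norm_num) |>.mp h0
      linear_combination this
    left
    rw [hz]
    exact orderOf_eq_prime (by norm_num) (by norm_num)
  · -- order 3
    right; left
    push_cast at heq
    exact orderOf_eq_prime (by linear_combination (ζ - 1) * heq) hζ1
  · -- order 4
    right; right; left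
    push_cast at heq
    have h2 : ζ^2 = -1 := by linear_combination heq
    refine orderOf_eq_of_pow_and_pow_div_prime (by norm_num) (by linear_combination (ζ^2 - 1) * heq) ?_
    intro p hp hpd
    have hp4 : p ≤ 4 := Nat.le_of_dvd (by norm_num) hpd
    have hp2 : 2 ≤ p := hp.two_le
    interval_cases p
    · rw [pow_succ, pow_one, ← sq, h2]; norm_num
    · exact absurd hpd (by norm_num)
    · exact absurd hp (by norm_num)
  · -- order 6
    right; right; right
    push_cast at heq
    have h3 : ζ^3 = -1 := by linear_combination (ζ + 1) * heq
    refine orderOf_eq_of_pow_and_pow_div_prime (by norm_num) (by linear_combination (ζ^3-1)*(ζ+1)*heq) ?_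
    intro p hp hpd
    have hp6 : p ≤ 6 := Nat.le_of_dvd (by norm_num) hpd
    have hp2 : 2 ≤ p := hp.two_le
    interval_cases p
    · -- ζ^3 ≠ 1
      rw [show (6/2 : ℕ) = 3 from rfl, h3]; norm_num
    · -- ζ^2 ≠ 1
      rw [show (6/3 : ℕ) = 2 from rfl]
      intro h2
      have : ζ = 2 := by linear_combination h2 - heq
      exact hζ2 this
    · exact absurd hp (by norm_num)
    · exact absurd hpd (by norm_num)
    · exact absurd hp (by norm_num)
  · -- ζ = 1 contradiction
    push_cast at heq
    have h0 : (ζ - 1)^2 = 0 := by linear_combination heq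
    have h1 : ζ - 1 = 0 := pow_eq_zero_iff (n := 2) (by norm_num) |>.mp h0
    exact absurd (by linear_combination h1 : ζ = 1) hζ1



/-- Let `σ` be an automorphism of an abelian variety `A = ℂ^n ⧸ Λ` fixing the
origin, of exact order `r`, and suppose that `E_σ = im (1 - σ)` has dimension `1` (i.e. `σ`
is a pseudoreflection).  Then `σ` restricts to an automorphism of the elliptic curve `E_σ`
(on tangent spaces, `σ` maps the line `im (1 - σ)` onto itself), and consequently
`r ∈ {2, 3, 4, 6}`. -/
theorem pseudoreflection_acts_on_Esigma {n r : ℕ} (hr : 0 < r)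
    (Λ : AddSubgroup (Vn n)) (hΛ : IsLattice Λ)
    (f : Vn n ≃ₗ[ℂ] Vn n) (hfΛ : ∀ v, v ∈ Λ ↔ f v ∈ Λ)
    (hord : orderOf f = r)
    (hdim : Module.finrank ℂ
      (LinearMap.range ((1 : Vn n →ₗ[ℂ] Vn n) - (f : Vn n →ₗ[ℂ] Vn n))) = 1) :
    Submodule.map (f : Vn n →ₗ[ℂ] Vn n)
        (LinearMap.range ((1 : Vn n →ₗ[ℂ] Vn n) - (f : Vn n →ₗ[ℂ] Vn n))) =
      LinearMap.range ((1 : Vn n →ₗ[ℂ] Vn n) - (f : Vn n →ₗ[ℂ] Vn n)) ∧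
    r ∈ ({2, 3, 4, 6} : Set ℕ) := by
  set F := (f : Vn n →ₗ[ℂ] Vn n) with hF
  set T := (1 : Vn n →ₗ[ℂ] Vn n) - F with hT
  set E := LinearMap.range T with hE
  set K := LinearMap.ker T with hK
  have hTapp : ∀ x, T x = x - f x := fun x => by simp [hT, hF]
  -- part 1
  have hcomm : F * T = T * F := by rw [hT, mul_sub, sub_mul, mul_one, one_mul]
  have hmapE : Submodule.map F E = E := by
    calc Submodule.map F (range T) = range (F ∘ₗ T) := (range_comp T F).symm
      _ = range (T ∘ₗ F) := by rw [show F ∘ₗ T = T ∘ₗ F from hcomm]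
      _ = Submodule.map T (range F) := range_comp F T
      _ = Submodule.map T ⊤ := by rw [LinearEquiv.range]
      _ = range T := map_top T
  -- eigenvector
  obtain ⟨e, heE, hene⟩ : ∃ e ∈ E, e ≠ 0 :=
    Submodule.exists_mem_ne_zero_of_ne_bot (by
      intro h; rw [h] at hdim; simp [finrank_bot] at hdim)
  have hspan : span ℂ {e} = E := by
    apply Submodule.eq_of_le_of_finrank_eq
    · rw [Submodule.span_le, Set.singleton_subset_iff]; exact heE
    · rw [finrank_span_singleton hene, hdim]
  have hfeE : f e ∈ E := by
    rw [← hmapE]; exact Submodule.mem_map_of_mem heE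
  obtain ⟨ζ, hζ⟩ : ∃ ζ : ℂ, f e = ζ • e := by
    rw [← hspan] at hfeE
    obtain ⟨c, hc⟩ := Submodule.mem_span_singleton.mp hfeE
    exact ⟨c, hc.symm⟩
  -- powers of f on e and on K
  have hmul : ∀ (m : ℕ) (x : Vn n), (f ^ (m+1)) x = (f ^ m) (f x) := fun m x => by
    rw [pow_succ]; rfl
  have hpow : ∀ m : ℕ, (f ^ m) e = ζ ^ m • e := by
    intro m
    induction m with
    | zero => simp
    | succ m ih => rw [hmul, hζ, map_smul, ih, smul_smul, ← pow_succ']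
  have hKfix : ∀ y ∈ K, ∀ m : ℕ, (f ^ m) y = y := by
    intro y hy
    have hfy : f y = y := by
      have h0 : y - f y = 0 := by rw [← hTapp]; exact hy
      rw [sub_eq_zero] at h0
      exact h0.symm
    intro m
    induction m with
    | zero => rfl
    | succ m ih => rw [hmul, hfy, ih]
  have hfr : f ^ r = 1 := by rw [← hord]; exact pow_orderOf_eq_one f
  -- K ⊓ E = ⊥
  have hKE : K ⊓ E = ⊥ := by
    rw [Submodule.eq_bot_iff]
    rintro x ⟨hxK, hxE⟩
    obtain ⟨y, hy⟩ := hxE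
    have hfx : f x = x := by
      have h0 : x - f x = 0 := by rw [← hTapp]; exact hxK
      rwa [sub_eq_zero, eq_comm] at h0
    have htel : ∑ k ∈ Finset.range r, ((f ^ k) y - (f ^ (k+1)) y) = y - (f ^ r) y := by
      have := Finset.sum_range_sub' (fun k => (f ^ k) y) r
      simpa using this
    have hterm : ∀ k, (f ^ k) y - (f ^ (k+1)) y = x := by
      intro k
      rw [hmul]
      have : (f ^ k) x = x := by
        induction k with
        | zero => rfl
        | succ k ih => rw [hmul, hfx, ih]
      calc (f ^ k) y - (f ^ k) (f y) = (f ^ k) (y - f y) := by rw [map_sub]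
        _ = (f ^ k) x := by rw [← hTapp]; rw [hy]
        _ = x := this
    rw [Finset.sum_congr rfl (fun k _ => hterm k), Finset.sum_const, Finset.card_range] at htel
    have hfry : (f ^ r) y = y := by rw [hfr]; rfl
    rw [hfry, sub_self] at htel
    have hrc : (r : ℂ) ≠ 0 := Nat.cast_ne_zero.mpr hr.ne'
    have hx0 : (r : ℂ) • x = 0 := by rw [Nat.cast_smul_eq_nsmul]; exact htel
    rcases smul_eq_zero.mp hx0 with h | h
    · exact absurd h hrc
    · exact h
  -- ζ ≠ 1
  have hζ1 : ζ ≠ 1 := by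
    intro h
    rw [h, one_smul] at hζ
    have heK : e ∈ K := by
      show T e = 0
      rw [hTapp, hζ, sub_self]
    have : e ∈ K ⊓ E := ⟨heK, heE⟩
    rw [hKE] at this
    exact hene this
  -- ζ ^ r = 1
  have hζr : ζ ^ r = 1 := by
    have h1 : (f ^ r) e = e := by rw [hfr]; rfl
    rw [hpow] at h1
    have h2 : (ζ ^ r - 1) • e = 0 := by rw [sub_smul, one_smul, h1, sub_self]
    rcases smul_eq_zero.mp h2 with h | h
    · rwa [sub_eq_zero] at h
    · exact absurd h hene
  -- K ⊔ E = ⊤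
  have hfin : FiniteDimensional ℂ (Vn n) := by infer_instance
  have hKdim : finrank ℂ K + 1 = n := by
    have := LinearMap.finrank_range_add_finrank_ker T
    rw [← hE, ← hK, hdim] at this
    rw [add_comm]
    rw [this]
    simp
  have hsup : K ⊔ E = ⊤ := by
    apply Submodule.eq_top_of_finrank_eq
    have h1 := Submodule.finrank_sup_add_finrank_inf_eq K E
    rw [hKE, finrank_bot, add_zero, hdim, hKdim] at h1
    rw [h1]
    simp
  -- orderOf ζ = r
  have hordζ : orderOf ζ = r := by
    have h1 : orderOf ζ ∣ r := orderOf_dvd_of_pow_eq_one hζr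
    have h2 : r ∣ orderOf ζ := by
      rw [← hord]
      apply orderOf_dvd_of_pow_eq_one
      apply LinearEquiv.toLinearMap_injective
      apply LinearMap.ext
      intro x
      have hx : x ∈ K ⊔ E := by rw [hsup]; exact Submodule.mem_top
      obtain ⟨y, hy, z, hz, hyz⟩ := Submodule.mem_sup.mp hx
      rw [← hspan] at hz
      obtain ⟨c, hc⟩ := Submodule.mem_span_singleton.mp hz
      have : (f ^ orderOf ζ) x = x := by
        rw [← hyz, map_add, hKfix y hy, ← hc, map_smul, hpow, pow_orderOf_eq_one, one_smul]
      simpa using this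
    exact Nat.dvd_antisymm h1 h2
  -- the lattice in ℂ
  set ψ : ℂ →ₗ[ℝ] Vn n := (LinearMap.toSpanSingleton ℂ (Vn n) e).restrictScalars ℝ with hψdef
  have hψ : ∀ z : ℂ, ψ z = z • e := fun z => rfl
  have hψinj : Function.Injective ψ := by
    intro a b hab
    rw [hψ, hψ] at hab
    have : (a - b) • e = 0 := by rw [sub_smul, hab, sub_self]
    rcases smul_eq_zero.mp this with h | h
    · rwa [sub_eq_zero] at h
    · exact absurd h hene
  have hψcont : Continuous ψ := by
    simp only [hψdef]
    exact (continuous_id.smul continuous_const : Continuous fun z : ℂ => z • e)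
  set M : Submodule ℤ (Vn n) :=
    (AddSubgroup.toIntSubmodule Λ) ⊓ (Submodule.restrictScalars ℤ (E.restrictScalars ℝ)) with hM
  have hMmem : ∀ x, x ∈ M ↔ x ∈ Λ ∧ x ∈ E := by
    intro x
    rw [hM, Submodule.mem_inf]
    rfl
  haveI hΛdisc : DiscreteTopology Λ := hΛ.1
  haveI hMdisc : DiscreteTopology M :=
    DiscreteTopology.of_subset hΛdisc (fun x hx => ((hMmem x).mp hx).1)
  have hEψ : ∀ v ∈ E, ∃ z : ℂ, ψ z = v := by
    intro v hv
    rw [← hspan] at hv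
    obtain ⟨c, hc⟩ := Submodule.mem_span_singleton.mp hv
    exact ⟨c, by rw [hψ, hc]⟩
  set L : Submodule ℤ ℂ := ZLattice.comap ℝ M ψ with hL
  have hLmem : ∀ z : ℂ, z ∈ L ↔ ψ z ∈ M := fun z => Iff.rfl
  haveI hLdisc : DiscreteTopology L := ZLattice.comap_discreteTopology ℝ M hψcont hψinj
  -- M spans E over ℝ
  have hTΛ : ∀ v ∈ Λ, T v ∈ M := by
    intro v hv
    rw [hMmem]
    constructor
    · rw [hTapp]
      exact Λ.sub_mem hv ((hfΛ v).mp hv)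
    · exact LinearMap.mem_range_self T v
  have hMspan : ∀ x ∈ E, x ∈ span ℝ (M : Set (Vn n)) := by
    have h1 : Submodule.map (T.restrictScalars ℝ) (span ℝ (Λ : Set (Vn n)))
        ≤ span ℝ (M : Set (Vn n)) := by
      rw [Submodule.map_span]
      apply Submodule.span_mono
      rintro _ ⟨v, hv, rfl⟩
      exact hTΛ v hv
    intro x hx
    obtain ⟨y, hy⟩ := hx
    apply h1
    rw [hΛ.2]
    exact ⟨y, Submodule.mem_top, hy⟩
  haveI hLlat : IsZLattice ℝ L := by
    constructor
    have hpre : (L : Set ℂ) = ψ ⁻¹' (M : Set (Vn n)) := rfl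
    rw [hpre, Submodule.span_preimage_eq ⟨0, M.zero_mem⟩ ?_]
    · rw [eq_top_iff]
      intro z _
      rw [Submodule.mem_comap]
      exact hMspan (ψ z) (by rw [hψ]; exact Submodule.smul_mem _ _ (hspan ▸ Submodule.mem_span_singleton_self e))
    · intro x hx
      obtain ⟨z, hz⟩ := hEψ x ((hMmem x).mp hx).2
      exact ⟨z, hz⟩
  -- multiplication by ζ preserves L
  have hg : ∀ x ∈ L, (LinearMap.mulLeft ℝ ζ) x ∈ L := by
    intro x hx
    rw [hLmem] at hx ⊢
    rw [hMmem] at hx ⊢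
    have hkey : ψ (ζ * x) = f (ψ x) := by
      rw [hψ, hψ, map_smul, hζ, smul_smul, mul_comm]
    rw [LinearMap.mulLeft_apply, hkey]
    exact ⟨(hfΛ _).mp hx.1, hmapE ▸ Submodule.mem_map_of_mem hx.2⟩
  obtain ⟨t, htr⟩ := int_trace L (LinearMap.mulLeft ℝ ζ) hg
  rw [trace_mulLeft] at htr
  -- |ζ| = 1
  have habs : ‖ζ‖ = 1 := by
    have h1 : ‖ζ‖ ^ r = 1 := by rw [← norm_pow, hζr, norm_one]
    have h0 : 0 ≤ ‖ζ‖ := norm_nonneg _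
    rcases lt_trichotomy (‖ζ‖) 1 with h | h | h
    · have := pow_lt_one₀ h0 h hr.ne'
      rw [h1] at this
      norm_num at this
    · exact h
    · have := one_lt_pow₀ h hr.ne'
      rw [h1] at this
      norm_num at this
  have hmem := order_of_root ζ t htr.symm hζ1 habs
  rw [hordζ] at hmem
  exact ⟨hmapE, hmem⟩
end
end

section
/- Let G be a finite group acting on an abelian variety A by automorphisms fixing the origin, such that the quotient A/G is smooth and the Néron–Severi group of A/G tensored with ℚ is one-dimensional (Picard number 1). Then G leaves no non-trivial proper abelian subvariety of A invariant. -/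
noncomputable section

/-- A pseudoreflection: a linear automorphism whose fixed subspace is a hyperplane. -/
def IsPseudoreflection {n : ℕ} (g : Vn n ≃ₗ[ℂ] Vn n) : Prop :=
  Module.finrank ℂ
    (LinearMap.range ((1 : Vn n →ₗ[ℂ] Vn n) - (g : Vn n →ₗ[ℂ] Vn n))) = 1

/-- The automorphism of `A = ℂ^n ⧸ Λ` induced by `g` fixes the point `x`. -/
def FixesPt {n : ℕ} (Λ : AddSubgroup (Vn n)) (g : Vn n ≃ₗ[ℂ] Vn n)
    (x : Vn n ⧸ Λ) : Prop :=
  ∃ v : Vn n, QuotientAddGroup.mk' Λ v = x ∧ g v - v ∈ Λ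

/-- Smoothness of the quotient `A/G` of the abelian variety `A = ℂ^n ⧸ Λ` by the finite
group `G`, encoded via the Chevalley–Shephard–Todd criterion: the stabilizer of every point
of `A` is generated by the pseudoreflections it contains. -/
def SmoothQuotient {n : ℕ} (Λ : AddSubgroup (Vn n))
    (G : Set (Vn n ≃ₗ[ℂ] Vn n)) : Prop :=
  ∀ x : Vn n ⧸ Λ, ∀ g ∈ G, FixesPt Λ g x →
    g ∈ Subgroup.closure {h : Vn n ≃ₗ[ℂ] Vn n | h ∈ G ∧ FixesPt Λ h x ∧ IsPseudoreflection h}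

/-- A real alternating form `E` on `ℂ^n` representing a Néron–Severi class of `ℂ^n ⧸ Λ`:
`E` is alternating, compatible with the complex structure, and integral on the lattice. -/
def IsNSClass {n : ℕ} (Λ : AddSubgroup (Vn n))
    (E : Vn n →ₗ[ℝ] Vn n →ₗ[ℝ] ℝ) : Prop :=
  (∀ x y : Vn n, E x y = - E y x) ∧
  (∀ x y : Vn n, E ((Complex.I : ℂ) • x) ((Complex.I : ℂ) • y) = E x y) ∧
  (∀ l ∈ Λ, ∀ m ∈ Λ, ∃ k : ℤ, E l m = (k : ℝ))

/-- `E` is invariant under the group `G`. -/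
def GInvariantForm {n : ℕ} (G : Subgroup (Vn n ≃ₗ[ℂ] Vn n))
    (E : Vn n →ₗ[ℝ] Vn n →ₗ[ℝ] ℝ) : Prop :=
  ∀ g ∈ G, ∀ x y : Vn n, E (g x) (g y) = E x y

-- auxiliary lemmas

lemma myRatCast_smul_eq {n : ℕ} (q : ℚ) (v : Vn n) : (q : ℝ) • v = q • v := by
  rw [← eq_ratCast (algebraMap ℚ ℝ) q, algebraMap_smul]

def qForm {ι : Type*} [Fintype ι] (M : ι → ι → ℚ) : LinearMap.BilinForm ℚ (ι → ℚ) :=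
  LinearMap.mk₂ ℚ (fun c d => ∑ i, ∑ j, c i * d j * M i j)
    (fun a b d => by simp [add_mul, Finset.sum_add_distrib])
    (fun q a d => by simp [Finset.mul_sum, mul_assoc])
    (fun a d d' => by simp [mul_add, add_mul, Finset.sum_add_distrib])
    (fun q a d => by
      simp only [Finset.mul_sum, Pi.smul_apply, smul_eq_mul]
      refine Finset.sum_congr rfl fun i _ => Finset.sum_congr rfl fun j _ => by ring)

lemma qForm_apply {ι : Type*} [Fintype ι] (M : ι → ι → ℚ) (c d : ι → ℚ) :
    qForm M c d = ∑ i, ∑ j, c i * d j * M i j := rfl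

lemma compatE {n : ℕ} (E : Vn n →ₗ[ℝ] Vn n →ₗ[ℝ] ℝ) {ι : Type*} [Fintype ι]
    (v : ι → Vn n) (M : ι → ι → ℚ) (hM : ∀ i j, E (v i) (v j) = ((M i j : ℚ) : ℝ))
    (c d : ι → ℚ) :
    E (∑ i, c i • v i) (∑ j, d j • v j) = ((qForm M c d : ℚ) : ℝ) := by
  simp only [← myRatCast_smul_eq, map_sum, map_smul, LinearMap.sum_apply,
    LinearMap.smul_apply, smul_eq_mul, qForm_apply, hM]
  push_cast
  rw [Finset.sum_comm]
  refine Finset.sum_congr rfl fun i _ => ?_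
  rw [Finset.mul_sum]
  refine Finset.sum_congr rfl fun j _ => by ring


set_option maxHeartbeats 1000000 in
/-- Let `G` be a finite group acting on an abelian variety `A = ℂ^n ⧸ Λ` by
automorphisms fixing the origin, such that `A/G` is smooth and `NS(A/G) ⊗ ℚ ≅ ℚ`
(Picard number 1); here `NS(A/G) ⊗ ℚ` is identified with the space of `G`-invariant rational
Néron–Severi classes of `A`.  Then `G` leaves no non-trivial proper abelian subvariety of `A`
invariant: every `G`-stable abelian subvariety (given by a `G`-stable complex subspace `W`
meeting `Λ` in a lattice of `W`) is `0` or `A`. -/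
theorem no_invariant_abelian_subvariety {n : ℕ}
    (Λ : AddSubgroup (Vn n)) (hΛ : IsLattice Λ)
    (G : Subgroup (Vn n ≃ₗ[ℂ] Vn n)) (hGfin : Finite G)
    (hGΛ : ∀ g ∈ G, ∀ v ∈ Λ, g v ∈ Λ)
    (hpol : ∃ E : Vn n →ₗ[ℝ] Vn n →ₗ[ℝ] ℝ, IsNSClass Λ E ∧ GInvariantForm G E ∧
      ∀ x : Vn n, x ≠ 0 → 0 < E ((Complex.I : ℂ) • x) x)
    (hsmooth : SmoothQuotient Λ (G : Set (Vn n ≃ₗ[ℂ] Vn n)))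
    (hpic : ∃ E₀ : Vn n →ₗ[ℝ] Vn n →ₗ[ℝ] ℝ, IsNSClass Λ E₀ ∧ GInvariantForm G E₀ ∧ E₀ ≠ 0 ∧
      ∀ E : Vn n →ₗ[ℝ] Vn n →ₗ[ℝ] ℝ, IsNSClass Λ E → GInvariantForm G E →
        ∃ q : ℚ, E = (q : ℝ) • E₀) :
    ∀ W : Submodule ℂ (Vn n),
      Submodule.span ℝ ((Λ : Set (Vn n)) ∩ (W : Set (Vn n))) = W.restrictScalars ℝ →
      (∀ g ∈ G, W.map (g : Vn n →ₗ[ℂ] Vn n) = W) →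
      W = ⊥ ∨ W = ⊤ := by
  classical
  intro W hWspan hWG
  by_contra hcon
  push_neg at hcon
  obtain ⟨hWbot, hWtop⟩ := hcon
  obtain ⟨E, ⟨hE1, hE2, hE3⟩, hEG, hEpos⟩ := hpol
  -- the lattice as a ℤ-submodule, and a ℤ-basis
  set L : Submodule ℤ (Vn n) := AddSubgroup.toIntSubmodule Λ with hL
  have : DiscreteTopology L := hΛ.1
  have : IsZLattice ℝ L := ⟨hΛ.2⟩
  have hfree : Module.Free ℤ L := ZLattice.module_free ℝ L
  have hfin : Module.Finite ℤ L := ZLattice.module_finite ℝ L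
  set ι := Module.Free.ChooseBasisIndex ℤ L with hι
  set b : Module.Basis ι ℤ L := Module.Free.chooseBasis ℤ L with hb
  set θ : (ι → ℚ) →ₗ[ℚ] Vn n :=
    Fintype.linearCombination ℚ (fun i => ((b i : Vn n))) with hθdef
  have hθa : ∀ c, θ c = ∑ i, ((c i : ℝ)) • (b i : Vn n) := by
    intro c
    rw [hθdef, Fintype.linearCombination_apply]
    exact Finset.sum_congr rfl fun i _ => (myRatCast_smul_eq _ _).symm
  have hlam : ∀ l ∈ Λ, ∃ m : ι → ℤ, l = θ (fun i => (m i : ℚ)) := by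
    intro l hl
    set r : ι → ℤ := fun i => b.repr ⟨l, hl⟩ i with hr
    refine ⟨r, ?_⟩
    have hrep : (∑ i, r i • b i) = (⟨l, hl⟩ : L) := b.sum_repr ⟨l, hl⟩
    have h2 : l = ((∑ i, r i • b i : L) : Vn n) := by rw [hrep]
    rw [h2, hθa]
    push_cast
    exact Finset.sum_congr rfl fun i _ => (Int.cast_smul_eq_zsmul ℝ _ _).symm
  have hθinj : ∀ c, θ c = 0 → c = 0 := by
    intro c hc
    have hbV : LinearIndependent ℝ (fun i => (b i : Vn n)) := by
      have h := (b.ofZLatticeBasis ℝ L).linearIndependent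
      have he : ∀ i, (b.ofZLatticeBasis ℝ L) i = (b i : Vn n) := fun i =>
        b.ofZLatticeBasis_apply ℝ L i
      simpa [funext he] using h
    rw [hθa] at hc
    have := Fintype.linearIndependent_iff.mp hbV _ hc
    funext i
    exact_mod_cast this i
  -- the rational Gram matrix of E on the lattice
  have hbΛ : ∀ i, ((b i : Vn n)) ∈ Λ := fun i => (b i).2
  have hMex : ∀ i j, ∃ mq : ℚ, E (b i : Vn n) (b j : Vn n) = ((mq : ℚ) : ℝ) := by
    intro i j
    obtain ⟨k, hk⟩ := hE3 _ (hbΛ i) _ (hbΛ j)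
    exact ⟨(k : ℚ), by rw [hk]; push_cast; rfl⟩
  choose M hMspec using hMex
  set B := qForm M with hB
  have hθq : ∀ c, θ c = ∑ i, c i • (b i : Vn n) := by
    intro c
    rw [hθdef, Fintype.linearCombination_apply]
  have hcompat : ∀ c d, E (θ c) (θ d) = ((B c d : ℚ) : ℝ) := by
    intro c d
    rw [hθq, hθq]
    exact compatE E _ M hMspec c d
  have hBskew : ∀ c d, B c d = - B d c := by
    intro c d
    have h := hE1 (θ c) (θ d)
    rw [hcompat, hcompat] at h
    exact_mod_cast h
  have hBrefl : B.IsRefl := fun c d h => by rw [hBskew d c, h, neg_zero]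
  -- the rational model of W
  set Wq : Submodule ℚ (ι → ℚ) := (W.restrictScalars ℚ).comap θ with hWq
  have hWqmem : ∀ c, c ∈ Wq ↔ θ c ∈ W := fun c => Iff.rfl
  have hlamW : ∀ w, w ∈ Λ → w ∈ W → ∃ c, c ∈ Wq ∧ θ c = w := by
    intro w hw hwW
    obtain ⟨m, hm⟩ := hlam w hw
    exact ⟨_, (hWqmem _).mpr (hm ▸ hwW), hm.symm⟩
  have hWspan' : ∀ w ∈ W, w ∈ Submodule.span ℝ ((Λ : Set (Vn n)) ∩ (W : Set (Vn n))) := by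
    intro w hw
    rw [hWspan]
    exact hw
  have vanish₂ : ∀ x : Vn n, (∀ y, y ∈ Λ → y ∈ W → E x y = 0) → ∀ w ∈ W, E x w = 0 := by
    intro x hx w hw
    refine Submodule.span_induction ?_ ?_ ?_ ?_ (hWspan' w hw)
    · rintro y ⟨hy1, hy2⟩
      exact hx y hy1 hy2
    · simp
    · intro y z _ _ hy hz
      rw [map_add, hy, hz, add_zero]
    · intro a y _ hy
      rw [map_smul, hy, smul_zero]
  have vanish₁ : ∀ x : Vn n, (∀ y, y ∈ Λ → y ∈ W → E y x = 0) → ∀ w ∈ W, E w x = 0 := by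
    intro x hx w hw
    have h := vanish₂ x (fun y hy hyW => by rw [hE1 x y, hx y hy hyW, neg_zero]) w hw
    rw [hE1 w x, h, neg_zero]
  -- restriction of B to Wq is nondegenerate
  have hrest : (B.restrict Wq).Nondegenerate := by
    refine (LinearMap.IsRefl.nondegenerate_iff_separatingLeft (B := B.restrict Wq) (fun x y h => hBrefl _ _ h)).mpr ?_
    rintro ⟨c, hc⟩ h
    refine Subtype.ext ?_
    show c = 0
    by_contra hcne
    have hθc : θ c ∈ W := hc
    have hθne : θ c ≠ 0 := fun h0 => hcne (hθinj c h0)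
    have hpos := hEpos (θ c) hθne
    have hval : ∀ y, y ∈ Λ → y ∈ W → E (θ c) y = 0 := by
      intro y hy hyW
      obtain ⟨c', hc', rfl⟩ := hlamW y hy hyW
      have h3 : B c c' = 0 := h ⟨c', hc'⟩
      rw [hcompat, h3]
      norm_num
    have h4 := vanish₂ (θ c) hval _ (W.smul_mem (Complex.I : ℂ) hθc)
    have h5 : E ((Complex.I : ℂ) • θ c) (θ c) = 0 := by
      rw [hE1, h4, neg_zero]
    exact absurd h5 (ne_of_gt hpos)
  have hQcompl : IsCompl Wq (B.orthogonal Wq) :=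
    LinearMap.BilinForm.isCompl_orthogonal_of_restrict_nondegenerate hBrefl hrest
  -- decompose the standard basis vectors
  have hdec : ∀ i : ι, ∃ x, x ∈ Wq ∧ ∃ z, z ∈ B.orthogonal Wq ∧ x + z = Pi.single i 1 := by
    intro i
    have hc := hQcompl.codisjoint
    rw [codisjoint_iff] at hc
    have hmem : (Pi.single i 1 : ι → ℚ) ∈ Wq ⊔ B.orthogonal Wq := by
      rw [hc]; trivial
    obtain ⟨y, hy, z, hz, hyz⟩ := Submodule.mem_sup.mp hmem
    exact ⟨y, hy, z, hz, hyz⟩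
  choose cw hcw cu hcu hsum using hdec
  set wv : ι → Vn n := fun i => θ (cw i) with hwv
  set uv : ι → Vn n := fun i => θ (cu i) with huv
  have hwvW : ∀ i, wv i ∈ W := fun i => hcw i
  have hsplit : ∀ i, (b i : Vn n) = wv i + uv i := by
    intro i
    have h1 : θ (cw i + cu i) = θ (Pi.single i 1) := by rw [hsum i]
    rw [map_add] at h1
    have h2 : θ (Pi.single i 1) = (b i : Vn n) := by
      rw [hθdef]
      simpa using Fintype.linearCombination_apply_single (R := ℚ)
        (v := fun i => ((b i : Vn n))) i 1
    rw [h2] at h1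
    exact h1.symm
  -- the real complement
  set W' : Submodule ℝ (Vn n) := W.restrictScalars ℝ with hW'
  have hW'mem : ∀ x : Vn n, x ∈ W' ↔ x ∈ W := fun x => Iff.rfl
  set U : Submodule ℝ (Vn n) := LinearMap.BilinForm.orthogonal E W' with hU
  have hUmem : ∀ x : Vn n, x ∈ U ↔ ∀ w ∈ W, E w x = 0 := by
    intro x
    rw [hU, LinearMap.BilinForm.mem_orthogonal_iff]
    constructor
    · intro h w hw
      exact h w ((hW'mem w).mpr hw)
    · intro h w hw
      exact h w ((hW'mem w).mp hw)
  have huvU : ∀ i, uv i ∈ U := by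
    intro i
    rw [hUmem]
    refine vanish₁ (uv i) ?_
    intro y hy hyW
    obtain ⟨c', hc', rfl⟩ := hlamW y hy hyW
    have h0 : B c' (cu i) = 0 := by
      have h := hcu i
      rw [LinearMap.BilinForm.mem_orthogonal_iff] at h
      exact h c' hc'
    rw [huv, hcompat, h0]
    norm_num
  have hUI : ∀ u ∈ U, (Complex.I : ℂ) • u ∈ U := by
    intro u hu
    rw [hUmem] at hu ⊢
    intro w hw
    have hw' : (-Complex.I : ℂ) • w ∈ W := W.smul_mem _ hw
    have hsm : (Complex.I : ℂ) • ((-Complex.I : ℂ) • w) = w := by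
      rw [smul_smul]
      norm_num [Complex.I_mul_I]
    calc E w ((Complex.I : ℂ) • u)
        = E ((Complex.I : ℂ) • ((-Complex.I : ℂ) • w)) ((Complex.I : ℂ) • u) := by rw [hsm]
      _ = E ((-Complex.I : ℂ) • w) u := hE2 _ _
      _ = 0 := hu _ hw'
  -- lattice decomposition in real terms
  have hldec : ∀ l ∈ Λ, ∃ m : ι → ℤ,
      l = (∑ i, ((m i : ℝ)) • wv i) + (∑ i, ((m i : ℝ)) • uv i) := by
    intro l hl
    obtain ⟨m, hm⟩ := hlam l hl
    refine ⟨m, ?_⟩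
    rw [hm, hθa, ← Finset.sum_add_distrib]
    refine Finset.sum_congr rfl fun i _ => ?_
    rw [hsplit i, smul_add]
    push_cast
    rfl
  have hsumW : ∀ m : ι → ℤ, (∑ i, ((m i : ℝ)) • wv i) ∈ W' :=
    fun m => Submodule.sum_mem _ fun i _ => Submodule.smul_mem _ _ ((hW'mem _).mpr (hwvW i))
  have hsumU : ∀ m : ι → ℤ, (∑ i, ((m i : ℝ)) • uv i) ∈ U :=
    fun m => Submodule.sum_mem _ fun i _ => Submodule.smul_mem _ _ (huvU i)
  have hdisj : Disjoint W' U := by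
    rw [Submodule.disjoint_def]
    intro x hxW hxU
    by_contra hx0
    have hp := hEpos x hx0
    rw [hUmem] at hxU
    have h0 := hxU _ (W.smul_mem (Complex.I : ℂ) ((hW'mem x).mp hxW))
    exact absurd h0 (ne_of_gt hp)
  have hcodis : Codisjoint W' U := by
    rw [codisjoint_iff, eq_top_iff, ← hΛ.2, Submodule.span_le]
    intro l hl
    obtain ⟨m, hm⟩ := hldec l hl
    exact Submodule.mem_sup.mpr ⟨_, hsumW m, _, hsumU m, hm.symm⟩
  have hWU : IsCompl W' U := ⟨hdisj, hcodis⟩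
  set prj := Submodule.linearProjOfIsCompl W' U hWU with hprj
  set pr : Vn n →ₗ[ℝ] Vn n := W'.subtype.comp prj with hpr
  have hprW : ∀ w ∈ W, pr w = w := by
    intro w hw
    exact congrArg Subtype.val
      (Submodule.linearProjOfIsCompl_apply_left hWU ⟨w, (hW'mem w).mpr hw⟩)
  have hprU : ∀ u ∈ U, pr u = 0 := by
    intro u hu
    show (prj u : Vn n) = 0
    rw [show prj u = 0 from Submodule.linearProjOfIsCompl_apply_right' hWU hu]
    rfl
  have hprmem : ∀ x, pr x ∈ W := fun x => (hW'mem _).mp (prj x).2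
  have hprdecomp : ∀ x, x - pr x ∈ U := by
    intro x
    rw [← Submodule.linearProjOfIsCompl_apply_eq_zero_iff (h := hWU)]
    rw [map_sub]
    have h1 : prj (pr x) = prj x := Submodule.linearProjOfIsCompl_apply_left hWU (prj x)
    exact sub_eq_zero.mpr h1.symm
  have hprI : ∀ x, pr ((Complex.I : ℂ) • x) = (Complex.I : ℂ) • pr x := by
    intro x
    have hx : (Complex.I : ℂ) • x = (Complex.I : ℂ) • pr x + (Complex.I : ℂ) • (x - pr x) := by
      rw [← smul_add]
      congr 1
      abel
    rw [hx, map_add, hprW _ (W.smul_mem _ (hprmem x)), hprU _ (hUI _ (hprdecomp x)), add_zero]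
  have hGW : ∀ g ∈ G, ∀ w ∈ W, (g : Vn n ≃ₗ[ℂ] Vn n) w ∈ W := by
    intro g hg w hw
    have h := hWG g hg
    rw [← h]
    exact Submodule.mem_map.mpr ⟨w, hw, rfl⟩
  have hGU : ∀ g ∈ G, ∀ u ∈ U, (g : Vn n ≃ₗ[ℂ] Vn n) u ∈ U := by
    intro g hg u hu
    rw [hUmem] at hu ⊢
    intro w hw
    have h := hWG g hg
    rw [← h] at hw
    obtain ⟨w'', hw'', rfl⟩ := Submodule.mem_map.mp hw
    calc E ((g : Vn n →ₗ[ℂ] Vn n) w'') ((g : Vn n ≃ₗ[ℂ] Vn n) u)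
        = E ((g : Vn n ≃ₗ[ℂ] Vn n) w'') ((g : Vn n ≃ₗ[ℂ] Vn n) u) := rfl
      _ = E w'' u := hEG g hg w'' u
      _ = 0 := hu w'' hw''
  have hprG : ∀ g ∈ G, ∀ x, pr ((g : Vn n ≃ₗ[ℂ] Vn n) x) = (g : Vn n ≃ₗ[ℂ] Vn n) (pr x) := by
    intro g hg x
    have hx : (g : Vn n ≃ₗ[ℂ] Vn n) x
        = (g : Vn n ≃ₗ[ℂ] Vn n) (pr x) + (g : Vn n ≃ₗ[ℂ] Vn n) (x - pr x) := by
      rw [← map_add]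
      congr 1
      abel
    rw [hx, map_add, hprW _ (hGW g hg _ (hprmem x)), hprU _ (hGU g hg _ (hprdecomp x)), add_zero]
  have hprΛ : ∀ l ∈ Λ, ∃ m : ι → ℤ, pr l = ∑ i, ((m i : ℝ)) • wv i := by
    intro l hl
    obtain ⟨m, hm⟩ := hldec l hl
    refine ⟨m, ?_⟩
    rw [hm, map_add, map_sum, map_sum]
    have h1 : ∀ i, pr (((m i : ℝ)) • wv i) = ((m i : ℝ)) • wv i := by
      intro i
      rw [map_smul, hprW _ (hwvW i)]
    have h2 : ∀ i, pr (((m i : ℝ)) • uv i) = 0 := by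
      intro i
      rw [map_smul, hprU _ (huvU i), smul_zero]
    simp only [h1, h2, Finset.sum_const_zero, add_zero]
  -- rational values and denominators
  set q : ι → ι → ℚ := fun i j => B (cw i) (cw j) with hq
  have hqE : ∀ i j, E (wv i) (wv j) = ((q i j : ℚ) : ℝ) := fun i j => hcompat (cw i) (cw j)
  set d : ℕ := ∏ i : ι, ∏ j : ι, (q i j).den with hd
  have hdpos : 0 < d := Finset.prod_pos fun i _ => Finset.prod_pos fun j _ => (q i j).pos
  have hdq : ∀ i j, ∃ k : ℤ, (d : ℚ) * q i j = (k : ℚ) := by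
    intro i j
    have hdvd : (q i j).den ∣ d := by
      refine dvd_trans ?_ (Finset.dvd_prod_of_mem _ (Finset.mem_univ i))
      exact Finset.dvd_prod_of_mem _ (Finset.mem_univ j)
    obtain ⟨t, ht⟩ := hdvd
    refine ⟨(t : ℤ) * (q i j).num, ?_⟩
    have h0 : (((q i j).den : ℚ)) ≠ 0 := by
      exact_mod_cast (q i j).den_nz
    have hden : (q i j) * (((q i j).den : ℚ)) = ((q i j).num : ℚ) :=
      ((div_eq_iff h0).mp (Rat.num_div_den (q i j))).symm
    have hdc : (d : ℚ) = ((q i j).den : ℚ) * (t : ℚ) := by exact_mod_cast ht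
    rw [hdc, show ((q i j).den : ℚ) * (t : ℚ) * q i j
      = (t : ℚ) * (q i j * ((q i j).den : ℚ)) by ring, hden]
    push_cast
    ring
  choose kk hkk using hdq
  -- the new invariant form F
  set F : Vn n →ₗ[ℝ] Vn n →ₗ[ℝ] ℝ := (d : ℝ) • (E.compl₁₂ pr pr) with hF
  have hFapp : ∀ x y, F x y = (d : ℝ) * E (pr x) (pr y) := by
    intro x y
    rw [hF]
    simp [LinearMap.compl₁₂_apply]
  have hFNS : IsNSClass Λ F := by
    refine ⟨fun x y => ?_, fun x y => ?_, ?_⟩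
    · rw [hFapp, hFapp, hE1]
      ring
    · rw [hFapp, hFapp, hprI, hprI, hE2]
    · intro l hl m' hm'
      obtain ⟨a, ha⟩ := hprΛ l hl
      obtain ⟨c, hc⟩ := hprΛ m' hm'
      refine ⟨∑ i, ∑ j, a i * c j * kk i j, ?_⟩
      rw [hFapp, ha, hc]
      have hE' : E (∑ i, ((a i : ℝ)) • wv i) (∑ j, ((c j : ℝ)) • wv j)
          = ((qForm q (fun i => ((a i : ℚ))) (fun j => ((c j : ℚ))) : ℚ) : ℝ) := by
        have hcc := compatE E wv q hqE (fun i => ((a i : ℚ))) (fun j => ((c j : ℚ)))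
        rw [← hcc]
        congr 1 <;>
          exact Finset.sum_congr rfl fun i _ => by rw [← myRatCast_smul_eq]; norm_num
      rw [hE', qForm_apply]
      push_cast
      rw [Finset.mul_sum]
      refine Finset.sum_congr rfl fun i _ => ?_
      rw [Finset.mul_sum]
      refine Finset.sum_congr rfl fun j _ => ?_
      have h2 : (d : ℝ) * ((q i j : ℚ) : ℝ) = ((kk i j : ℤ) : ℝ) := by
        exact_mod_cast congrArg (fun z : ℚ => (z : ℝ)) (hkk i j)
      linear_combination ((a i : ℝ) * (c j : ℝ)) * h2
  have hFG : GInvariantForm G F := by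
    intro g hg x y
    rw [hFapp, hFapp, hprG g hg, hprG g hg]
    congr 1
    exact hEG g hg _ _
  -- Picard number one: compare E and F
  obtain ⟨E₀, hE₀NS, hE₀G, hE₀ne, huniv⟩ := hpic
  obtain ⟨q₀, hq₀⟩ := huniv E ⟨hE1, hE2, hE3⟩ hEG
  obtain ⟨qF, hqF⟩ := huniv F hFNS hFG
  obtain ⟨w0, hw0W, hw0ne⟩ := (Submodule.ne_bot_iff W).mp hWbot
  have hU0 : U ≠ ⊥ := by
    intro h0
    apply hWtop
    have hWt : W' = ⊤ := by
      have hc := hcodis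
      rw [codisjoint_iff, h0, sup_bot_eq] at hc
      exact hc
    rw [eq_top_iff]
    intro x _
    have : x ∈ W' := by rw [hWt]; trivial
    exact (hW'mem x).mp this
  obtain ⟨u0, hu0U, hu0ne⟩ := (Submodule.ne_bot_iff U).mp hU0
  have hFw0 : 0 < F ((Complex.I : ℂ) • w0) w0 := by
    rw [hFapp, hprW _ (W.smul_mem _ hw0W), hprW _ hw0W]
    exact mul_pos (by exact_mod_cast hdpos) (hEpos w0 hw0ne)
  have hq₀ne : (q₀ : ℝ) ≠ 0 := by
    intro h0
    rw [h0, zero_smul] at hq₀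
    have hp := hEpos w0 hw0ne
    rw [hq₀] at hp
    simp at hp
  have hqFne : (qF : ℝ) ≠ 0 := by
    intro h0
    rw [h0, zero_smul] at hqF
    rw [hqF] at hFw0
    simp at hFw0
  have hE₀ : E₀ = (q₀ : ℝ)⁻¹ • E := by
    rw [hq₀, smul_smul, inv_mul_cancel₀ hq₀ne, one_smul]
  have hFE : F = ((qF : ℝ) * (q₀ : ℝ)⁻¹) • E := by rw [hqF, hE₀, smul_smul]
  have h1 : F ((Complex.I : ℂ) • u0) u0 = 0 := by
    rw [hFapp, hprU _ hu0U]
    simp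
  have h2 : F ((Complex.I : ℂ) • u0) u0 ≠ 0 := by
    rw [hFE]
    simp only [LinearMap.smul_apply, smul_eq_mul]
    exact mul_ne_zero (mul_ne_zero hqFne (inv_ne_zero hq₀ne)) (ne_of_gt (hEpos u0 hu0ne))
  exact h2 h1
end
end

section
/- Let G be a finite group acting on an abelian variety A by automorphisms fixing the origin such that A/G is smooth and of Picard number 1. Then the analytic representation of G on T_0(A) is irreducible. -/
noncomputable section

namespace AuxIrr

variable {n : ℕ}

lemma qsmulC (q : ℚ) (y : Vn n) : q • y = (q:ℂ) • y := by
  rw [← eq_ratCast (algebraMap ℚ ℂ) q, algebraMap_smul]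

lemma qsmulR (q : ℚ) (y : Vn n) : q • y = (q:ℝ) • y := by
  rw [← eq_ratCast (algebraMap ℚ ℝ) q, algebraMap_smul]

/-- The rational span of the lattice. -/
def Lq (Λ : AddSubgroup (Vn n)) : Submodule ℚ (Vn n) := Submodule.span ℚ (Λ : Set (Vn n))

lemma mem_Lq {Λ : AddSubgroup (Vn n)} {l : Vn n} (hl : l ∈ Λ) : l ∈ Lq Λ :=
  Submodule.subset_span hl
lemma sub_eq_Lq (Λ : AddSubgroup (Vn n)) (hΛ : IsLattice Λ) (S : Submodule ℚ (Vn n))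
    (hS : S ≤ Lq Λ) (hsp : Submodule.span ℝ (S : Set (Vn n)) = ⊤) : S = Lq Λ := by
  haveI : DiscreteTopology (AddSubgroup.toIntSubmodule Λ) := hΛ.1
  haveI : IsZLattice ℝ (AddSubgroup.toIntSubmodule Λ) := ⟨hΛ.2⟩
  haveI : Module.Finite ℤ (AddSubgroup.toIntSubmodule Λ) :=
    ZLattice.module_finite ℝ (AddSubgroup.toIntSubmodule Λ)
  haveI : Module.Free ℤ (AddSubgroup.toIntSubmodule Λ) :=
    ZLattice.module_free ℝ (AddSubgroup.toIntSubmodule Λ)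
  set b := Module.Free.chooseBasis ℤ (AddSubgroup.toIntSubmodule Λ) with hb
  set bR := b.ofZLatticeBasis ℝ with hbR
  -- Λ ⊆ ℤ-span of range bR
  have hspanZ : Submodule.span ℤ (Set.range (bR : _ → Vn n)) = AddSubgroup.toIntSubmodule Λ :=
    b.ofZLatticeBasis_span ℝ
  -- Lq = ℚ-span of range bR
  have hLq : Lq Λ = Submodule.span ℚ (Set.range (bR : _ → Vn n)) := by
    apply le_antisymm
    · rw [Lq, Submodule.span_le]
      intro l hl
      have : l ∈ Submodule.span ℤ (Set.range (bR : _ → Vn n)) := by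
        rw [hspanZ]; exact hl
      exact Submodule.span_le_restrictScalars ℤ ℚ _ this
    · rw [Submodule.span_le]
      rintro x ⟨i, rfl⟩
      apply Submodule.subset_span
      have h : bR i ∈ Submodule.span ℤ (Set.range (bR : _ → Vn n)) :=
        Submodule.subset_span ⟨i, rfl⟩
      rw [hspanZ] at h
      exact h
  haveI hfdLq : FiniteDimensional ℚ (Lq Λ) := by
    rw [hLq]
    exact FiniteDimensional.span_of_finite ℚ (Set.finite_range _)
  haveI hfdS : FiniteDimensional ℚ S := Submodule.finiteDimensional_of_le hS
  -- upper bound for finrank of Lq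
  have hcard : Module.finrank ℚ (Lq Λ) ≤ Module.finrank ℝ (Vn n) := by
    rw [hLq, Module.finrank_eq_card_basis bR]
    exact finrank_range_le_card _
  -- lower bound for finrank of S
  have hlow : Module.finrank ℝ (Vn n) ≤ Module.finrank ℚ S := by
    set c := Module.finBasis ℚ S with hc
    set v : Fin (Module.finrank ℚ S) → Vn n := fun i => (c i : Vn n) with hv
    have hSv : S = Submodule.span ℚ (Set.range v) := by
      conv_lhs => rw [← Submodule.map_subtype_top S]
      rw [← c.span_eq, Submodule.map_span, ← Set.range_comp]
      rfl
    have hsub : (S : Set (Vn n)) ⊆ (Submodule.span ℝ (Set.range v) : Set (Vn n)) := by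
      intro x hx
      rw [hSv] at hx
      exact Submodule.span_le_restrictScalars ℚ ℝ _ hx
    have htop : Submodule.span ℝ (Set.range v) = ⊤ := by
      rw [eq_top_iff, ← hsp]
      exact Submodule.span_le.2 hsub
    simpa using finrank_le_of_span_eq_top htop
  exact Submodule.eq_of_le_of_finrank_le hS (hcard.trans hlow)


lemma rat_vals (Λ : AddSubgroup (Vn n)) (E : Vn n →ₗ[ℝ] Vn n →ₗ[ℝ] ℝ)
    (hint : ∀ l ∈ Λ, ∀ m ∈ Λ, ∃ k : ℤ, E l m = (k:ℝ)) :
    ∀ x ∈ Lq Λ, ∀ y ∈ Lq Λ, ∃ q : ℚ, E x y = (q:ℝ) := by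
  intro x hx
  induction hx using Submodule.span_induction with
  | mem l hl =>
    intro y hy
    induction hy using Submodule.span_induction with
    | mem m hm => obtain ⟨k, hk⟩ := hint l hl m hm; exact ⟨k, by rw [hk]; push_cast; ring⟩
    | zero => exact ⟨0, by simp⟩
    | add y z _ _ hy hz =>
      obtain ⟨q1, h1⟩ := hy; obtain ⟨q2, h2⟩ := hz
      exact ⟨q1 + q2, by rw [map_add, h1, h2]; push_cast; ring⟩
    | smul a y _ hy =>
      obtain ⟨q1, h1⟩ := hy
      exact ⟨a * q1, by rw [qsmulR, map_smul, smul_eq_mul, h1]; push_cast; ring⟩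
  | zero => intro y hy; exact ⟨0, by simp⟩
  | add x z _ _ hx hz =>
    intro y hy
    obtain ⟨q1, h1⟩ := hx y hy; obtain ⟨q2, h2⟩ := hz y hy
    exact ⟨q1 + q2, by rw [map_add, LinearMap.add_apply, h1, h2]; push_cast; ring⟩
  | smul a x _ hx =>
    intro y hy
    obtain ⟨q1, h1⟩ := hx y hy
    exact ⟨a * q1, by
      rw [qsmulR, map_smul, LinearMap.smul_apply, smul_eq_mul, h1]; push_cast; ring⟩

lemma mul_den (q : ℚ) (N : ℕ) (h : q.den ∣ N) : ∃ k : ℤ, (N:ℝ) * (q:ℝ) = (k:ℝ) := by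
  obtain ⟨c, hc⟩ := h
  refine ⟨c * q.num, ?_⟩
  have hden : (q.den : ℝ) ≠ 0 := Nat.cast_ne_zero.2 q.den_nz
  rw [hc, Rat.cast_def]
  push_cast
  field_simp

lemma clear_denoms (Λ : AddSubgroup (Vn n)) (hΛ : IsLattice Λ)
    (B : Vn n →ₗ[ℝ] Vn n →ₗ[ℝ] ℝ)
    (hq : ∀ l ∈ Λ, ∀ m ∈ Λ, ∃ q : ℚ, B l m = (q:ℝ)) :
    ∃ N : ℕ, 0 < N ∧ ∀ l ∈ Λ, ∀ m ∈ Λ, ∃ k : ℤ, (N:ℝ) * B l m = (k:ℝ) := by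
  haveI : DiscreteTopology (AddSubgroup.toIntSubmodule Λ) := hΛ.1
  haveI : IsZLattice ℝ (AddSubgroup.toIntSubmodule Λ) := ⟨hΛ.2⟩
  haveI : Module.Finite ℤ (AddSubgroup.toIntSubmodule Λ) :=
    ZLattice.module_finite ℝ (AddSubgroup.toIntSubmodule Λ)
  haveI : Module.Free ℤ (AddSubgroup.toIntSubmodule Λ) :=
    ZLattice.module_free ℝ (AddSubgroup.toIntSubmodule Λ)
  set b := Module.Free.chooseBasis ℤ (AddSubgroup.toIntSubmodule Λ) with hb
  set bR := b.ofZLatticeBasis ℝ with hbR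
  have hspanZ : Submodule.span ℤ (Set.range (bR : _ → Vn n)) = AddSubgroup.toIntSubmodule Λ :=
    b.ofZLatticeBasis_span ℝ
  have hmem : ∀ i, bR i ∈ Λ := by
    intro i
    have h : bR i ∈ Submodule.span ℤ (Set.range (bR : _ → Vn n)) :=
      Submodule.subset_span ⟨i, rfl⟩
    rw [hspanZ] at h
    exact h
  have hch : ∀ i j, ∃ q : ℚ, B (bR i) (bR j) = (q:ℝ) := fun i j => hq _ (hmem i) _ (hmem j)
  choose qf hqf using hch
  refine ⟨∏ i, ∏ j, (qf i j).den, Finset.prod_pos fun i _ => Finset.prod_pos fun j _ =>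
    (qf i j).pos, ?_⟩
  set N := ∏ i, ∏ j, (qf i j).den with hN
  have hdvd : ∀ i j, (qf i j).den ∣ N := fun i j =>
    dvd_trans (Finset.dvd_prod_of_mem (fun j => (qf i j).den) (Finset.mem_univ j))
      (Finset.dvd_prod_of_mem (fun i => ∏ j, (qf i j).den) (Finset.mem_univ i))
  have key : ∀ l ∈ Submodule.span ℤ (Set.range (bR : _ → Vn n)),
      ∀ m ∈ Submodule.span ℤ (Set.range (bR : _ → Vn n)),
      ∃ k : ℤ, (N:ℝ) * B l m = (k:ℝ) := by
    intro l hl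
    induction hl using Submodule.span_induction with
    | mem l hl =>
      intro m hm
      induction hm using Submodule.span_induction with
      | mem m hm =>
        obtain ⟨i, rfl⟩ := hl
        obtain ⟨j, rfl⟩ := hm
        rw [hqf i j]
        exact mul_den _ _ (hdvd i j)
      | zero => exact ⟨0, by simp⟩
      | add y z _ _ hy hz =>
        obtain ⟨k1, h1⟩ := hy; obtain ⟨k2, h2⟩ := hz
        exact ⟨k1 + k2, by rw [map_add, mul_add, h1, h2]; push_cast; ring⟩
      | smul a y _ hy =>
        obtain ⟨k1, h1⟩ := hy
        refine ⟨a * k1, ?_⟩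
        rw [LinearMap.map_smul_of_tower, zsmul_eq_mul]
        push_cast
        rw [show (N:ℝ) * ((a:ℝ) * B l y) = (a:ℝ) * ((N:ℝ) * B l y) by ring, h1]
    | zero => intro m hm; exact ⟨0, by simp⟩
    | add x z _ _ hx hz =>
      intro m hm
      obtain ⟨k1, h1⟩ := hx m hm; obtain ⟨k2, h2⟩ := hz m hm
      exact ⟨k1 + k2, by rw [map_add, LinearMap.add_apply, mul_add, h1, h2]; push_cast; ring⟩
    | smul a x _ hx =>
      intro m hm
      obtain ⟨k1, h1⟩ := hx m hm
      refine ⟨a * k1, ?_⟩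
      rw [LinearMap.map_smul_of_tower, LinearMap.smul_apply, zsmul_eq_mul]
      push_cast
      rw [show (N:ℝ) * ((a:ℝ) * B x m) = (a:ℝ) * ((N:ℝ) * B x m) by ring, h1]
  intro l hl m hm
  refine key l ?_ m ?_
  · rw [hspanZ]; exact hl
  · rw [hspanZ]; exact hm
lemma core (Λ : AddSubgroup (Vn n)) (hΛ : IsLattice Λ)
    (G : Subgroup (Vn n ≃ₗ[ℂ] Vn n))
    (E : Vn n →ₗ[ℝ] Vn n →ₗ[ℝ] ℝ) (hNS : IsNSClass Λ E) (hEG : GInvariantForm G E)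
    (hpos : ∀ x : Vn n, x ≠ 0 → 0 < E ((Complex.I : ℂ) • x) x)
    (E₀ : Vn n →ₗ[ℝ] Vn n →ₗ[ℝ] ℝ)
    (hpic : ∀ E' : Vn n →ₗ[ℝ] Vn n →ₗ[ℝ] ℝ, IsNSClass Λ E' → GInvariantForm G E' →
        ∃ q : ℚ, E' = (q : ℝ) • E₀)
    (f : Vn n →ₗ[ℂ] Vn n)
    (hfG : ∀ g ∈ G, ∀ x : Vn n, f (g x) = g (f x))
    (hfΛ : ∀ l ∈ Λ, f l ∈ Lq Λ)
    (w₀ : Vn n) (hw₀ : w₀ ≠ 0) (hfw : f w₀ = 0)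
    (u₀ : Vn n) (hfu : f u₀ ≠ 0) : False := by
  set fR := LinearMap.restrictScalars ℝ f with hfR
  set B := LinearMap.compl₁₂ E fR fR with hB
  have hBapp : ∀ x y : Vn n, B x y = E (f x) (f y) := fun x y => rfl
  have hBq : ∀ l ∈ Λ, ∀ m ∈ Λ, ∃ q : ℚ, B l m = (q:ℝ) := by
    intro l hl m hm
    rw [hBapp]
    exact rat_vals Λ E hNS.2.2 _ (hfΛ l hl) _ (hfΛ m hm)
  obtain ⟨N, hNpos, hNint⟩ := clear_denoms Λ hΛ B hBq
  set E₂ := (N:ℝ) • B with hE₂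
  have hE₂app : ∀ x y : Vn n, E₂ x y = (N:ℝ) * E (f x) (f y) := by
    intro x y
    rw [hE₂]
    simp [hBapp, smul_eq_mul]
  have hfI : ∀ x : Vn n, f ((Complex.I : ℂ) • x) = (Complex.I : ℂ) • f x := fun x =>
    map_smul f _ x
  have hNS₂ : IsNSClass Λ E₂ := by
    refine ⟨fun x y => ?_, fun x y => ?_, fun l hl m hm => ?_⟩
    · rw [hE₂app, hE₂app, hNS.1 (f x) (f y)]; ring
    · rw [hE₂app, hE₂app, hfI, hfI, hNS.2.1]
    · obtain ⟨k, hk⟩ := hNint l hl m hm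
      exact ⟨k, by rw [hE₂app, ← hBapp, hk]⟩
  have hG₂ : GInvariantForm G E₂ := by
    intro g hg x y
    rw [hE₂app, hE₂app, hfG g hg x, hfG g hg y, hEG g hg]
  obtain ⟨q, hq⟩ := hpic E hNS hEG
  obtain ⟨q₂, hq₂⟩ := hpic E₂ hNS₂ hG₂
  set a := E₀ ((Complex.I : ℂ) • w₀) w₀ with ha
  have h1 : 0 < E ((Complex.I : ℂ) • w₀) w₀ := hpos _ hw₀
  have ha0 : a ≠ 0 := by
    intro h0
    rw [hq] at h1
    simp only [LinearMap.smul_apply, smul_eq_mul, ← ha] at h1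
    rw [h0] at h1
    simp at h1
  have h2 : E₂ ((Complex.I : ℂ) • w₀) w₀ = 0 := by
    rw [hE₂app, hfw]
    simp
  have hq₂0 : q₂ = 0 := by
    rw [hq₂] at h2
    simp only [LinearMap.smul_apply, smul_eq_mul, ← ha] at h2
    rcases mul_eq_zero.1 h2 with h | h
    · exact_mod_cast h
    · exact absurd h ha0
  have h3 : E₂ ((Complex.I : ℂ) • u₀) u₀ = 0 := by
    rw [hq₂, hq₂0]
    simp
  rw [hE₂app, hfI] at h3
  have h4 : 0 < E ((Complex.I : ℂ) • f u₀) (f u₀) := hpos _ hfu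
  have : (0:ℝ) < (N:ℝ) * E ((Complex.I : ℂ) • f u₀) (f u₀) :=
    mul_pos (by exact_mod_cast hNpos) h4
  rw [h3] at this
  exact lt_irrefl 0 this


lemma mulApply (a b : Vn n ≃ₗ[ℂ] Vn n) (x : Vn n) : (a * b) x = a (b x) := rfl

lemma invApply (a : Vn n ≃ₗ[ℂ] Vn n) (x : Vn n) : a⁻¹ (a x) = x :=
  a.symm_apply_apply x

section avg

variable (G : Subgroup (Vn n ≃ₗ[ℂ] Vn n)) [Fintype G]

/-- The averaging operator of `G`. -/
def avg : Vn n →ₗ[ℂ] Vn n :=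
  (Fintype.card G : ℂ)⁻¹ • ∑ g : G, ((g : Vn n ≃ₗ[ℂ] Vn n) : Vn n →ₗ[ℂ] Vn n)

lemma avg_apply (x : Vn n) :
    avg G x = (Fintype.card G : ℂ)⁻¹ • ∑ g : G, (g : Vn n ≃ₗ[ℂ] Vn n) x := by
  simp [avg, LinearMap.sum_apply]

lemma avg_fix (h : G) (x : Vn n) :
    (h : Vn n ≃ₗ[ℂ] Vn n) (avg G x) = avg G x := by
  rw [avg_apply, map_smul, map_sum]
  congr 1
  have := Equiv.sum_comp (Equiv.mulLeft h) (fun g : G => (g : Vn n ≃ₗ[ℂ] Vn n) x)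
  rw [← this]
  apply Finset.sum_congr rfl
  intro g _
  show ((h : Vn n ≃ₗ[ℂ] Vn n)) ((g : Vn n ≃ₗ[ℂ] Vn n) x)
      = (((h * g : G) : Vn n ≃ₗ[ℂ] Vn n)) x
  rfl

lemma avg_inv (h : G) (x : Vn n) :
    avg G ((h : Vn n ≃ₗ[ℂ] Vn n) x) = avg G x := by
  rw [avg_apply, avg_apply]
  congr 1
  have := Equiv.sum_comp (Equiv.mulRight h) (fun g : G => (g : Vn n ≃ₗ[ℂ] Vn n) x)
  rw [← this]
  apply Finset.sum_congr rfl
  intro g _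
  rfl

lemma avg_of_fixed (x : Vn n) (hx : ∀ g : G, (g : Vn n ≃ₗ[ℂ] Vn n) x = x) :
    avg G x = x := by
  rw [avg_apply]
  have : ∑ g : G, (g : Vn n ≃ₗ[ℂ] Vn n) x = (Fintype.card G : ℂ) • x := by
    rw [Finset.sum_congr rfl fun g _ => hx g, Finset.sum_const, Finset.card_univ,
      Nat.cast_smul_eq_nsmul]
  rw [this, smul_smul, inv_mul_cancel₀, one_smul]
  exact_mod_cast Fintype.card_ne_zero

end avg

lemma proj_exists (G : Subgroup (Vn n ≃ₗ[ℂ] Vn n)) [Fintype G] (W : Submodule ℂ (Vn n))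
    (hWmem : ∀ g ∈ G, ∀ w ∈ W, (g : Vn n ≃ₗ[ℂ] Vn n) w ∈ W) :
    ∃ p : Vn n →ₗ[ℂ] Vn n, (∀ x, p x ∈ W) ∧ (∀ w ∈ W, p w = w) ∧
      (∀ g ∈ G, ∀ x : Vn n, p ((g : Vn n ≃ₗ[ℂ] Vn n) x)
        = (g : Vn n ≃ₗ[ℂ] Vn n) (p x)) := by
  obtain ⟨U₀, hU₀⟩ := Submodule.exists_isCompl W
  set pr : Vn n →ₗ[ℂ] Vn n := W.subtype.comp (W.projectionOnto U₀ hU₀) with hpr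
  have hprW : ∀ x : Vn n, pr x ∈ W := fun x => (W.projectionOnto U₀ hU₀ x).2
  have hprid : ∀ w ∈ W, pr w = w := by
    intro w hw
    have := Submodule.linearProjOfIsCompl_apply_left hU₀ ⟨w, hw⟩
    simp only [hpr, LinearMap.comp_apply, Submodule.coe_subtype]
    exact congrArg Subtype.val this
  set T : G → (Vn n →ₗ[ℂ] Vn n) := fun g =>
    (((g⁻¹ : G) : Vn n ≃ₗ[ℂ] Vn n) : Vn n →ₗ[ℂ] Vn n) ∘ₗ pr ∘ₗ
      (((g : G) : Vn n ≃ₗ[ℂ] Vn n) : Vn n →ₗ[ℂ] Vn n) with hT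
  set p : Vn n →ₗ[ℂ] Vn n := (Fintype.card G : ℂ)⁻¹ • ∑ g : G, T g with hp
  have hpapp : ∀ x : Vn n, p x = (Fintype.card G : ℂ)⁻¹ •
      ∑ g : G, ((g⁻¹ : G) : Vn n ≃ₗ[ℂ] Vn n) (pr ((g : Vn n ≃ₗ[ℂ] Vn n) x)) := by
    intro x
    simp [hp, hT, LinearMap.sum_apply]
  refine ⟨p, ?_, ?_, ?_⟩
  · intro x
    rw [hpapp]
    refine Submodule.smul_mem _ _ (Submodule.sum_mem _ fun g _ => ?_)
    exact hWmem _ (SetLike.coe_mem (g⁻¹ : G)) _ (hprW _)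
  · intro w hw
    rw [hpapp]
    have hterm : ∀ g : G,
        ((g⁻¹ : G) : Vn n ≃ₗ[ℂ] Vn n) (pr ((g : Vn n ≃ₗ[ℂ] Vn n) w)) = w := by
      intro g
      rw [hprid _ (hWmem _ (SetLike.coe_mem g) _ hw)]
      show (((g⁻¹ : G) : Vn n ≃ₗ[ℂ] Vn n)) (((g : G) : Vn n ≃ₗ[ℂ] Vn n) w) = w
      have : ((g⁻¹ : G) : Vn n ≃ₗ[ℂ] Vn n) = ((g : G) : Vn n ≃ₗ[ℂ] Vn n)⁻¹ := rfl
      rw [this, invApply]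
    rw [Finset.sum_congr rfl fun g _ => hterm g, Finset.sum_const, Finset.card_univ,
      ← Nat.cast_smul_eq_nsmul ℂ, smul_smul, inv_mul_cancel₀, one_smul]
    exact_mod_cast Fintype.card_ne_zero
  · intro g hg x
    set h : G := ⟨g, hg⟩ with hh
    have hgx : (g : Vn n ≃ₗ[ℂ] Vn n) = ((h : G) : Vn n ≃ₗ[ℂ] Vn n) := rfl
    rw [hgx, hpapp, hpapp, map_smul, map_sum]
    congr 1
    have := Equiv.sum_comp (Equiv.mulRight h⁻¹)
      (fun k : G => ((k⁻¹ : G) : Vn n ≃ₗ[ℂ] Vn n)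
        (pr ((k : Vn n ≃ₗ[ℂ] Vn n) (((h : G) : Vn n ≃ₗ[ℂ] Vn n) x))))
    rw [← this]
    apply Finset.sum_congr rfl
    intro k _
    simp only [Equiv.coe_mulRight]
    have e1 : ((k * h⁻¹ : G) : Vn n ≃ₗ[ℂ] Vn n) (((h : G) : Vn n ≃ₗ[ℂ] Vn n) x)
        = ((k : G) : Vn n ≃ₗ[ℂ] Vn n) x := by
      show (((k * h⁻¹) * h : G) : Vn n ≃ₗ[ℂ] Vn n) x = ((k : G) : Vn n ≃ₗ[ℂ] Vn n) x
      rw [inv_mul_cancel_right]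
    have e2 : ((k * h⁻¹ : G)⁻¹ : G) = h * k⁻¹ := by group
    rw [e1, e2]
    rfl

end AuxIrr

theorem analytic_representation_irreducible {n : ℕ} (hn : 1 ≤ n)
    (Λ : AddSubgroup (Vn n)) (hΛ : IsLattice Λ)
    (G : Subgroup (Vn n ≃ₗ[ℂ] Vn n)) (hGfin : Finite G) (hGnontriv : G ≠ ⊥)
    (hGΛ : ∀ g ∈ G, ∀ v ∈ Λ, g v ∈ Λ)
    (hpol : ∃ E : Vn n →ₗ[ℝ] Vn n →ₗ[ℝ] ℝ, IsNSClass Λ E ∧ GInvariantForm G E ∧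
      ∀ x : Vn n, x ≠ 0 → 0 < E ((Complex.I : ℂ) • x) x)
    (hsmooth : SmoothQuotient Λ (G : Set (Vn n ≃ₗ[ℂ] Vn n)))
    (hpic : ∃ E₀ : Vn n →ₗ[ℝ] Vn n →ₗ[ℝ] ℝ, IsNSClass Λ E₀ ∧ GInvariantForm G E₀ ∧ E₀ ≠ 0 ∧
      ∀ E : Vn n →ₗ[ℝ] Vn n →ₗ[ℝ] ℝ, IsNSClass Λ E → GInvariantForm G E →
        ∃ q : ℚ, E = (q : ℝ) • E₀) :
    ∀ W : Submodule ℂ (Vn n),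
      (∀ g ∈ G, W.map (g : Vn n →ₗ[ℂ] Vn n) ≤ W) →
      W = ⊥ ∨ W = ⊤ := by
  classical
  intro W hW
  by_contra hcon
  push_neg at hcon
  obtain ⟨hWbot, hWtop⟩ := hcon
  obtain ⟨E, hNS, hEG, hpos⟩ := hpol
  obtain ⟨E₀, hNS₀, hG₀, hE₀ne, hpic'⟩ := hpic
  haveI := hGfin
  haveI : Fintype G := Fintype.ofFinite G
  have hcard : (Fintype.card G : ℂ) ≠ 0 := by exact_mod_cast Fintype.card_ne_zero
  set π := AuxIrr.avg G with hπ
  have hπΛ : ∀ l ∈ Λ, π l ∈ AuxIrr.Lq Λ := by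
    intro l hl
    rw [hπ, AuxIrr.avg_apply]
    have hsum : (∑ g : G, (g : Vn n ≃ₗ[ℂ] Vn n) l) ∈ Λ :=
      AddSubgroup.sum_mem Λ fun g _ => hGΛ g (SetLike.coe_mem g) l hl
    have heq : ((Fintype.card G : ℚ)⁻¹) • (∑ g : G, (g : Vn n ≃ₗ[ℂ] Vn n) l)
        = (Fintype.card G : ℂ)⁻¹ • ∑ g : G, (g : Vn n ≃ₗ[ℂ] Vn n) l := by
      rw [AuxIrr.qsmulC, Rat.cast_inv, Rat.cast_natCast]
    rw [← heq]
    exact Submodule.smul_mem _ _ (AuxIrr.mem_Lq hsum)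
  -- Stage 1 : the average operator vanishes (no nonzero fixed vectors)
  have hπ0 : ∀ x : Vn n, π x = 0 := by
    by_contra hcon0
    push_neg at hcon0
    obtain ⟨x₀, hx₀⟩ := hcon0
    have hfix : ∀ g : G, (g : Vn n ≃ₗ[ℂ] Vn n) (π x₀) = π x₀ := fun g =>
      AuxIrr.avg_fix G g x₀
    have hππ : π (π x₀) = π x₀ := AuxIrr.avg_of_fixed G (π x₀) hfix
    have hu : ∃ u : Vn n, π u ≠ u := by
      by_contra hcu
      push_neg at hcu
      obtain ⟨g₀, hg₀⟩ := Subgroup.ne_bot_iff_exists_ne_one.1 hGnontriv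
      apply hg₀
      apply Subtype.ext
      apply LinearEquiv.toLinearMap_injective
      apply LinearMap.ext
      intro x
      have h1 : (g₀ : Vn n ≃ₗ[ℂ] Vn n) (π x) = π x := AuxIrr.avg_fix G g₀ x
      rw [hcu x] at h1
      simpa using h1
    obtain ⟨u₀, hu₀⟩ := hu
    refine AuxIrr.core Λ hΛ G E hNS hEG hpos E₀ hpic' (LinearMap.id - π) ?_ ?_
      (π x₀) hx₀ ?_ u₀ ?_
    · intro g hg x
      have h1 : π (g x) = π x := AuxIrr.avg_inv G ⟨g, hg⟩ x
      have h2 : g (π x) = π x := AuxIrr.avg_fix G ⟨g, hg⟩ x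
      simp only [LinearMap.sub_apply, LinearMap.id_apply]
      rw [h1, map_sub, h2]
    · intro l hl
      exact Submodule.sub_mem _ (AuxIrr.mem_Lq hl) (hπΛ l hl)
    · simp only [LinearMap.sub_apply, LinearMap.id_apply]
      rw [hππ, sub_self]
    · intro h0
      simp only [LinearMap.sub_apply, LinearMap.id_apply] at h0
      rw [sub_eq_zero] at h0
      exact hu₀ h0.symm
  -- Equivariant projection onto W
  have hWmem : ∀ g ∈ G, ∀ w ∈ W, (g : Vn n ≃ₗ[ℂ] Vn n) w ∈ W := by
    intro g hg w hw
    exact hW g hg ⟨w, hw, rfl⟩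
  obtain ⟨p, hpW, hpid, hpG⟩ := AuxIrr.proj_exists G W hWmem
  have hpp : ∀ x : Vn n, p (p x) = p x := fun x => hpid _ (hpW x)
  -- For every pseudoreflection in G, p ((1-g) l) is rational
  have hdich : ∀ g ∈ G, IsPseudoreflection g → ∀ l ∈ Λ,
      p (l - (g : Vn n ≃ₗ[ℂ] Vn n) l) ∈ AuxIrr.Lq Λ := by
    intro g hg hrefl
    by_cases hA : ∀ x : Vn n, p x = 0 → (g : Vn n ≃ₗ[ℂ] Vn n) x = x
    · intro l hl
      have hWfull : ∀ x : Vn n, x - (g : Vn n ≃ₗ[ℂ] Vn n) x ∈ W := by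
        intro x
        have h1 : p (x - p x) = 0 := by rw [map_sub, hpp, sub_self]
        have h2 : (g : Vn n ≃ₗ[ℂ] Vn n) (x - p x) = x - p x := hA _ h1
        have h3 : x - (g : Vn n ≃ₗ[ℂ] Vn n) x
            = p x - (g : Vn n ≃ₗ[ℂ] Vn n) (p x) := by
          have hgx : (g : Vn n ≃ₗ[ℂ] Vn n) x
              = (g : Vn n ≃ₗ[ℂ] Vn n) (p x) + (x - p x) := by
            rw [← h2, ← map_add]
            congr 1
            abel
          rw [hgx]
          abel
        rw [h3]
        exact Submodule.sub_mem _ (hpW x) (hWmem g hg _ (hpW x))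
      have hin : l - (g : Vn n ≃ₗ[ℂ] Vn n) l ∈ Λ := Λ.sub_mem hl (hGΛ g hg l hl)
      rw [hpid _ (hWfull l)]
      exact AuxIrr.mem_Lq hin
    · push_neg at hA
      obtain ⟨u, hpu, hgu⟩ := hA
      have hWfix : ∀ w ∈ W, (g : Vn n ≃ₗ[ℂ] Vn n) w = w := by
        by_contra hB
        push_neg at hB
        obtain ⟨w, hw, hgw⟩ := hB
        have hx₁ : u - (g : Vn n ≃ₗ[ℂ] Vn n) u ≠ 0 := sub_ne_zero.2 (Ne.symm hgu)
        have hx₁K : u - (g : Vn n ≃ₗ[ℂ] Vn n) u ∈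
            LinearMap.range ((1 : Vn n →ₗ[ℂ] Vn n) - (g : Vn n →ₗ[ℂ] Vn n)) :=
          ⟨u, by simp [LinearMap.sub_apply]⟩
        have hx₂K : w - (g : Vn n ≃ₗ[ℂ] Vn n) w ∈
            LinearMap.range ((1 : Vn n →ₗ[ℂ] Vn n) - (g : Vn n →ₗ[ℂ] Vn n)) :=
          ⟨w, by simp [LinearMap.sub_apply]⟩
        have hspan : Submodule.span ℂ {u - (g : Vn n ≃ₗ[ℂ] Vn n) u} =
            LinearMap.range ((1 : Vn n →ₗ[ℂ] Vn n) - (g : Vn n →ₗ[ℂ] Vn n)) := by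
          apply Submodule.eq_of_le_of_finrank_le
          · rwa [Submodule.span_singleton_le_iff_mem]
          · rw [hrefl, finrank_span_singleton hx₁]
        have hx₂span : w - (g : Vn n ≃ₗ[ℂ] Vn n) w ∈
            Submodule.span ℂ {u - (g : Vn n ≃ₗ[ℂ] Vn n) u} := by
          rw [hspan]; exact hx₂K
        obtain ⟨c, hc⟩ := Submodule.mem_span_singleton.1 hx₂span
        have hpx₁ : p (u - (g : Vn n ≃ₗ[ℂ] Vn n) u) = 0 := by
          rw [map_sub, hpu, hpG g hg u, hpu, map_zero, zero_sub, neg_zero]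
        have hpx₂ : p (w - (g : Vn n ≃ₗ[ℂ] Vn n) w) = 0 := by
          rw [← hc, map_smul, hpx₁, smul_zero]
        have hzero : w - (g : Vn n ≃ₗ[ℂ] Vn n) w = 0 := by
          rw [← hpid _ (Submodule.sub_mem _ hw (hWmem g hg _ hw)), hpx₂]
        rw [sub_eq_zero] at hzero
        exact hgw hzero.symm
      intro l hl
      have h0 : p (l - (g : Vn n ≃ₗ[ℂ] Vn n) l) = 0 := by
        rw [map_sub, hpG g hg l, hWfix _ (hpW l), sub_self]
      rw [h0]
      exact Submodule.zero_mem _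
  -- The span of the reflection directions
  set D : (Vn n ≃ₗ[ℂ] Vn n) → Submodule ℝ (Vn n) := fun g =>
    LinearMap.range (LinearMap.restrictScalars ℝ
      ((1 : Vn n →ₗ[ℂ] Vn n) - (g : Vn n →ₗ[ℂ] Vn n))) with hD
  set RS : Set (Vn n ≃ₗ[ℂ] Vn n) := {g | g ∈ G ∧ IsPseudoreflection g} with hRS
  set M : Submodule ℝ (Vn n) := ⨆ g ∈ RS, D g with hM
  have hDapp : ∀ (g : Vn n ≃ₗ[ℂ] Vn n) (x : Vn n), x - g x ∈ D g := by
    intro g x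
    exact ⟨x, by simp [LinearMap.sub_apply]⟩
  have hDM : ∀ g ∈ RS, D g ≤ M := fun g hg => le_iSup₂ (f := fun g _ => D g) g hg
  have hMG : ∀ h ∈ G, ∀ y ∈ M, (h : Vn n ≃ₗ[ℂ] Vn n) y ∈ M := by
    intro h hh y hy
    have hmap : Submodule.map (LinearMap.restrictScalars ℝ (h : Vn n →ₗ[ℂ] Vn n)) M ≤ M := by
      rw [hM, Submodule.map_iSup]
      refine iSup_le fun g => ?_
      rw [Submodule.map_iSup]
      refine iSup_le fun hg => ?_
      have hcomp : (LinearMap.restrictScalars ℝ (h : Vn n →ₗ[ℂ] Vn n)).comp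
          (LinearMap.restrictScalars ℝ ((1 : Vn n →ₗ[ℂ] Vn n) - (g : Vn n →ₗ[ℂ] Vn n)))
          = (LinearMap.restrictScalars ℝ ((1 : Vn n →ₗ[ℂ] Vn n) -
              ((h * g * h⁻¹ : Vn n ≃ₗ[ℂ] Vn n) : Vn n →ₗ[ℂ] Vn n))).comp
            (LinearMap.restrictScalars ℝ (h : Vn n →ₗ[ℂ] Vn n)) := by
        apply LinearMap.ext
        intro x
        simp only [LinearMap.coe_comp, Function.comp_apply, LinearMap.coe_restrictScalars,
          LinearMap.sub_apply, Module.End.one_apply, LinearEquiv.coe_coe]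
        rw [map_sub]
        rw [show (h * g * h⁻¹ : Vn n ≃ₗ[ℂ] Vn n) (h x) = h (g (h⁻¹ (h x))) from rfl]
        rw [AuxIrr.invApply]
      have hkey : Submodule.map (LinearMap.restrictScalars ℝ (h : Vn n →ₗ[ℂ] Vn n)) (D g)
          = D (h * g * h⁻¹) := by
        have hrtop : LinearMap.range (LinearMap.restrictScalars ℝ
            ((h : Vn n ≃ₗ[ℂ] Vn n) : Vn n →ₗ[ℂ] Vn n)) = ⊤ :=
          LinearMap.range_eq_top.2 h.surjective
        rw [hD, ← LinearMap.range_comp, hcomp, LinearMap.range_comp, hrtop,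
          Submodule.map_top]
      rw [hkey]
      refine hDM _ ⟨mul_mem (mul_mem hh hg.1) (inv_mem hh), ?_⟩
      -- conjugate of a pseudoreflection is a pseudoreflection
      have hconj : ((1 : Vn n →ₗ[ℂ] Vn n) -
          ((h * g * h⁻¹ : Vn n ≃ₗ[ℂ] Vn n) : Vn n →ₗ[ℂ] Vn n))
          = ((h : Vn n →ₗ[ℂ] Vn n).comp
              ((1 : Vn n →ₗ[ℂ] Vn n) - (g : Vn n →ₗ[ℂ] Vn n))).comp
            ((h⁻¹ : Vn n ≃ₗ[ℂ] Vn n) : Vn n →ₗ[ℂ] Vn n) := by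
        apply LinearMap.ext
        intro x
        simp only [LinearMap.coe_comp, Function.comp_apply, LinearMap.sub_apply,
          Module.End.one_apply, LinearEquiv.coe_coe]
        rw [map_sub]
        rw [show (h * g * h⁻¹ : Vn n ≃ₗ[ℂ] Vn n) x = h (g (h⁻¹ x)) from rfl]
        rw [show h (h⁻¹ x) = x from h.apply_symm_apply x]
      show Module.finrank ℂ _ = 1
      have hsurj : LinearMap.range (((h⁻¹ : Vn n ≃ₗ[ℂ] Vn n)) : Vn n →ₗ[ℂ] Vn n) = ⊤ :=
        LinearMap.range_eq_top.2 (h⁻¹ : Vn n ≃ₗ[ℂ] Vn n).surjective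
      rw [hconj, LinearMap.range_comp, hsurj, Submodule.map_top, LinearMap.range_comp,
        LinearEquiv.finrank_map_eq h]
      exact hg.2
    exact hmap ⟨y, hy, rfl⟩
  -- every element of G moves points within M
  have hle : Subgroup.closure RS ≤ G := (Subgroup.closure_le G).2 fun g hg => hg.1
  have hMclos : ∀ k, k ∈ Subgroup.closure RS → ∀ x : Vn n, x - k x ∈ M := by
    intro k hk
    induction hk using Subgroup.closure_induction with
    | mem g hg => exact fun x => hDM g hg (hDapp g x)
    | one =>
      intro x
      have : x - (1 : Vn n ≃ₗ[ℂ] Vn n) x = 0 := by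
        rw [show (1 : Vn n ≃ₗ[ℂ] Vn n) x = x from rfl, sub_self]
      rw [this]
      exact Submodule.zero_mem _
    | mul g h' hg hh' pg ph' =>
      intro x
      have hsplit : x - (g * h') x = (x - g x) + g (x - h' x) := by
        rw [AuxIrr.mulApply, map_sub]
        abel
      rw [hsplit]
      exact Submodule.add_mem _ (pg x) (hMG g (hle hg) _ (ph' x))
    | inv g hg pg =>
      intro x
      have hsplit : x - g⁻¹ x = -((g⁻¹ x) - g (g⁻¹ x)) := by
        rw [show g (g⁻¹ x) = x from g.apply_symm_apply x]
        abel
      rw [hsplit]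
      exact Submodule.neg_mem _ (pg (g⁻¹ x))
  have hGM : ∀ g ∈ G, ∀ x : Vn n, x - g x ∈ M := by
    intro g hg x
    have hfix0 : FixesPt Λ g (0 : Vn n ⧸ Λ) := by
      refine ⟨0, by simp, ?_⟩
      rw [map_zero, sub_zero]
      exact Λ.zero_mem
    have hcl := hsmooth 0 g hg hfix0
    have hsubset : {h : Vn n ≃ₗ[ℂ] Vn n | h ∈ (G : Set (Vn n ≃ₗ[ℂ] Vn n)) ∧
        FixesPt Λ h 0 ∧ IsPseudoreflection h} ⊆ RS := fun h hh => ⟨hh.1, hh.2.2⟩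
    exact hMclos g (Subgroup.closure_mono hsubset hcl) x
  -- M is everything
  have hMtop : ∀ x : Vn n, x ∈ M := by
    intro x
    have hsum0 : ∑ g : G, (g : Vn n ≃ₗ[ℂ] Vn n) x = 0 := by
      have h0 := hπ0 x
      rw [hπ, AuxIrr.avg_apply] at h0
      rcases smul_eq_zero.1 h0 with h | h
      · exact absurd h (inv_ne_zero hcard)
      · exact h
    have hsum : ∑ g : G, (x - (g : Vn n ≃ₗ[ℂ] Vn n) x) = (Fintype.card G : ℝ) • x := by
      rw [Finset.sum_sub_distrib, hsum0, sub_zero, Finset.sum_const, Finset.card_univ,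
        ← Nat.cast_smul_eq_nsmul ℝ]
    have hmem : (Fintype.card G : ℝ) • x ∈ M := by
      rw [← hsum]
      exact Submodule.sum_mem _ fun g _ => hGM g (SetLike.coe_mem g) x
    have hx : x = (Fintype.card G : ℝ)⁻¹ • ((Fintype.card G : ℝ) • x) := by
      rw [smul_smul, inv_mul_cancel₀, one_smul]
      exact_mod_cast Fintype.card_ne_zero
    rw [hx]
    exact Submodule.smul_mem _ _ hmem
  -- rationality of p on the lattice
  set S : Submodule ℚ (Vn n) := AuxIrr.Lq Λ ⊓
    Submodule.comap (LinearMap.restrictScalars ℚ p) (AuxIrr.Lq Λ) with hSdef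
  have hSle : S ≤ AuxIrr.Lq Λ := inf_le_left
  have hMS : M ≤ Submodule.span ℝ (S : Set (Vn n)) := by
    rw [hM]
    refine iSup_le fun g => iSup_le fun hg => ?_
    have hDspan : D g = Submodule.map (LinearMap.restrictScalars ℝ
        ((1 : Vn n →ₗ[ℂ] Vn n) - (g : Vn n →ₗ[ℂ] Vn n)))
        (Submodule.span ℝ (Λ : Set (Vn n))) := by
      rw [hD, hΛ.2, Submodule.map_top]
    rw [hDspan, Submodule.map_span]
    refine Submodule.span_le.2 ?_
    rintro y ⟨l, hl, rfl⟩
    apply Submodule.subset_span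
    show (LinearMap.restrictScalars ℝ ((1 : Vn n →ₗ[ℂ] Vn n) - (g : Vn n →ₗ[ℂ] Vn n))) l ∈ S
    have hel : l - (g : Vn n ≃ₗ[ℂ] Vn n) l ∈ S :=
      ⟨AuxIrr.mem_Lq (Λ.sub_mem hl (hGΛ g hg.1 l hl)), hdich g hg.1 hg.2 l hl⟩
    exact hel
  have hStop : Submodule.span ℝ (S : Set (Vn n)) = ⊤ :=
    top_unique fun x _ => hMS (hMtop x)
  have hSeq : S = AuxIrr.Lq Λ := AuxIrr.sub_eq_Lq Λ hΛ S hSle hStop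
  have hpΛ : ∀ l ∈ Λ, p l ∈ AuxIrr.Lq Λ := by
    intro l hl
    have hlS : l ∈ S := by rw [hSeq]; exact AuxIrr.mem_Lq hl
    exact hlS.2
  -- conclude with the Picard number 1 contradiction
  obtain ⟨w₀, hw₀W, hw₀ne⟩ := (Submodule.ne_bot_iff W).1 hWbot
  have hxout : ∃ x : Vn n, x ∉ W := by
    by_contra hc
    push_neg at hc
    exact hWtop (Submodule.eq_top_iff'.2 hc)
  obtain ⟨u₀, hu₀⟩ := hxout
  refine AuxIrr.core Λ hΛ G E hNS hEG hpos E₀ hpic' (LinearMap.id - p) ?_ ?_ w₀ hw₀ne ?_ u₀ ?_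
  · intro g hg x
    simp only [LinearMap.sub_apply, LinearMap.id_apply]
    rw [hpG g hg x, map_sub]
  · intro l hl
    exact Submodule.sub_mem _ (AuxIrr.mem_Lq hl) (hpΛ l hl)
  · simp only [LinearMap.sub_apply, LinearMap.id_apply]
    rw [hpid w₀ hw₀W, sub_self]
  · intro h0
    simp only [LinearMap.sub_apply, LinearMap.id_apply] at h0
    rw [sub_eq_zero] at h0
    exact hu₀ (h0 ▸ hpW u₀)
end
end

section
/- Let G act on an abelian variety A by automorphisms fixing the origin, let A_0 be the connected component of A^G containing 0, and let P be the complementary abelian subvariety of A_0 with respect to a G-invariant polarization. Then A/G is smooth if and only if P/G is smooth; moreover A/G fibers over the abelian variety A_0/(A_0 ∩ P) with all fibers isomorphic to P/G. -/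
noncomputable section

/-- The Chevalley–Shephard–Todd smoothness condition at the point `x`: the stabilizer of
`x` in `G` is generated by the pseudoreflections it contains. -/
def CSTAt {n : ℕ} (Λ : AddSubgroup (Vn n)) (G : Set (Vn n ≃ₗ[ℂ] Vn n))
    (x : Vn n ⧸ Λ) : Prop :=
  ∀ g ∈ G, FixesPt Λ g x →
    g ∈ Subgroup.closure {h : Vn n ≃ₗ[ℂ] Vn n | h ∈ G ∧ FixesPt Λ h x ∧ IsPseudoreflection h}

section AuxHelpers

lemma aux_isCompact_mk_image_span {n : ℕ} (Λ : AddSubgroup (Vn n)) (S : Set (Vn n))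
    (hS : S ⊆ (Λ : Set (Vn n))) :
    IsCompact ((QuotientAddGroup.mk' Λ) ''
      ((Submodule.span ℝ S : Submodule ℝ (Vn n)) : Set (Vn n))) := by
  obtain ⟨b, hbS, hbspan, hbli⟩ := exists_linearIndependent ℝ S
  have hbfin : b.Finite := hbli.setFinite
  haveI : Fintype b := hbfin.fintype
  set f : (b → ℝ) → Vn n := fun c => ∑ i : b, c i • (i : Vn n) with hf
  have hcont : Continuous f := by
    apply continuous_finset_sum
    exact fun i _ => (continuous_apply i).smul continuous_const
  have hmkc : Continuous (QuotientAddGroup.mk' Λ) := continuous_quotient_mk'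
  have hKc : IsCompact ((QuotientAddGroup.mk' Λ) '' (f '' Set.Icc 0 1)) := by
    have : IsCompact (Set.Icc (0 : b → ℝ) 1) := isCompact_Icc
    exact (this.image hcont).image hmkc
  have hsub : f '' Set.Icc 0 1 ⊆ (Submodule.span ℝ S : Submodule ℝ (Vn n)) := by
    rintro - ⟨c, -, rfl⟩
    exact Submodule.sum_mem _ fun i _ =>
      Submodule.smul_mem _ _ (hbspan ▸ Submodule.subset_span i.2)
  have himg : (QuotientAddGroup.mk' Λ) '' ((Submodule.span ℝ S : Submodule ℝ (Vn n)) : Set (Vn n))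
      = (QuotientAddGroup.mk' Λ) '' (f '' Set.Icc 0 1) := by
    apply Set.Subset.antisymm
    · rintro - ⟨x, hx, rfl⟩
      have hx' : x ∈ Submodule.span ℝ (Set.range ((↑) : b → Vn n)) := by
        rw [Subtype.range_coe, hbspan]; exact hx
      obtain ⟨c, hc⟩ := (Finsupp.mem_span_range_iff_exists_finsupp).1 hx'
      have hc' : ∑ i : b, (c i) • (i : Vn n) = x := by
        rw [← hc]; rw [Finsupp.sum_fintype]; simp
      set d : b → ℝ := fun i => Int.fract (c i) with hd
      have hdmem : d ∈ Set.Icc (0 : b → ℝ) 1 := by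
        constructor <;> intro i
        · exact Int.fract_nonneg _
        · exact (Int.fract_lt_one _).le
      refine ⟨f d, ⟨d, hdmem, rfl⟩, ?_⟩
      apply (QuotientAddGroup.eq_iff_sub_mem).2
      have heq : f d - x = ∑ i : b, (-⌊c i⌋ : ℤ) • (i : Vn n) := by
        rw [← hc', ← Finset.sum_sub_distrib]
        refine Finset.sum_congr rfl fun i _ => ?_
        rw [← sub_smul, show d i - c i = (((-⌊c i⌋ : ℤ) : ℝ)) by
          simp only [hd, Int.fract]; push_cast; ring]
        exact Int.cast_smul_eq_zsmul ℝ _ _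
      rw [heq]
      exact AddSubgroup.sum_mem _ fun i _ => AddSubgroup.zsmul_mem _ (hS (hbS i.2)) _
    · rintro - ⟨y, hy, rfl⟩
      exact ⟨y, hsub hy, rfl⟩
  rw [himg]; exact hKc

lemma aux_eqvGen_le {α : Type*} {ι : Type*} (F : ι → α → α)
    (hid : ∃ i, ∀ x, F i x = x) (hcomp : ∀ i j, ∃ k, ∀ x, F k x = F i (F j x))
    (hinv : ∀ i, ∃ j, ∀ x, F j (F i x) = x)
    (r : α → α → Prop) (hr : ∀ x y, r x y ↔ ∃ i, F i x = y) :
    ∀ {a b}, Relation.EqvGen r a b → r a b := by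
  have href : ∀ x, r x x := fun x => (hr x x).2 (hid.imp fun i h => h x)
  have hsymm : ∀ {x y}, r x y → r y x := by
    intro x y h
    obtain ⟨i, hi⟩ := (hr x y).1 h
    obtain ⟨j, hj⟩ := hinv i
    exact (hr y x).2 ⟨j, by rw [← hi, hj]⟩
  have htrans : ∀ {x y z}, r x y → r y z → r x z := by
    intro x y z h1 h2
    obtain ⟨i, hi⟩ := (hr x y).1 h1
    obtain ⟨j, hj⟩ := (hr y z).1 h2
    obtain ⟨k, hk⟩ := hcomp j i
    exact (hr x z).2 ⟨k, by rw [hk, hi, hj]⟩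
  intro a b h
  induction h with
  | rel _ _ h => exact h
  | refl a => exact href a
  | symm _ _ _ ih => exact hsymm ih
  | trans _ _ _ _ _ ih1 ih2 => exact htrans ih1 ih2

lemma aux_t2_quot {α : Type*} [TopologicalSpace α] [CompactSpace α] [T2Space α]
    {ι : Type*} [Finite ι] (F : ι → α → α) (hFc : ∀ i, Continuous (F i))
    (hid : ∃ i, ∀ x, F i x = x) (hcomp : ∀ i j, ∃ k, ∀ x, F k x = F i (F j x))
    (hinv : ∀ i, ∃ j, ∀ x, F j (F i x) = x)
    (r : α → α → Prop) (hr : ∀ x y, r x y ↔ ∃ i, F i x = y) :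
    T2Space (Quot r) := by
  have href : ∀ x, r x x := fun x => (hr x x).2 (hid.imp fun i h => h x)
  have hsymm : ∀ {x y}, r x y → r y x := by
    intro x y h
    obtain ⟨i, hi⟩ := (hr x y).1 h
    obtain ⟨j, hj⟩ := hinv i
    exact (hr y x).2 ⟨j, by rw [← hi, hj]⟩
  have htrans : ∀ {x y z}, r x y → r y z → r x z := by
    intro x y z h1 h2
    obtain ⟨i, hi⟩ := (hr x y).1 h1
    obtain ⟨j, hj⟩ := (hr y z).1 h2
    obtain ⟨k, hk⟩ := hcomp j i
    exact (hr x z).2 ⟨k, by rw [hk, hi, hj]⟩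
  have hEq : ∀ {a b}, Relation.EqvGen r a b → r a b :=
    aux_eqvGen_le F hid hcomp hinv r hr
  refine ⟨fun {a b} hne => ?_⟩
  induction a using Quot.ind with | _ x => ?_
  induction b using Quot.ind with | _ y => ?_
  have hOx : (Set.range fun i => F i x).Finite := Set.finite_range _
  have hOy : (Set.range fun i => F i y).Finite := Set.finite_range _
  have hdisj : Disjoint (Set.range fun i => F i x) (Set.range fun i => F i y) := by
    rw [Set.disjoint_left]
    rintro - ⟨i, rfl⟩ ⟨j, hj⟩
    refine hne ?_
    exact Quot.sound (htrans ((hr x _).2 ⟨i, rfl⟩) (hsymm ((hr y _).2 ⟨j, hj⟩)))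
  obtain ⟨U, V, hUo, hVo, hOxU, hOyV, hUV⟩ :=
    normal_separation hOx.isClosed hOy.isClosed hdisj
  set U' : Set α := ⋂ i, (F i) ⁻¹' U with hU'
  set V' : Set α := ⋂ i, (F i) ⁻¹' V with hV'
  have hU'o : IsOpen U' := isOpen_iInter_of_finite fun i => hUo.preimage (hFc i)
  have hV'o : IsOpen V' := isOpen_iInter_of_finite fun i => hVo.preimage (hFc i)
  have hxU' : x ∈ U' := Set.mem_iInter.2 fun i => hOxU ⟨i, rfl⟩
  have hyV' : y ∈ V' := Set.mem_iInter.2 fun i => hOyV ⟨i, rfl⟩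
  have hsatU : ∀ {a b}, r a b → a ∈ U' → b ∈ U' := by
    intro a b hab ha
    obtain ⟨i, rfl⟩ := (hr a b).1 hab
    refine Set.mem_iInter.2 fun j => ?_
    obtain ⟨k, hk⟩ := hcomp j i
    rw [Set.mem_preimage, ← hk]
    exact Set.mem_iInter.1 ha k
  have hsatV : ∀ {a b}, r a b → a ∈ V' → b ∈ V' := by
    intro a b hab ha
    obtain ⟨i, rfl⟩ := (hr a b).1 hab
    refine Set.mem_iInter.2 fun j => ?_
    obtain ⟨k, hk⟩ := hcomp j i
    rw [Set.mem_preimage, ← hk]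
    exact Set.mem_iInter.1 ha k
  refine ⟨Quot.mk r '' U', Quot.mk r '' V', ?_, ?_, ⟨x, hxU', rfl⟩, ⟨y, hyV', rfl⟩, ?_⟩
  · rw [isOpen_coinduced (f := Quot.mk r)]
    convert hU'o using 1
    ext a
    constructor
    · rintro ⟨a', ha', he⟩
      exact hsatU (hEq (Quot.eqvGen_exact he)) ha'
    · intro ha; exact ⟨a, ha, rfl⟩
  · rw [isOpen_coinduced (f := Quot.mk r)]
    convert hV'o using 1
    ext a
    constructor
    · rintro ⟨a', ha', he⟩
      exact hsatV (hEq (Quot.eqvGen_exact he)) ha'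
    · intro ha; exact ⟨a, ha, rfl⟩
  · rw [Set.disjoint_left]
    rintro - ⟨a, ha, rfl⟩ ⟨a', ha', he⟩
    have : a ∈ V' := hsatV (hEq (Quot.eqvGen_exact he)) ha'
    exact Set.disjoint_left.1 hUV (Set.mem_iInter.1 ha (hid.choose))
      (Set.mem_iInter.1 this (hid.choose))

end AuxHelpers

/-- Let a finite group `G` act on an abelian variety `A = ℂ^n ⧸ Λ` by
automorphisms fixing the origin, let `A₀` be the connected component of `A^G` containing
`0` (the subtorus with tangent space `W₀ = T₀(A)^G`), and let `P` be the complementary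
abelian subvariety of `A₀` with respect to a `G`-invariant polarization (a `G`-stable
abelian subvariety with tangent space `W_P` satisfying `W₀ ⊓ W_P = ⊥`, `W₀ ⊔ W_P = ⊤`).
Then `A/G` is smooth if and only if `P/G` is smooth (both encoded through the
Chevalley–Shephard–Todd criterion); moreover `A/G` fibers over the abelian variety
`A₀/(A₀ ∩ P)` with all fibers isomorphic to `P/G`. -/


theorem smooth_iff_prym_smooth_and_fibration {n : ℕ}
    (Λ : AddSubgroup (Vn n)) (hΛ : IsLattice Λ)
    (G : Subgroup (Vn n ≃ₗ[ℂ] Vn n)) (hGfin : Finite G)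
    (hGΛ : ∀ g ∈ G, ∀ v ∈ Λ, g v ∈ Λ)
    (W0 WP : Submodule ℂ (Vn n))
    (hW0 : ∀ v : Vn n, v ∈ W0 ↔ ∀ g ∈ G, g v = v)
    (hcompl1 : W0 ⊓ WP = ⊥) (hcompl2 : W0 ⊔ WP = ⊤)
    (hPstable : ∀ g ∈ G, WP.map (g : Vn n →ₗ[ℂ] Vn n) = WP)
    (hW0lat : Submodule.span ℝ ((Λ : Set (Vn n)) ∩ (W0 : Set (Vn n))) =
      W0.restrictScalars ℝ)
    (hWPlat : Submodule.span ℝ ((Λ : Set (Vn n)) ∩ (WP : Set (Vn n))) =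
      WP.restrictScalars ℝ) :
    -- `A₀` and `P` as subgroups of `A`
    let A0 : AddSubgroup (Vn n ⧸ Λ) :=
      W0.toAddSubgroup.map (QuotientAddGroup.mk' Λ)
    let P : AddSubgroup (Vn n ⧸ Λ) :=
      WP.toAddSubgroup.map (QuotientAddGroup.mk' Λ)
    -- the orbit relation of `G` on `A` and on `P`
    let RG : (Vn n ⧸ Λ) → (Vn n ⧸ Λ) → Prop := fun x y =>
      ∃ g ∈ G, ∃ v : Vn n, QuotientAddGroup.mk' Λ v = x ∧
        QuotientAddGroup.mk' Λ (g v) = y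
    let RP : P → P → Prop := fun x y =>
      ∃ g ∈ G, ∃ v : Vn n, QuotientAddGroup.mk' Λ v = (x : Vn n ⧸ Λ) ∧
        QuotientAddGroup.mk' Λ (g v) = (y : Vn n ⧸ Λ)
    -- (1) `A/G` is smooth iff `P/G` is smooth
    ((∀ x : Vn n ⧸ Λ, CSTAt Λ (G : Set (Vn n ≃ₗ[ℂ] Vn n)) x) ↔
      (∀ x : Vn n ⧸ Λ, x ∈ P → CSTAt Λ (G : Set (Vn n ≃ₗ[ℂ] Vn n)) x)) ∧
    -- (2) `A/G` fibers over `A₀/(A₀ ∩ P)` with fibers isomorphic to `P/G`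
    (∃ p : Quot RG → (A0 ⧸ ((A0 ⊓ P).addSubgroupOf A0)),
      Continuous p ∧ Function.Surjective p ∧
      ∀ b, Nonempty ((p ⁻¹' {b} : Set _) ≃ₜ Quot RP)) := by
  intro A0 P RG RP
  have hcompl : IsCompl W0 WP := ⟨disjoint_iff.2 hcompl1, codisjoint_iff.2 hcompl2⟩
  set π0 : Vn n →ₗ[ℂ] Vn n := W0.subtype ∘ₗ W0.projectionOnto WP hcompl with hπ0def
  set πP : Vn n →ₗ[ℂ] Vn n := WP.subtype ∘ₗ WP.projectionOnto W0 hcompl.symm with hπPdef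
  have hadd : ∀ v, π0 v + πP v = v := fun v =>
    Submodule.projection_add_projection_eq_self hcompl v
  have hπ0mem : ∀ v, π0 v ∈ W0 := fun v => (W0.projectionOnto WP hcompl v).2
  have hπPmem : ∀ v, πP v ∈ WP := fun v => (WP.projectionOnto W0 hcompl.symm v).2
  have hπ0W0 : ∀ v ∈ W0, π0 v = v := by
    intro v hv
    have := Submodule.projectionOnto_apply_left hcompl ⟨v, hv⟩
    simpa [hπ0def] using congrArg (W0.subtype) this
  have hπ0WP : ∀ v ∈ WP, π0 v = 0 := by
    intro v hv
    have := Submodule.projectionOnto_apply_right hcompl ⟨v, hv⟩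
    simpa [hπ0def] using congrArg (W0.subtype) this
  have hfix : ∀ g ∈ G, ∀ v ∈ W0, (g : Vn n ≃ₗ[ℂ] Vn n) v = v :=
    fun g hg v hv => (hW0 v).1 hv g hg
  have hgWP : ∀ g ∈ G, ∀ w ∈ WP, (g : Vn n ≃ₗ[ℂ] Vn n) w ∈ WP := fun g hg w hw =>
    (hPstable g hg) ▸ Submodule.mem_map_of_mem hw
  -- FixesPt is representative-independent
  have hFix : ∀ g ∈ G, ∀ v : Vn n,
      (FixesPt Λ g (QuotientAddGroup.mk' Λ v) ↔ (g : Vn n ≃ₗ[ℂ] Vn n) v - v ∈ Λ) := by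
    intro g hg v
    constructor
    · rintro ⟨w, hw, hgw⟩
      have hl : w - v ∈ Λ := (QuotientAddGroup.eq_iff_sub_mem).1 hw
      have heq : (g : Vn n ≃ₗ[ℂ] Vn n) v - v
          = ((g : Vn n ≃ₗ[ℂ] Vn n) w - w) - ((g : Vn n ≃ₗ[ℂ] Vn n) (w - v) - (w - v)) := by
        simp only [map_sub]; abel
      rw [heq]
      exact sub_mem hgw (sub_mem (hGΛ g hg _ hl) hl)
    · intro h; exact ⟨v, rfl, h⟩
  have hgv : ∀ g ∈ G, ∀ v : Vn n,
      (g : Vn n ≃ₗ[ℂ] Vn n) v - v = (g : Vn n ≃ₗ[ℂ] Vn n) (πP v) - πP v := by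
    intro g hg v
    have h1 : (g : Vn n ≃ₗ[ℂ] Vn n) v = π0 v + (g : Vn n ≃ₗ[ℂ] Vn n) (πP v) := by
      conv_lhs => rw [← hadd v]
      rw [map_add, hfix g hg _ (hπ0mem v)]
    calc (g : Vn n ≃ₗ[ℂ] Vn n) v - v
        = (π0 v + (g : Vn n ≃ₗ[ℂ] Vn n) (πP v)) - (π0 v + πP v) := by rw [← h1, hadd]
      _ = (g : Vn n ≃ₗ[ℂ] Vn n) (πP v) - πP v := by abel
  have hFixP : ∀ g ∈ G, ∀ v : Vn n,
      (FixesPt Λ g (QuotientAddGroup.mk' Λ v) ↔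
        FixesPt Λ g (QuotientAddGroup.mk' Λ (πP v))) := by
    intro g hg v
    rw [hFix g hg v, hFix g hg (πP v), hgv g hg v]
  have hCSTcong : ∀ v : Vn n,
      (CSTAt Λ (G : Set (Vn n ≃ₗ[ℂ] Vn n)) (QuotientAddGroup.mk' Λ v) ↔
       CSTAt Λ (G : Set (Vn n ≃ₗ[ℂ] Vn n)) (QuotientAddGroup.mk' Λ (πP v))) := by
    intro v
    unfold CSTAt
    have hsets : {h : Vn n ≃ₗ[ℂ] Vn n | h ∈ (G : Set (Vn n ≃ₗ[ℂ] Vn n)) ∧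
          FixesPt Λ h (QuotientAddGroup.mk' Λ v) ∧ IsPseudoreflection h}
        = {h : Vn n ≃ₗ[ℂ] Vn n | h ∈ (G : Set (Vn n ≃ₗ[ℂ] Vn n)) ∧
          FixesPt Λ h (QuotientAddGroup.mk' Λ (πP v)) ∧ IsPseudoreflection h} := by
      ext h
      exact and_congr_right fun hh => and_congr_left fun _ => hFixP h hh v
    rw [hsets]
    exact forall_congr' fun g => forall_congr' fun hg => imp_congr (hFixP g hg v) Iff.rfl
  constructor
  · constructor
    · exact fun h x _ => h x
    · intro h x
      obtain ⟨v, rfl⟩ := QuotientAddGroup.mk'_surjective Λ x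
      rw [hCSTcong v]
      exact h _ ⟨πP v, hπPmem v, rfl⟩
  -- Part (2)
  · -- π0 is G-invariant on the quotient
    have hπ0g : ∀ g ∈ G, ∀ v : Vn n, π0 ((g : Vn n ≃ₗ[ℂ] Vn n) v) = π0 v := by
      intro g hg v
      conv_lhs => rw [← hadd v]
      rw [map_add (g : Vn n ≃ₗ[ℂ] Vn n), hfix g hg _ (hπ0mem v), map_add π0,
        hπ0W0 _ (hπ0mem v), hπ0WP _ (hgWP g hg _ (hπPmem v)), add_zero]
    have hf0mem : ∀ v : Vn n, QuotientAddGroup.mk' Λ (π0 v) ∈ A0 := fun v =>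
      ⟨π0 v, hπ0mem v, rfl⟩
    set f0 : Vn n →+ A0 :=
      ((QuotientAddGroup.mk' Λ).comp π0.toAddMonoidHom).codRestrict A0 hf0mem with hf0def
    have hker : ∀ l ∈ Λ, (QuotientAddGroup.mk' ((A0 ⊓ P).addSubgroupOf A0)).comp f0 l = 0 := by
      intro l hl
      rw [AddMonoidHom.comp_apply]
      rw [QuotientAddGroup.mk'_apply, QuotientAddGroup.eq_zero_iff]
      rw [AddSubgroup.mem_addSubgroupOf]
      refine ⟨hf0mem l, ⟨-(πP l), neg_mem (hπPmem l), ?_⟩⟩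
      apply (QuotientAddGroup.eq_iff_sub_mem).2
      show -πP l - π0 l ∈ Λ
      have h2 : -πP l - π0 l = -(π0 l + πP l) := by abel
      rw [h2, hadd l]
      exact neg_mem hl
    set qB : (Vn n ⧸ Λ) →+ (A0 ⧸ (A0 ⊓ P).addSubgroupOf A0) :=
      QuotientAddGroup.lift Λ ((QuotientAddGroup.mk' ((A0 ⊓ P).addSubgroupOf A0)).comp f0) hker
      with hqBdef
    have hqBmk : ∀ v : Vn n, qB (QuotientAddGroup.mk' Λ v)
        = QuotientAddGroup.mk' ((A0 ⊓ P).addSubgroupOf A0) (f0 v) := fun v => rfl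
    have hqBG : ∀ g ∈ G, ∀ v : Vn n,
        qB (QuotientAddGroup.mk' Λ ((g : Vn n ≃ₗ[ℂ] Vn n) v))
          = qB (QuotientAddGroup.mk' Λ v) := by
      intro g hg v
      rw [hqBmk, hqBmk]
      congr 1
      apply Subtype.ext
      show QuotientAddGroup.mk' Λ (π0 ((g : Vn n ≃ₗ[ℂ] Vn n) v)) = QuotientAddGroup.mk' Λ (π0 v)
      rw [hπ0g g hg v]
    have hresp : ∀ a b : Vn n ⧸ Λ, RG a b → qB a = qB b := by
      rintro a b ⟨g, hg, v, rfl, rfl⟩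
      exact (hqBG g hg v).symm
    refine ⟨Quot.lift (fun x => qB x) hresp, ?_, ?_, ?_⟩
    · -- continuity
      apply continuous_quot_lift
      apply (QuotientAddGroup.isQuotientMap_mk Λ).continuous_iff.2
      show Continuous fun v : Vn n =>
        QuotientAddGroup.mk' ((A0 ⊓ P).addSubgroupOf A0) (f0 v)
      apply Continuous.comp continuous_quotient_mk'
      apply Continuous.subtype_mk
      exact continuous_quotient_mk'.comp π0.continuous_of_finiteDimensional
    · -- surjectivity
      intro b
      obtain ⟨a, rfl⟩ := QuotientAddGroup.mk'_surjective ((A0 ⊓ P).addSubgroupOf A0) b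
      obtain ⟨v0, hv0W, hv0⟩ := a.2
      refine ⟨Quot.mk RG (QuotientAddGroup.mk' Λ v0), ?_⟩
      show qB (QuotientAddGroup.mk' Λ v0) = _
      rw [hqBmk]
      congr 1
      apply Subtype.ext
      show QuotientAddGroup.mk' Λ (π0 v0) = (a : Vn n ⧸ Λ)
      rw [hπ0W0 v0 hv0W, hv0]
    · -- fibers
      intro b
      obtain ⟨a, rfl⟩ := QuotientAddGroup.mk'_surjective ((A0 ⊓ P).addSubgroupOf A0) b
      obtain ⟨v0, hv0W, hv0⟩ := a.2
      -- topological instances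
      haveI hdisc : DiscreteTopology Λ := hΛ.1
      haveI hclosed : IsClosed (Λ : Set (Vn n)) := AddSubgroup.isClosed_of_discrete
      haveI hCpt : CompactSpace (Vn n ⧸ Λ) := by
        have h := aux_isCompact_mk_image_span Λ (Λ : Set (Vn n)) subset_rfl
        rw [hΛ.2] at h
        apply isCompact_univ_iff.1
        convert h using 1
        rw [Submodule.top_coe, Set.image_univ]
        exact (Set.range_eq_univ.2 (QuotientAddGroup.mk'_surjective Λ)).symm
      -- the action of `G` on the quotient
      set F : G → (Vn n ⧸ Λ) → (Vn n ⧸ Λ) := fun g =>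
        QuotientAddGroup.map Λ Λ
          (((g : Vn n ≃ₗ[ℂ] Vn n) : Vn n →ₗ[ℂ] Vn n).toAddMonoidHom)
          (fun v hv => hGΛ g g.2 v hv) with hFdef
      have hFmk : ∀ (g : G) (v : Vn n), F g (QuotientAddGroup.mk' Λ v)
          = QuotientAddGroup.mk' Λ ((g : Vn n ≃ₗ[ℂ] Vn n) v) := fun g v =>
        QuotientAddGroup.map_mk' Λ Λ _ _ v
      have hRGiff : ∀ x y, RG x y ↔ ∃ g : G, F g x = y := by
        intro x y
        constructor
        · rintro ⟨g, hg, v, rfl, rfl⟩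
          exact ⟨⟨g, hg⟩, hFmk ⟨g, hg⟩ v⟩
        · rintro ⟨g, hgx⟩
          obtain ⟨v, rfl⟩ := QuotientAddGroup.mk'_surjective Λ x
          exact ⟨g, g.2, v, rfl, by rw [← hFmk g v, hgx]⟩
      have hFid : ∃ i : G, ∀ x, F i x = x := by
        refine ⟨1, fun x => ?_⟩
        obtain ⟨v, rfl⟩ := QuotientAddGroup.mk'_surjective Λ x
        rw [hFmk]; rfl
      have hFcomp : ∀ g h : G, ∃ k : G, ∀ x, F k x = F g (F h x) := by
        intro g h
        refine ⟨g * h, fun x => ?_⟩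
        obtain ⟨v, rfl⟩ := QuotientAddGroup.mk'_surjective Λ x
        rw [hFmk, hFmk, hFmk]; rfl
      have hFinv : ∀ g : G, ∃ h : G, ∀ x, F h (F g x) = x := by
        intro g
        refine ⟨g⁻¹, fun x => ?_⟩
        obtain ⟨v, rfl⟩ := QuotientAddGroup.mk'_surjective Λ x
        rw [hFmk, hFmk]
        exact congrArg _ ((g : Vn n ≃ₗ[ℂ] Vn n).symm_apply_apply v)
      have hFcont : ∀ g : G, Continuous (F g) := by
        intro g
        apply (QuotientAddGroup.isQuotientMap_mk Λ).continuous_iff.2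
        show Continuous fun v : Vn n => F g (QuotientAddGroup.mk' Λ v)
        simp only [hFmk]
        exact continuous_quotient_mk'.comp
          ((g : Vn n ≃ₗ[ℂ] Vn n).toLinearMap.continuous_of_finiteDimensional)
      haveI hQT2 : T2Space (Quot RG) :=
        aux_t2_quot F hFcont hFid hFcomp hFinv RG hRGiff
      have hRGle : ∀ {x y}, Relation.EqvGen RG x y → RG x y :=
        aux_eqvGen_le F hFid hFcomp hFinv RG hRGiff
      -- compactness of P/G
      have hPcpt : IsCompact (P : Set (Vn n ⧸ Λ)) := by
        have h := aux_isCompact_mk_image_span Λ ((Λ : Set (Vn n)) ∩ (WP : Set (Vn n)))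
          Set.inter_subset_left
        rw [hWPlat] at h
        have hPeq : (P : Set (Vn n ⧸ Λ)) = (QuotientAddGroup.mk' Λ) ''
            ((WP.restrictScalars ℝ : Submodule ℝ (Vn n)) : Set (Vn n)) := by
          rw [AddSubgroup.coe_map]; rfl
        rw [hPeq]; exact h
      haveI : CompactSpace P := isCompact_iff_compactSpace.1 hPcpt
      haveI : CompactSpace (Quot RP) := by
        refine ⟨?_⟩
        rw [← Set.range_quot_mk RP]
        exact isCompact_range continuous_quot_mk
      -- the map from P/G to the fiber
      have hψmem : ∀ y : P,
          Quot.lift (fun x => qB x) hresp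
              (Quot.mk RG (QuotientAddGroup.mk' Λ v0 + (y : Vn n ⧸ Λ)))
            ∈ ({QuotientAddGroup.mk' ((A0 ⊓ P).addSubgroupOf A0) a} :
              Set (A0 ⧸ (A0 ⊓ P).addSubgroupOf A0)) := by
        intro y
        obtain ⟨w, hwWP, hww⟩ := y.2
        show qB (QuotientAddGroup.mk' Λ v0 + (y : Vn n ⧸ Λ)) = _
        rw [← hww, ← map_add (QuotientAddGroup.mk' Λ) v0 w, hqBmk]
        apply congrArg
        apply Subtype.ext
        show QuotientAddGroup.mk' Λ (π0 (v0 + w)) = (a : Vn n ⧸ Λ)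
        rw [map_add, hπ0W0 v0 hv0W, hπ0WP w hwWP, add_zero, hv0]
      have hψresp : ∀ y y' : P, RP y y' →
          (⟨Quot.mk RG (QuotientAddGroup.mk' Λ v0 + (y : Vn n ⧸ Λ)), hψmem y⟩ :
            (Quot.lift (fun x => qB x) hresp ⁻¹'
              {QuotientAddGroup.mk' ((A0 ⊓ P).addSubgroupOf A0) a} : Set _))
          = ⟨Quot.mk RG (QuotientAddGroup.mk' Λ v0 + (y' : Vn n ⧸ Λ)), hψmem y'⟩ := by
        rintro y y' ⟨g, hg, v, hv1, hv2⟩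
        apply Subtype.ext
        apply Quot.sound
        refine ⟨g, hg, v0 + v, ?_, ?_⟩
        · rw [map_add, hv1]
        · rw [map_add (g : Vn n ≃ₗ[ℂ] Vn n), hfix g hg v0 hv0W, map_add, hv2]
      have hΦinj : Function.Injective (Quot.lift (fun y : P =>
          (⟨Quot.mk RG (QuotientAddGroup.mk' Λ v0 + (y : Vn n ⧸ Λ)), hψmem y⟩ :
            (Quot.lift (fun x => qB x) hresp ⁻¹'
              {QuotientAddGroup.mk' ((A0 ⊓ P).addSubgroupOf A0) a} : Set _))) hψresp) := by
        intro y y'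
        induction y using Quot.ind with | _ y => ?_
        induction y' using Quot.ind with | _ y' => ?_
        intro h
        have h2 : Quot.mk RG (QuotientAddGroup.mk' Λ v0 + (y : Vn n ⧸ Λ))
            = Quot.mk RG (QuotientAddGroup.mk' Λ v0 + (y' : Vn n ⧸ Λ)) :=
          congrArg Subtype.val h
        obtain ⟨g, hg, v, hv1, hv2⟩ := hRGle (Quot.eqvGen_exact h2)
        obtain ⟨w, hwWP, hww⟩ := y.2
        have hl : v - (v0 + w) ∈ Λ := by
          apply (QuotientAddGroup.eq_iff_sub_mem).1
          show QuotientAddGroup.mk' Λ v = QuotientAddGroup.mk' Λ (v0 + w)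
          rw [hv1, map_add, hww]
        have key : QuotientAddGroup.mk' Λ ((g : Vn n ≃ₗ[ℂ] Vn n) w) = (y' : Vn n ⧸ Λ) := by
          have e1 : (g : Vn n ≃ₗ[ℂ] Vn n) v
              = v0 + (g : Vn n ≃ₗ[ℂ] Vn n) w + (g : Vn n ≃ₗ[ℂ] Vn n) (v - (v0 + w)) := by
            rw [map_sub, map_add, hfix g hg v0 hv0W]; abel
          have hz : QuotientAddGroup.mk' Λ ((g : Vn n ≃ₗ[ℂ] Vn n) (v - (v0 + w))) = 0 :=
            (QuotientAddGroup.eq_zero_iff _).2 (hGΛ g hg _ hl)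
          have e2 : QuotientAddGroup.mk' Λ ((g : Vn n ≃ₗ[ℂ] Vn n) v)
              = QuotientAddGroup.mk' Λ v0
                + QuotientAddGroup.mk' Λ ((g : Vn n ≃ₗ[ℂ] Vn n) w) := by
            rw [e1, map_add, map_add, hz, add_zero]
          have e3 : QuotientAddGroup.mk' Λ v0
              + QuotientAddGroup.mk' Λ ((g : Vn n ≃ₗ[ℂ] Vn n) w)
              = QuotientAddGroup.mk' Λ v0 + (y' : Vn n ⧸ Λ) := e2.symm.trans hv2
          exact add_left_cancel e3
        exact Quot.sound ⟨g, hg, w, hww, key⟩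
      have hΦsurj : Function.Surjective (Quot.lift (fun y : P =>
          (⟨Quot.mk RG (QuotientAddGroup.mk' Λ v0 + (y : Vn n ⧸ Λ)), hψmem y⟩ :
            (Quot.lift (fun x => qB x) hresp ⁻¹'
              {QuotientAddGroup.mk' ((A0 ⊓ P).addSubgroupOf A0) a} : Set _))) hψresp) := by
        rintro ⟨c, hc⟩
        induction c using Quot.ind with | _ x => ?_
        obtain ⟨v, rfl⟩ := QuotientAddGroup.mk'_surjective Λ x
        have hc' : QuotientAddGroup.mk' ((A0 ⊓ P).addSubgroupOf A0) (f0 v)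
            = QuotientAddGroup.mk' ((A0 ⊓ P).addSubgroupOf A0) a := hc
        have hmem : f0 v - a ∈ (A0 ⊓ P).addSubgroupOf A0 :=
          (QuotientAddGroup.eq_iff_sub_mem).1 hc'
        have hmem2 : ((f0 v : A0) : Vn n ⧸ Λ) - (a : Vn n ⧸ Λ) ∈ A0 ⊓ P :=
          AddSubgroup.mem_addSubgroupOf.1 hmem
        obtain ⟨s, hsWP, hs⟩ := hmem2.2
        have hwWP : s + πP v ∈ WP := WP.add_mem hsWP (hπPmem v)
        have hkey : QuotientAddGroup.mk' Λ v0 + QuotientAddGroup.mk' Λ (s + πP v)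
            = QuotientAddGroup.mk' Λ v := by
          have hfv : ((f0 v : A0) : Vn n ⧸ Λ) = QuotientAddGroup.mk' Λ (π0 v) := rfl
          have hmk : QuotientAddGroup.mk' Λ (π0 v) + QuotientAddGroup.mk' Λ (πP v)
              = QuotientAddGroup.mk' Λ v := by
            rw [← map_add, hadd]
          rw [map_add, hs, hfv, hv0, ← hmk]
          abel
        refine ⟨Quot.mk RP ⟨QuotientAddGroup.mk' Λ (s + πP v), ⟨s + πP v, hwWP, rfl⟩⟩, ?_⟩
        apply Subtype.ext
        show Quot.mk RG (QuotientAddGroup.mk' Λ v0 + QuotientAddGroup.mk' Λ (s + πP v))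
          = Quot.mk RG (QuotientAddGroup.mk' Λ v)
        rw [hkey]
      have hΦcont : Continuous (Quot.lift (fun y : P =>
          (⟨Quot.mk RG (QuotientAddGroup.mk' Λ v0 + (y : Vn n ⧸ Λ)), hψmem y⟩ :
            (Quot.lift (fun x => qB x) hresp ⁻¹'
              {QuotientAddGroup.mk' ((A0 ⊓ P).addSubgroupOf A0) a} : Set _))) hψresp) := by
        apply continuous_quot_lift
        apply Continuous.subtype_mk
        exact continuous_quot_mk.comp (continuous_subtype_val.const_add _)
      exact ⟨(Continuous.homeoOfEquivCompactToT2
        (f := Equiv.ofBijective _ ⟨hΦinj, hΦsurj⟩) hΦcont).symm⟩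
end
end

section
/- Let E be an elliptic curve, n ≥ 2, and let G = G(m,p,n) = H ⋊ S_n with m ∈ {2,3,4,6}, p | m, p ≥ 2, act on B = E^n, where H = {(ζ_m^{a_1},…,ζ_m^{a_n}) : Σa_i ≡ 0 mod p} acts coordinatewise by complex multiplication and S_n permutes coordinates. Then the quotient B/G is not smooth. -/
noncomputable section

/-- The imprimitive complex reflection group `G(m,p,n) = H(m,p,n) ⋊ Sₙ` realized inside
`GL_n(ℂ)`: monomial transformations `v ↦ (ζ^(a i) · v (π⁻¹ i))ᵢ` with `Σ aᵢ ≡ 0 mod p`,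
where `ζ` is a primitive `m`-th root of unity. -/
def Gmpn {n : ℕ} (ζ : ℂ) (p : ℕ) : Set (Vn n ≃ₗ[ℂ] Vn n) :=
  {g | ∃ (π : Equiv.Perm (Fin n)) (a : Fin n → ℕ), (p ∣ ∑ i, a i) ∧
    ∀ (v : Vn n) (i : Fin n), g v i = ζ ^ (a i) * v (π⁻¹ i)}

lemma abs_eq_one_of_pow {η : ℂ} {k : ℕ} (hk : 0 < k) (h : η ^ k = 1) :
    ‖η‖ = 1 := by
  have h1 : ‖η‖ ^ k = 1 := by
    rw [← norm_pow, h, norm_one]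
  have h0 : (0:ℝ) ≤ ‖η‖ := norm_nonneg η
  rcases lt_trichotomy (‖η‖) 1 with hlt | heq | hgt
  · exact absurd h1 (by nlinarith [pow_lt_one₀ h0 hlt hk.ne'])
  · exact heq
  · exact absurd h1 (by nlinarith [one_lt_pow₀ hgt hk.ne'])

lemma aux_abs {η : ℂ} (H : η = -1 ∨ 1 + η + η ^ 2 = 0 ∨ η ^ 2 = -1) :
    1 < ‖η - 1‖ := by
  rcases H with h | h | h
  · subst h
    have h2 : (-1 - 1 : ℂ) = -2 := by ring
    rw [h2]
    simp
  · have hη0 : η ≠ 0 := by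
      intro h0; rw [h0] at h; norm_num at h
    have h3 : η ^ 3 = 1 := by linear_combination (η - 1) * h
    have habs : ‖η‖ = 1 := abs_eq_one_of_pow (by norm_num) h3
    have hns : Complex.normSq η = 1 := by
      rw [Complex.normSq_eq_norm_sq, habs]; norm_num
    have hconj : (starRingEnd ℂ) η = η ^ 2 := by
      have h1 : η * (starRingEnd ℂ) η = 1 := by
        rw [Complex.mul_conj, hns]; norm_num
      have h2 : η * η ^ 2 = 1 := by linear_combination h3
      exact mul_left_cancel₀ hη0 (h1.trans h2.symm)
    have key : (η - 1) * (starRingEnd ℂ) (η - 1) = 3 := by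
      rw [map_sub, map_one, hconj]
      linear_combination h3 - h
    have hsq : ‖η - 1‖ ^ 2 = 3 := by
      have h4 := congrArg (‖·‖) key
      rw [norm_mul, Complex.norm_conj] at h4
      rw [sq, h4]
      norm_num
    nlinarith [norm_nonneg (η - 1)]
  · have hη0 : η ≠ 0 := by
      intro h0; rw [h0] at h; norm_num at h
    have habs : ‖η‖ = 1 := abs_eq_one_of_pow (k := 4) (by norm_num)
      (by linear_combination (η^2 - 1) * h)
    have hns : Complex.normSq η = 1 := by
      rw [Complex.normSq_eq_norm_sq, habs]; norm_num
    have hconj : (starRingEnd ℂ) η = -η := by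
      have h1 : η * (starRingEnd ℂ) η = 1 := by
        rw [Complex.mul_conj, hns]; norm_num
      have h2 : η * (-η) = 1 := by linear_combination -h
      exact mul_left_cancel₀ hη0 (h1.trans h2.symm)
    have key : (η - 1) * (starRingEnd ℂ) (η - 1) = 2 := by
      rw [map_sub, map_one, hconj]
      linear_combination -h
    have hsq : ‖η - 1‖ ^ 2 = 2 := by
      have h4 := congrArg (‖·‖) key
      rw [norm_mul, Complex.norm_conj] at h4
      rw [sq, h4]
      norm_num
    nlinarith [norm_nonneg (η - 1)]

lemma exists_fixed (Λ : AddSubgroup ℂ) (hdisc : DiscreteTopology Λ)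
    (hspan : Submodule.span ℝ (Λ : Set ℂ) = ⊤) {η : ℂ}
    (habs : 1 < ‖η - 1‖) :
    ∃ u : ℂ, (η - 1) * u ∈ Λ ∧ u ∉ Λ := by
  by_contra hcon
  push_neg at hcon
  obtain ⟨lam, hlam, hlam0⟩ : ∃ lam : ℂ, lam ∈ Λ ∧ lam ≠ 0 := by
    by_contra h
    push_neg at h
    have : (Λ : Set ℂ) ⊆ {0} := by
      intro z hz
      simp [h z hz]
    have h1 : Submodule.span ℝ (Λ : Set ℂ) ≤ Submodule.span ℝ {0} :=
      Submodule.span_mono this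
    rw [hspan, Submodule.span_zero_singleton] at h1
    have : (1 : ℂ) ∈ (⊥ : Submodule ℝ ℂ) := h1 (by trivial)
    simp at this
  obtain ⟨ε, hε, hball⟩ : ∃ ε > 0, ∀ w ∈ Λ, ‖w‖ < ε → w = 0 := by
    have hopen : IsOpen ({(0 : Λ)} : Set Λ) := isOpen_discrete _
    obtain ⟨ε, hε, hb⟩ := Metric.isOpen_iff.mp hopen 0 rfl
    refine ⟨ε, hε, fun w hw hwa => ?_⟩
    have : (⟨w, hw⟩ : Λ) ∈ Metric.ball (0 : Λ) ε := by
      rw [Metric.mem_ball, Subtype.dist_eq]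
      simpa [Complex.dist_eq] using hwa
    have := hb this
    simpa using this
  have hne : η - 1 ≠ 0 := by
    intro h0
    rw [h0] at habs
    simp at habs
    linarith
  set w : ℂ := (η - 1)⁻¹ with hw
  have hwabs : ‖w‖ < 1 := by
    rw [hw, norm_inv]
    rw [inv_lt_one_iff₀]
    right; exact habs
  have hmem : ∀ k : ℕ, w ^ k * lam ∈ Λ := by
    intro k
    induction k with
    | zero => simpa using hlam
    | succ k ih =>
      have : (η - 1) * (w ^ (k+1) * lam) = w ^ k * lam := by
        have hw1 : (η - 1) * w = 1 := by rw [hw]; exact mul_inv_cancel₀ hne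
        linear_combination (w ^ k * lam) * hw1
      exact hcon _ (by rw [this]; exact ih)
  have hlamabs : 0 < ‖lam‖ := by
    simpa [norm_pos_iff] using hlam0
  obtain ⟨k, hk⟩ := exists_pow_lt_of_lt_one (div_pos hε hlamabs) hwabs
  have hsmall : ‖w ^ k * lam‖ < ε := by
    rw [norm_mul, norm_pow]
    calc ‖w‖ ^ k * ‖lam‖ < ε / ‖lam‖ * ‖lam‖ :=
          by exact mul_lt_mul_of_pos_right hk hlamabs
      _ = ε := by field_simp
  have hzero := hball _ (hmem k) hsmall
  have hwne : w ≠ 0 := inv_ne_zero hne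
  simp [mul_eq_zero, pow_eq_zero_iff] at hzero
  rcases hzero with h | h
  · exact hwne h.1
  · exact hlam0 h

/-- Let `E = ℂ ⧸ Λ` be an elliptic curve, `n ≥ 2`, and let
`G = G(m,p,n) = H ⋊ Sₙ` with `m ∈ {2,3,4,6}`, `p ∣ m`, `p ≥ 2`, act on `B = Eⁿ`, where `H`
acts coordinatewise by complex multiplication by powers of a primitive `m`-th root of unity
`ζ` and `Sₙ` permutes the coordinates.  Then the quotient `B/G` is not smooth. -/
theorem Gmpn_quotient_not_smooth {n m p : ℕ} (hn : 2 ≤ n)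
    (hm : m ∈ ({2, 3, 4, 6} : Set ℕ)) (hp : p ∣ m) (hp2 : 2 ≤ p)
    (ζ : ℂ) (hζ : IsPrimitiveRoot ζ m)
    (Λ : AddSubgroup ℂ) (hdisc : DiscreteTopology Λ)
    (hspan : Submodule.span ℝ (Λ : Set ℂ) = ⊤)
    (hcm : ∀ v ∈ Λ, ζ * v ∈ Λ) :
    ¬ SmoothQuotient (AddSubgroup.pi Set.univ fun _ : Fin n => Λ) (Gmpn ζ p) := by
  intro hsm
  simp only [Set.mem_insert_iff, Set.mem_singleton_iff] at hm
  have hm2 : 2 ≤ m := by rcases hm with h|h|h|h <;> omega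
  have hζm : ζ ^ m = 1 := hζ.pow_eq_one
  have hζ1 : ζ ≠ 1 := hζ.ne_one (by omega)
  -- choose the exponent b
  obtain ⟨b, hblt, hbp, hH⟩ : ∃ b : ℕ, b < m ∧ ¬ p ∣ b ∧
      (ζ ^ b = -1 ∨ 1 + ζ ^ b + (ζ ^ b) ^ 2 = 0 ∨ (ζ ^ b) ^ 2 = -1) := by
    have hpm : p ≤ m := Nat.le_of_dvd (by omega) hp
    rcases hm with h | h | h | h
    · -- m = 2 : ζ = -1
      subst h
      refine ⟨1, by omega, fun hd => by have := Nat.dvd_one.mp hd; omega, Or.inl ?_⟩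
      have h0 : (ζ - 1) * (ζ + 1) = 0 := by linear_combination hζm
      rcases mul_eq_zero.mp h0 with h1 | h1
      · exact absurd (sub_eq_zero.mp h1) hζ1
      · rw [pow_one]
        linear_combination h1
    · -- m = 3
      subst h
      refine ⟨1, by omega, fun hd => by have := Nat.dvd_one.mp hd; omega, Or.inr (Or.inl ?_)⟩
      have h0 : (ζ - 1) * (1 + ζ + ζ ^ 2) = 0 := by linear_combination hζm
      rcases mul_eq_zero.mp h0 with h1 | h1
      · exact absurd (sub_eq_zero.mp h1) hζ1
      · rw [pow_one]
        exact h1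
    · -- m = 4 : ζ² = -1
      subst h
      refine ⟨1, by omega, fun hd => by have := Nat.dvd_one.mp hd; omega, Or.inr (Or.inr ?_)⟩
      have h2 : ζ ^ 2 ≠ 1 := hζ.pow_ne_one_of_pos_of_lt (by omega) (by omega)
      have h0 : (ζ ^ 2 - 1) * (ζ ^ 2 + 1) = 0 := by linear_combination hζm
      rcases mul_eq_zero.mp h0 with h1 | h1
      · exact absurd (sub_eq_zero.mp h1) h2
      · rw [pow_one]
        linear_combination h1
    · -- m = 6
      subst h
      have hple : p = 2 ∨ p = 3 ∨ p = 6 := by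
        interval_cases p <;> revert hp <;> decide
      rcases hple with hpe | hpe
      · -- p = 2, b = 3, ζ³ = -1
        refine ⟨3, by omega, by rw [hpe]; decide, Or.inl ?_⟩
        have h2 : ζ ^ 3 ≠ 1 := hζ.pow_ne_one_of_pos_of_lt (by omega) (by omega)
        have h0 : (ζ ^ 3 - 1) * (ζ ^ 3 + 1) = 0 := by linear_combination hζm
        rcases mul_eq_zero.mp h0 with h1 | h1
        · exact absurd (sub_eq_zero.mp h1) h2
        · linear_combination h1
      · -- p ∈ {3,6}, b = 2, order 3
        refine ⟨2, by omega, by rcases hpe with h | h <;> rw [h] <;> decide, Or.inr (Or.inl ?_)⟩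
        have h2 : ζ ^ 2 ≠ 1 := hζ.pow_ne_one_of_pos_of_lt (by omega) (by omega)
        have h0 : (ζ ^ 2 - 1) * (1 + ζ ^ 2 + (ζ ^ 2) ^ 2) = 0 := by linear_combination hζm
        rcases mul_eq_zero.mp h0 with h1 | h1
        · exact absurd (sub_eq_zero.mp h1) h2
        · exact h1
  set η := ζ ^ b with hηdef
  have habs : 1 < ‖η - 1‖ := aux_abs hH
  obtain ⟨u, hu, huΛ⟩ := exists_fixed Λ hdisc hspan habs
  have hζ0 : ζ ≠ 0 := hζ.ne_zero (by omega)
  have hη0 : η ≠ 0 := pow_ne_zero _ hζ0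
  have hΛpow : ∀ (k : ℕ) (v : ℂ), v ∈ Λ → ζ ^ k * v ∈ Λ := by
    intro k
    induction k with
    | zero => intro v hv; simpa using hv
    | succ k ih =>
      intro v hv
      have : ζ ^ (k + 1) * v = ζ * (ζ ^ k * v) := by ring
      rw [this]
      exact hcm _ (ih v hv)
  have hΛpow' : ∀ (k : ℕ) (v : ℂ), ζ ^ k * v ∈ Λ → v ∈ Λ := by
    intro k v hv
    have h1 := hΛpow (k * (m - 1)) _ hv
    have h2 : ζ ^ (k * (m - 1)) * (ζ ^ k * v) = (ζ ^ m) ^ k * v := by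
      rw [← mul_assoc, ← pow_add, ← pow_mul]
      congr 2
      calc k * (m - 1) + k = k * ((m - 1) + 1) := by ring
        _ = m * k := by rw [Nat.sub_add_cancel (by omega : 1 ≤ m)]; ring
    rw [h2, hζm, one_pow, one_mul] at h1
    exact h1
  set i0 : Fin n := ⟨0, by omega⟩ with hi0def
  set i1 : Fin n := ⟨1, by omega⟩ with hi1def
  have hi01 : i0 ≠ i1 := by
    simp [hi0def, hi1def, Fin.ext_iff]
  set d : Fin n → ℂ := fun i => if i = i0 then η else if i = i1 then η⁻¹ else 1 with hddef
  have hd : ∀ i, d i ≠ 0 := by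
    intro i
    simp only [hddef]
    split
    · exact hη0
    · split
      · exact inv_ne_zero hη0
      · exact one_ne_zero
  set g : Vn n ≃ₗ[ℂ] Vn n :=
    LinearEquiv.piCongrRight (fun i => LinearEquiv.smulOfNeZero ℂ ℂ (d i) (hd i)) with hgdef
  have hgapp : ∀ (v : Vn n) (i : Fin n), g v i = d i * v i := fun v i => rfl
  set L0 : AddSubgroup (Vn n) := AddSubgroup.pi Set.univ fun _ : Fin n => Λ with hL0def
  set x0 : Vn n := fun i => if i = i0 then u else 0 with hx0def
  set x : Vn n ⧸ L0 := QuotientAddGroup.mk' L0 x0 with hxdef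
  -- g belongs to G(m,p,n)
  have hbm : b ≤ m := hblt.le
  have hmul1 : ζ ^ (m - b) * ζ ^ b = 1 := by
    rw [← pow_add, Nat.sub_add_cancel hbm, hζm]
  have hζmb : ζ ^ (m - b) = η⁻¹ := (inv_eq_of_mul_eq_one_left hmul1).symm
  set ag : Fin n → ℕ := fun i => if i = i0 then b else if i = i1 then m - b else 0 with hagdef
  have hgG : g ∈ Gmpn ζ p := by
    refine ⟨1, ag, ?_, ?_⟩
    · have hsum : ∑ i, ag i = m := by
        have h1 : ∑ i ∈ ({i0, i1} : Finset (Fin n)), ag i = ∑ i, ag i := by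
          refine Finset.sum_subset (Finset.subset_univ _) ?_
          intro i _ hi
          simp only [Finset.mem_insert, Finset.mem_singleton, not_or] at hi
          simp [hagdef, hi.1, hi.2]
        rw [← h1, Finset.sum_pair hi01]
        have e0 : ag i0 = b := by simp [hagdef]
        have e1' : ag i1 = m - b := by simp [hagdef, Ne.symm hi01]
        rw [e0, e1']
        omega
      rw [hsum]
      exact hp
    · intro v i
      simp only [inv_one, Equiv.Perm.coe_one, id_eq]
      rw [hgapp]
      congr 1
      simp only [hddef, hagdef]
      split
      · rfl
      · split
        · exact hζmb.symm
        · simp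
  have hgfix : FixesPt L0 g x := by
    refine ⟨x0, rfl, ?_⟩
    rw [hL0def, AddSubgroup.mem_pi]
    intro i _
    have : (g x0 - x0) i = d i * x0 i - x0 i := by
      simp [hgapp]
    rw [this]
    by_cases hii : i = i0
    · subst hii
      simp only [hddef, hx0def, if_pos rfl]
      have : η * u - u = (η - 1) * u := by ring
      rw [this]
      exact hu
    · simp only [hddef, hx0def, if_neg hii]
      simpa using zero_mem Λ
  have hcl := hsm x g hgG hgfix
  have hmp0 : 0 < m / p := Nat.div_pos (Nat.le_of_dvd (by omega) hp) (by omega)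
  set e1 : Vn n := Pi.single i0 1 with he1def
  -- the invariant subgroup property
  have key : ∀ h ∈ Subgroup.closure {h : Vn n ≃ₗ[ℂ] Vn n |
      h ∈ Gmpn ζ p ∧ FixesPt L0 h x ∧ IsPseudoreflection h},
      ∃ c : ℂ, c ≠ 0 ∧ c ^ (m / p) = 1 ∧ h e1 = c • e1 := by
    intro h hh
    refine Subgroup.closure_induction ?_ ?_ ?_ ?_ hh
    · -- generators
      intro f hf
      obtain ⟨⟨π, a, hsum, hform⟩, hfix, hrefl⟩ := hf
      -- Step A: the permutation fixes the first coordinate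
      have hπ0 : π i0 = i0 := by
        by_contra hne
        obtain ⟨v, hv1, hv2⟩ := hfix
        rw [hxdef] at hv1
        obtain ⟨z, hz, hvz⟩ := (QuotientAddGroup.mk'_eq_mk' L0).mp hv1
        have hzc : ∀ i : Fin n, z i ∈ Λ := by
          rw [hL0def, AddSubgroup.mem_pi] at hz
          exact fun i => hz i trivial
        set j : Fin n := π i0 with hjdef
        have hj : j ≠ i0 := hne
        have h2 : (f v - v) j ∈ Λ := by
          rw [hL0def, AddSubgroup.mem_pi] at hv2
          exact hv2 j trivial
        have hπinvj : π⁻¹ j = i0 := Equiv.Perm.inv_eq_iff_eq.mpr rfl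
        have h3 : (f v - v) j = ζ ^ (a j) * v i0 - v j := by
          rw [Pi.sub_apply, hform, hπinvj]
        have e1' : v i0 + z i0 = u := by
          have := congrFun hvz i0
          simpa [hx0def] using this
        have e2' : v j + z j = 0 := by
          have := congrFun hvz j
          simpa [hx0def, hj] using this
        have e : ζ ^ (a j) * u = ((f v - v) j) + ζ ^ (a j) * (z i0) - z j := by
          rw [h3]
          linear_combination -(ζ ^ (a j)) * e1' + e2'
        have hmem : ζ ^ (a j) * u ∈ Λ := by
          rw [e]
          exact sub_mem (add_mem h2 (hΛpow _ _ (hzc i0))) (hzc j)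
        exact huΛ (hΛpow' _ _ hmem)
      have hπ0' : π⁻¹ i0 = i0 := Equiv.Perm.inv_eq_iff_eq.mpr hπ0.symm
      have hππ : ∀ i : Fin n, i ≠ i0 → π⁻¹ i ≠ i0 := by
        intro i hii hcc
        apply hii
        rw [Equiv.Perm.inv_eq_iff_eq] at hcc
        rw [hcc, hπ0]
      -- f acts on e1 by the scalar ζ ^ (a i0)
      have hfe1 : f e1 = (ζ ^ (a i0)) • e1 := by
        funext i
        rw [Pi.smul_apply, smul_eq_mul, hform]
        by_cases hii : i = i0
        · subst hii
          rw [hπ0']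
        · rw [he1def, Pi.single_apply, Pi.single_apply,
            if_neg (fun hc => hii hc), if_neg (fun hc => hππ i hii hc)]
          ring
      refine ⟨ζ ^ (a i0), pow_ne_zero _ hζ0, ?_, hfe1⟩
      by_cases hone : ζ ^ (a i0) = 1
      · rw [hone, one_pow]
      -- rank-1 structure analysis
      set L : Vn n →ₗ[ℂ] Vn n := (1 : Vn n →ₗ[ℂ] Vn n) - (f : Vn n →ₗ[ℂ] Vn n) with hLdef
      have hLapp : ∀ (v : Vn n) (i : Fin n), L v i = v i - ζ ^ (a i) * v (π⁻¹ i) := by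
        intro v i
        rw [hLdef]
        simp only [LinearMap.sub_apply, Module.End.one_apply, Pi.sub_apply,
          LinearEquiv.coe_coe]
        rw [hform]
      have hw0 : ∀ i : Fin n, L e1 i = (1 - ζ ^ (a i0)) * e1 i := by
        intro i
        rw [hLapp]
        by_cases hii : i = i0
        · subst hii
          rw [hπ0']
          ring
        · rw [he1def, Pi.single_apply, Pi.single_apply,
            if_neg (fun hc => hii hc), if_neg (fun hc => hππ i hii hc)]
          ring
      have he1i0 : e1 i0 = 1 := by simp [he1def]
      have hkey : ∀ j : Fin n, j ≠ i0 → L (Pi.single j 1) = 0 := by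
        intro j hj
        by_contra hw1
        have hw1i0 : L (Pi.single j 1) i0 = 0 := by
          rw [hLapp, hπ0', Pi.single_apply, if_neg (Ne.symm hj)]
          ring
        have hli : LinearIndependent ℂ ![L e1, L (Pi.single j 1)] := by
          rw [LinearIndependent.pair_iff]
          intro s t hst
          have hst0 := congrFun hst i0
          simp only [Pi.add_apply, Pi.smul_apply, smul_eq_mul, Pi.zero_apply] at hst0
          rw [hw0 i0, he1i0, hw1i0] at hst0
          have hs : s = 0 := by
            have hne1 : (1 : ℂ) - ζ ^ (a i0) ≠ 0 := sub_ne_zero.mpr (Ne.symm hone)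
            have : s * ((1 - ζ ^ (a i0)) * 1) = 0 := by linear_combination hst0
            rcases mul_eq_zero.mp this with h | h
            · exact h
            · exact absurd (by linear_combination h) hne1
          refine ⟨hs, ?_⟩
          rw [hs] at hst
          simp only [zero_smul, zero_add] at hst
          rcases smul_eq_zero.mp hst with h | h
          · exact h
          · exact absurd h hw1
        have hmem0 : L e1 ∈ LinearMap.range L := ⟨e1, rfl⟩
        have hmem1 : L (Pi.single j 1) ∈ LinearMap.range L := ⟨_, rfl⟩
        set vv : Fin 2 → LinearMap.range L :=
          ![⟨L e1, hmem0⟩, ⟨L (Pi.single j 1), hmem1⟩] with hvvdef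
        have hcomp : (LinearMap.range L).subtype ∘ vv = ![L e1, L (Pi.single j 1)] := by
          funext k
          fin_cases k <;> rfl
        have hlis : LinearIndependent ℂ vv :=
          LinearIndependent.of_comp ((LinearMap.range L).subtype) (by rw [hcomp]; exact hli)
        have hcard := hlis.fintype_card_le_finrank
        rw [hrefl] at hcard
        simp at hcard
      -- all other coordinates carry trivial multiplier
      have hstr : ∀ j : Fin n, j ≠ i0 → ζ ^ (a j) = 1 := by
        intro j hj
        have hLj := congrFun (hkey j hj) j
        rw [hLapp] at hLj
        by_cases hπj : π⁻¹ j = j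
        · rw [hπj, Pi.single_apply, if_pos rfl, Pi.zero_apply] at hLj
          linear_combination -hLj
        · exfalso
          rw [Pi.single_apply, Pi.single_apply, if_pos rfl, if_neg hπj, Pi.zero_apply] at hLj
          norm_num at hLj
      have hmdvd : ∀ j : Fin n, j ≠ i0 → m ∣ a j :=
        fun j hj => (hζ.pow_eq_one_iff_dvd _).mp (hstr j hj)
      have hpai0 : p ∣ a i0 := by
        have hsplit : a i0 + ∑ j ∈ Finset.univ.erase i0, a j = ∑ j, a j :=
          Finset.add_sum_erase _ _ (Finset.mem_univ i0)
        have hrest : p ∣ ∑ j ∈ Finset.univ.erase i0, a j :=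
          Finset.dvd_sum fun j hj => dvd_trans hp (hmdvd j (Finset.ne_of_mem_erase hj))
        have htot : p ∣ a i0 + ∑ j ∈ Finset.univ.erase i0, a j := by
          rw [hsplit]; exact hsum
        exact (Nat.dvd_add_right hrest).mp (by rwa [Nat.add_comm] at htot)
      obtain ⟨k, hk⟩ := hpai0
      rw [hk, ← pow_mul]
      refine (hζ.pow_eq_one_iff_dvd _).mpr ⟨k, ?_⟩
      have hmm2 : m = p * (m / p) := (Nat.mul_div_cancel' hp).symm
      calc p * k * (m / p) = p * (m / p) * k := by ring
        _ = m * k := by rw [← hmm2]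
    · refine ⟨1, one_ne_zero, one_pow _, ?_⟩
      rw [one_smul]
      rfl
    · rintro f1 f2 - - ⟨c1, hc10, hc1p, hc1e⟩ ⟨c2, hc20, hc2p, hc2e⟩
      refine ⟨c1 * c2, mul_ne_zero hc10 hc20, by rw [mul_pow, hc1p, hc2p, one_mul], ?_⟩
      have : (f1 * f2) e1 = f1 (f2 e1) := rfl
      rw [this, hc2e, map_smul, hc1e, smul_smul, mul_comm]
    · rintro f - ⟨c, hc0, hcp, hce⟩
      refine ⟨c⁻¹, inv_ne_zero hc0, by rw [inv_pow, hcp, inv_one], ?_⟩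
      have h1 : f⁻¹ (f e1) = e1 := by
        exact f.symm_apply_apply e1
      rw [hce, map_smul] at h1
      exact ((inv_smul_eq_iff₀ hc0).mpr h1.symm).symm
  obtain ⟨c, hc0, hcp, hce⟩ := key g hcl
  have hceval := congrFun hce i0
  have hgL : g e1 i0 = η := by
    rw [hgapp]
    simp [hddef, he1def]
  have hcR : (c • e1) i0 = c := by
    simp [he1def]
  rw [hgL, hcR] at hceval
  -- η ^ (m/p) = 1 forces p ∣ b
  have hpow1 : η ^ (m / p) = 1 := by
    rw [hceval]; exact hcp
  have hpow2 : ζ ^ (b * (m / p)) = 1 := by rw [pow_mul]; exact hpow1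
  have hdvd : m ∣ b * (m / p) := (hζ.pow_eq_one_iff_dvd (b * (m / p))).mp hpow2
  obtain ⟨k, hk⟩ := hdvd
  have hmm : m = p * (m / p) := (Nat.mul_div_cancel' hp).symm
  have heq2 : b * (m / p) = (p * k) * (m / p) := by
    calc b * (m / p) = m * k := hk
      _ = p * (m / p) * k := by rw [← hmm]
      _ = (p * k) * (m / p) := by ring
  have hb2 : b = p * k := Nat.eq_of_mul_eq_mul_right hmp0 heq2
  exact hbp ⟨k, hb2⟩
end
end

section
/- Let E be an elliptic curve, n ≥ 1, m ∈ {2,3,4,6} with ζ_m acting on E, and let G = G(m,1,n) = μ_m^n ⋊ S_n act on E^n by coordinatewise multiplication by roots of unity and permutation of coordinates. Then for every point x ∈ E^n, the stabilizer Stab_G(x) is generated by pseudoreflections; consequently E^n/G is smooth. -/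
noncomputable section

namespace CST

open Equiv

variable {n m : ℕ} {ζ : ℂ}

/-- monomial linear map -/
def mf (ζ : ℂ) (π : Equiv.Perm (Fin n)) (a : Fin n → ℕ) : Vn n →ₗ[ℂ] Vn n where
  toFun v := fun i => ζ ^ a i * v (π⁻¹ i)
  map_add' v w := by funext i; simp [mul_add]
  map_smul' c v := by funext i; simp [smul_eq_mul]; ring

theorem pow_cancel (hm : m ≠ 0) (hζ : ζ ^ m = 1) (t : ℕ) :
    ζ ^ ((m - 1) * t) * ζ ^ t = 1 := by
  obtain ⟨m', rfl⟩ := Nat.exists_eq_succ_of_ne_zero hm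
  rw [← pow_add]
  have h : (m' + 1 - 1) * t + t = (m' + 1) * t := by simp [Nat.succ_mul]
  rw [h, pow_mul, hζ, one_pow]

theorem pow_cancel' (hm : m ≠ 0) (hζ : ζ ^ m = 1) (t : ℕ) :
    ζ ^ t * ζ ^ ((m - 1) * t) = 1 := by rw [mul_comm]; exact pow_cancel hm hζ t

/-- the monomial transformation as a linear equivalence. -/
def Mq (hm : m ≠ 0) (hζ : ζ ^ m = 1) (π : Equiv.Perm (Fin n)) (a : Fin n → ℕ) :
    Vn n ≃ₗ[ℂ] Vn n :=
  { mf ζ π a with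
    invFun := fun v => mf ζ π⁻¹ (fun i => (m - 1) * a (π i)) v
    left_inv := by
      intro v; funext i
      show ζ ^ ((m - 1) * a (π i)) * (ζ ^ a ((π⁻¹)⁻¹ i) * v (π⁻¹ ((π⁻¹)⁻¹ i))) = v i
      simp only [inv_inv, Equiv.Perm.inv_def, Equiv.symm_symm, Equiv.symm_apply_apply]
      rw [← mul_assoc, pow_cancel hm hζ, one_mul]
    right_inv := by
      intro v; funext i
      show ζ ^ a i * (ζ ^ ((m - 1) * a (π (π⁻¹ i))) * v ((π⁻¹)⁻¹ (π⁻¹ i))) = v i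
      simp only [inv_inv, Equiv.Perm.inv_def, Equiv.symm_symm, Equiv.apply_symm_apply, Equiv.symm_apply_apply]
      rw [← mul_assoc, pow_cancel' hm hζ, one_mul] }

@[simp] theorem Mq_apply (hm : m ≠ 0) (hζ : ζ ^ m = 1) (π : Equiv.Perm (Fin n))
    (a : Fin n → ℕ) (v : Vn n) (i : Fin n) :
    Mq hm hζ π a v i = ζ ^ a i * v (π⁻¹ i) := rfl

theorem Mq_mem (hm : m ≠ 0) (hζ : ζ ^ m = 1) (π : Equiv.Perm (Fin n)) (a : Fin n → ℕ) :
    Mq hm hζ π a ∈ Gmpn ζ 1 :=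
  ⟨π, a, one_dvd _, fun _ _ => rfl⟩

theorem Mq_mul (hm : m ≠ 0) (hζ : ζ ^ m = 1) (π σ : Equiv.Perm (Fin n)) (a b : Fin n → ℕ) :
    Mq hm hζ π a * Mq hm hζ σ b = Mq hm hζ (π * σ) (fun i => a i + b (π⁻¹ i)) := by
  apply LinearEquiv.toLinearMap_injective
  apply LinearMap.ext; intro v
  funext i
  show ζ ^ a i * (ζ ^ b (π⁻¹ i) * v (σ⁻¹ (π⁻¹ i))) = ζ ^ (a i + b (π⁻¹ i)) * v ((π * σ)⁻¹ i)
  rw [mul_inv_rev, Equiv.Perm.mul_apply, pow_add]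
  ring

theorem Mq_congr (hm : m ≠ 0) (hζ : ζ ^ m = 1) (π : Equiv.Perm (Fin n)) {a b : Fin n → ℕ}
    (h : ∀ i, ζ ^ a i = ζ ^ b i) : Mq hm hζ π a = Mq hm hζ π b := by
  apply LinearEquiv.toLinearMap_injective
  apply LinearMap.ext; intro v
  funext i
  show ζ ^ a i * v (π⁻¹ i) = ζ ^ b i * v (π⁻¹ i)
  rw [h i]

theorem Mq_one (hm : m ≠ 0) (hζ : ζ ^ m = 1) {a : Fin n → ℕ}
    (h : ∀ i, ζ ^ a i = 1) : Mq hm hζ 1 a = 1 := by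
  apply LinearEquiv.toLinearMap_injective
  apply LinearMap.ext; intro v
  funext i
  show ζ ^ a i * v ((1 : Equiv.Perm (Fin n))⁻¹ i) = v i
  rw [h i, one_mul]; rfl

theorem Mq_inv (hm : m ≠ 0) (hζ : ζ ^ m = 1) (π : Equiv.Perm (Fin n)) (a : Fin n → ℕ) :
    (Mq hm hζ π a)⁻¹ = Mq hm hζ π⁻¹ (fun i => (m - 1) * a (π i)) := by
  apply inv_eq_of_mul_eq_one_right
  rw [Mq_mul, mul_inv_cancel]
  apply Mq_one
  intro i
  simp only [Equiv.Perm.inv_def, Equiv.apply_symm_apply]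
  rw [pow_add, pow_cancel' hm hζ]

end CST

namespace CST2

open Equiv CST

variable {n m : ℕ} {ζ : ℂ} {Λ : AddSubgroup ℂ}

theorem pow_mem (hcm : ∀ v ∈ Λ, ζ * v ∈ Λ) (t : ℕ) {x : ℂ} (hx : x ∈ Λ) :
    ζ ^ t * x ∈ Λ := by
  induction t with
  | zero => simpa using hx
  | succ k ih =>
    have h : ζ ^ (k + 1) * x = ζ * (ζ ^ k * x) := by ring
    rw [h]; exact hcm _ ih

theorem mem_Ln {w : Vn n} :
    w ∈ (AddSubgroup.pi Set.univ fun _ : Fin n => Λ) ↔ ∀ i, w i ∈ Λ := by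
  simp [AddSubgroup.mem_pi]

theorem Mq_pres (hm : m ≠ 0) (hζ : ζ ^ m = 1) (hcm : ∀ v ∈ Λ, ζ * v ∈ Λ)
    (π : Equiv.Perm (Fin n)) (a : Fin n → ℕ) {w : Vn n}
    (hw : w ∈ (AddSubgroup.pi Set.univ fun _ : Fin n => Λ)) :
    Mq hm hζ π a w ∈ (AddSubgroup.pi Set.univ fun _ : Fin n => Λ) := by
  rw [mem_Ln] at hw ⊢
  intro i
  rw [Mq_apply]
  exact pow_mem hcm _ (hw _)

theorem rank_one_of (g : Vn n →ₗ[ℂ] Vn n) (w : Vn n) (hw : w ≠ 0)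
    (h1 : ∀ v, ∃ c : ℂ, g v = c • w) (h2 : w ∈ LinearMap.range g) :
    Module.finrank ℂ (LinearMap.range g) = 1 := by
  have hr : LinearMap.range g = Submodule.span ℂ {w} := by
    apply le_antisymm
    · rintro x ⟨v, rfl⟩
      obtain ⟨c, hc⟩ := h1 v
      rw [hc]
      exact Submodule.smul_mem _ _ (Submodule.mem_span_singleton_self w)
    · rw [Submodule.span_singleton_le_iff_mem]; exact h2
  rw [hr]; exact finrank_span_singleton hw

/-- exponent vector of a diagonal reflection -/
def dfun (i : Fin n) (c : ℕ) : Fin n → ℕ := fun k => if k = i then c else 0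

theorem diag_formula (hm : m ≠ 0) (hζ : ζ ^ m = 1) (i : Fin n) (c : ℕ) (v : Vn n) :
    ((1 : Vn n →ₗ[ℂ] Vn n) - (Mq hm hζ 1 (dfun i c) : Vn n →ₗ[ℂ] Vn n)) v
      = v i • (Pi.single i (1 - ζ ^ c) : Vn n) := by
  funext j
  simp only [LinearMap.sub_apply, Module.End.one_apply, Pi.sub_apply, LinearEquiv.coe_coe,
    Mq_apply, Pi.smul_apply, Pi.single_apply, smul_eq_mul, dfun, inv_one,
    Equiv.Perm.one_apply]
  by_cases h : j = i
  · subst h; simp; ring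
  · simp [h, Ne.symm h]

theorem diag_pr (hm : m ≠ 0) (hζ : ζ ^ m = 1) (i : Fin n) (c : ℕ) (hc : ζ ^ c ≠ 1) :
    IsPseudoreflection (Mq hm hζ 1 (dfun i c)) := by
  apply rank_one_of _ (Pi.single i (1 - ζ ^ c))
  · intro h0
    apply hc
    have h1 := congrFun h0 i
    simp only [Pi.single_eq_same, Pi.zero_apply, sub_eq_zero] at h1
    exact h1.symm
  · intro v; exact ⟨v i, diag_formula hm hζ i c v⟩
  · exact ⟨Pi.single i 1, by rw [diag_formula]; simp⟩

/-- exponent vector of a transposition-type reflection -/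
def sfun (i j : Fin n) (bi bj : ℕ) : Fin n → ℕ :=
  fun k => if k = i then bi else if k = j then bj else 0

theorem swap_formula (hm : m ≠ 0) (hζ : ζ ^ m = 1) {i j : Fin n} (hij : i ≠ j)
    (bi bj : ℕ) (hb : ζ ^ bi * ζ ^ bj = 1) (v : Vn n) :
    ((1 : Vn n →ₗ[ℂ] Vn n) - (Mq hm hζ (Equiv.swap i j) (sfun i j bi bj) : Vn n →ₗ[ℂ] Vn n)) v
      = (v i - ζ ^ bi * v j) • ((Pi.single i 1 : Vn n) - ζ ^ bj • (Pi.single j 1 : Vn n)) := by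
  funext k
  simp only [LinearMap.sub_apply, Module.End.one_apply, Pi.sub_apply, LinearEquiv.coe_coe,
    Mq_apply, Pi.smul_apply, Pi.single_apply, smul_eq_mul, sfun, Equiv.swap_inv]
  by_cases hk : k = i
  · subst hk
    simp [Equiv.swap_apply_left, hij, Ne.symm hij]
  · by_cases hk' : k = j
    · subst hk'
      rw [Equiv.swap_apply_right]
      simp only [if_neg hk, if_pos rfl, if_neg (Ne.symm hij), if_true]
      linear_combination (-(v k)) * hb
    · simp [hk, hk', Equiv.swap_apply_of_ne_of_ne hk hk']

end CST2

namespace CST2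

open Equiv CST

variable {n m : ℕ} {ζ : ℂ} {Λ : AddSubgroup ℂ}

theorem swap_pr (hm : m ≠ 0) (hζ : ζ ^ m = 1) {i j : Fin n} (hij : i ≠ j)
    (bi bj : ℕ) (hb : ζ ^ bi * ζ ^ bj = 1) :
    IsPseudoreflection (Mq hm hζ (Equiv.swap i j) (sfun i j bi bj)) := by
  apply rank_one_of _ ((Pi.single i 1 : Vn n) - ζ ^ bj • (Pi.single j 1 : Vn n))
  · intro h0
    have h1 := congrFun h0 i
    simp [Pi.single_apply, Ne.symm hij] at h1
  · intro v
    exact ⟨v i - ζ ^ bi * v j, swap_formula hm hζ hij bi bj hb v⟩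
  · refine ⟨Pi.single i 1, ?_⟩
    rw [swap_formula hm hζ hij bi bj hb]
    simp [Pi.single_apply, Ne.symm hij]

theorem diag_closure (hm : m ≠ 0) (hζ : ζ ^ m = 1) (hcm : ∀ v ∈ Λ, ζ * v ∈ Λ) (v : Vn n) :
    ∀ (s : Finset (Fin n)) (a : Fin n → ℕ), (∀ i, a i ≠ 0 → i ∈ s) →
    (∀ i, ζ ^ a i * v i - v i ∈ Λ) →
    Mq hm hζ 1 a ∈ Subgroup.closure {h : Vn n ≃ₗ[ℂ] Vn n | h ∈ Gmpn ζ 1 ∧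
      FixesPt (AddSubgroup.pi Set.univ fun _ : Fin n => Λ) h
        (QuotientAddGroup.mk' (AddSubgroup.pi Set.univ fun _ : Fin n => Λ) v) ∧
      IsPseudoreflection h} := by
  intro s
  induction s using Finset.induction_on with
  | empty =>
    intro a ha hv
    have h1 : Mq hm hζ 1 a = 1 := Mq_one hm hζ (fun i => by
      have h0 : a i = 0 := by
        by_contra h
        exact absurd (ha i h) (Finset.notMem_empty i)
      rw [h0, pow_zero])
    rw [h1]; exact Subgroup.one_mem _
  | @insert i s hi ih =>
    intro a ha hv
    have key : Mq hm hζ 1 (dfun i (a i)) * Mq hm hζ 1 (Function.update a i 0)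
        = Mq hm hζ 1 a := by
      rw [Mq_mul, one_mul]
      apply Mq_congr
      intro k
      by_cases h : k = i
      · subst h; simp [dfun, Function.update_apply, Equiv.Perm.one_symm]
      · simp [dfun, Function.update_apply, h, Equiv.Perm.one_symm]
    rw [← key]
    apply mul_mem
    · by_cases hb : ζ ^ a i = 1
      · have h1 : Mq hm hζ 1 (dfun i (a i)) = 1 := Mq_one hm hζ (fun k => by
          by_cases h : k = i
          · subst h; simpa [dfun] using hb
          · simp [dfun, h])
        rw [h1]; exact Subgroup.one_mem _
      · apply Subgroup.subset_closure
        refine ⟨Mq_mem hm hζ _ _, ⟨v, rfl, ?_⟩, diag_pr hm hζ i (a i) hb⟩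
        rw [mem_Ln]
        intro k
        rw [Pi.sub_apply, Mq_apply]
        by_cases h : k = i
        · subst h; simpa [dfun] using hv k
        · simp [dfun, h]
    · apply ih
      · intro k hk
        have hki : k ≠ i := by
          intro h; subst h; simp [Function.update_self] at hk
        have := ha k (by rwa [Function.update_of_ne hki] at hk)
        exact (Finset.mem_insert.mp this).resolve_left hki
      · intro k
        by_cases h : k = i
        · subst h; simp
        · rw [Function.update_of_ne h]; exact hv k

end CST2

namespace CST2

open Equiv CST

variable {n m : ℕ} {ζ : ℂ} {Λ : AddSubgroup ℂ}

theorem key_closure (hm : m ≠ 0) (hζ : ζ ^ m = 1) (hcm : ∀ v ∈ Λ, ζ * v ∈ Λ) (v : Vn n) :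
    ∀ (N : ℕ) (π : Equiv.Perm (Fin n)) (a : Fin n → ℕ), π.support.card ≤ N →
    (∀ i, ζ ^ a i * v (π⁻¹ i) - v i ∈ Λ) →
    Mq hm hζ π a ∈ Subgroup.closure {h : Vn n ≃ₗ[ℂ] Vn n | h ∈ Gmpn ζ 1 ∧
      FixesPt (AddSubgroup.pi Set.univ fun _ : Fin n => Λ) h
        (QuotientAddGroup.mk' (AddSubgroup.pi Set.univ fun _ : Fin n => Λ) v) ∧
      IsPseudoreflection h} := by
  intro N
  induction N with
  | zero =>
    intro π a hcard hv
    have hπ : π = 1 := by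
      rw [← Equiv.Perm.support_eq_empty_iff]
      exact Finset.card_eq_zero.mp (Nat.le_zero.mp hcard)
    subst hπ
    exact diag_closure hm hζ hcm v Finset.univ a (fun _ _ => Finset.mem_univ _)
      (fun i => by simpa using hv i)
  | succ N ih =>
    intro π a hcard hv
    by_cases hπ : π = 1
    · subst hπ
      exact diag_closure hm hζ hcm v Finset.univ a (fun _ _ => Finset.mem_univ _)
        (fun i => by simpa using hv i)
    · have hj : ∃ j, π j ≠ j := by
        by_contra h
        push_neg at h
        exact hπ (Equiv.ext h)
      obtain ⟨j, hj⟩ := hj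
      have hij : π j ≠ j := hj
      set i := π j with hi
      have hijne : i ≠ j := hij
      have hb : ζ ^ a i * ζ ^ ((m - 1) * a i) = 1 := pow_cancel' hm hζ (a i)
      -- the reflection r
      set b : Fin n → ℕ := sfun i j (a i) ((m - 1) * a i) with hbdef
      set r : Vn n ≃ₗ[ℂ] Vn n := Mq hm hζ (Equiv.swap i j) b with hrdef
      -- the remaining element
      set π' : Equiv.Perm (Fin n) := Equiv.swap i j * π with hπ'def
      set a' : Fin n → ℕ :=
        fun k => a (Equiv.swap i j k) + (m - 1) * b (Equiv.swap i j k) with ha'def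
      have hfact : r * Mq hm hζ π' a' = Mq hm hζ π a := by
        rw [hrdef, Mq_mul]
        have hperm : Equiv.swap i j * π' = π := by
          rw [hπ'def, ← mul_assoc, Equiv.swap_mul_self, one_mul]
        rw [hperm]
        apply Mq_congr
        intro k
        rw [Equiv.swap_inv]
        rw [ha'def]
        simp only [Equiv.swap_apply_self]
        rw [pow_add, pow_add, ← mul_assoc]
        rw [mul_comm (ζ ^ b k) (ζ ^ a k), mul_assoc, pow_cancel' hm hζ (b k), mul_one]
      -- r fixes the point
      have hrv : ∀ t, r v t - v t ∈ Λ := by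
        intro t
        rw [hrdef, Mq_apply, Equiv.swap_inv]
        by_cases hk : t = i
        · subst hk
          rw [Equiv.swap_apply_left]
          have h0 : b i = a i := by simp [hbdef, sfun]
          rw [h0]
          have h1 : π⁻¹ i = j := by rw [hi, Equiv.Perm.inv_def, Equiv.symm_apply_apply]
          have := hv i
          rwa [h1] at this
        · by_cases hk' : t = j
          · rw [hk']
            rw [Equiv.swap_apply_right]
            have h0 : b j = (m - 1) * a i := by simp [hbdef, sfun, Ne.symm hijne]
            rw [h0]
            have h1 : π⁻¹ i = j := by rw [hi, Equiv.Perm.inv_def, Equiv.symm_apply_apply]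
            have h2 : ζ ^ a i * v j - v i ∈ Λ := by have := hv i; rwa [h1] at this
            have h3 : v i - ζ ^ a i * v j ∈ Λ := by
              have := neg_mem h2; rwa [neg_sub] at this
            have h4 := pow_mem hcm ((m - 1) * a i) h3
            have h5 : ζ ^ ((m - 1) * a i) * (v i - ζ ^ a i * v j)
                = ζ ^ ((m - 1) * a i) * v i - v j := by
              linear_combination (-(v j)) * hb
            rwa [h5] at h4
          · rw [Equiv.swap_apply_of_ne_of_ne hk hk']
            have h0 : b t = 0 := by simp [hbdef, sfun, hk, hk']
            rw [h0, pow_zero, one_mul, sub_self]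
            exact zero_mem Λ
      have hrvmem : r v - v ∈ (AddSubgroup.pi Set.univ fun _ : Fin n => Λ) := by
        rw [mem_Ln]; intro k; rw [Pi.sub_apply]; exact hrv k
      have hgvmem : Mq hm hζ π a v - v ∈ (AddSubgroup.pi Set.univ fun _ : Fin n => Λ) := by
        rw [mem_Ln]; intro k; rw [Pi.sub_apply, Mq_apply]; exact hv k
      -- the remaining element fixes the point
      have hrg : Mq hm hζ π' a' = r⁻¹ * Mq hm hζ π a := by
        rw [← hfact, inv_mul_cancel_left]
      have e1 : Mq hm hζ π' a' v = r⁻¹ (Mq hm hζ π a v) := by rw [hrg]; rfl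
      have e2 : (r⁻¹ : Vn n ≃ₗ[ℂ] Vn n) (r v) = v := by
        have : (r⁻¹ : Vn n ≃ₗ[ℂ] Vn n) (r v) = (r⁻¹ * r) v := rfl
        rw [this, inv_mul_cancel]; rfl
      have e3 : Mq hm hζ π' a' v - v
          = (r⁻¹ : Vn n ≃ₗ[ℂ] Vn n) (Mq hm hζ π a v - v)
            - (r⁻¹ : Vn n ≃ₗ[ℂ] Vn n) (r v - v) := by
        rw [e1, map_sub, map_sub, e2]
        abel
      have hg'mem : Mq hm hζ π' a' v - v ∈ (AddSubgroup.pi Set.univ fun _ : Fin n => Λ) := by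
        rw [e3]
        apply sub_mem
        · rw [Mq_inv]; exact Mq_pres hm hζ hcm _ _ hgvmem
        · rw [Mq_inv]; exact Mq_pres hm hζ hcm _ _ hrvmem
      have hv' : ∀ k, ζ ^ a' k * v (π'⁻¹ k) - v k ∈ Λ := by
        intro k
        have := (mem_Ln.mp hg'mem) k
        rwa [Pi.sub_apply, Mq_apply] at this
      -- support decreases
      have hcard' : π'.support.card ≤ N := by
        have h0 : π' = Equiv.swap j (π j) * π := by
          rw [hπ'def, ← hi, Equiv.swap_comm]
        have h1 := Equiv.Perm.card_support_swap_mul hj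
        rw [← h0] at h1
        omega
      -- conclude
      rw [← hfact]
      apply mul_mem
      · apply Subgroup.subset_closure
        refine ⟨Mq_mem hm hζ _ _, ⟨v, rfl, hrvmem⟩, ?_⟩
        rw [hrdef, hbdef]
        exact swap_pr hm hζ hijne (a i) ((m - 1) * a i) hb
      · exact ih π' a' hcard' hv'

end CST2

/-- Let `E = ℂ ⧸ Λ` be an elliptic curve, `n ≥ 1`, `m ∈ {2,3,4,6}` with a
primitive `m`-th root of unity `ζ` acting on `E`, and let `G = G(m,1,n) = μₘⁿ ⋊ Sₙ` act on
`Eⁿ` by coordinatewise multiplication by `m`-th roots of unity and permutation of the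
coordinates.  Then for every point `x ∈ Eⁿ` the stabilizer of `x` in `G` is generated by
pseudoreflections; consequently (Chevalley–Shephard–Todd) `Eⁿ/G` is smooth. -/
theorem Gm1n_quotient_smooth {n m : ℕ} (hn : 1 ≤ n)
    (hm : m ∈ ({2, 3, 4, 6} : Set ℕ))
    (ζ : ℂ) (hζ : IsPrimitiveRoot ζ m)
    (Λ : AddSubgroup ℂ) (hdisc : DiscreteTopology Λ)
    (hspan : Submodule.span ℝ (Λ : Set ℂ) = ⊤)
    (hcm : ∀ v ∈ Λ, ζ * v ∈ Λ) :
    SmoothQuotient (AddSubgroup.pi Set.univ fun _ : Fin n => Λ) (Gmpn ζ 1) := by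
  intro x g hg hfix
  have hm0 : m ≠ 0 := by
    simp only [Set.mem_insert_iff, Set.mem_singleton_iff] at hm
    rcases hm with rfl | rfl | rfl | rfl <;> norm_num
  have hζ1 : ζ ^ m = 1 := hζ.pow_eq_one
  obtain ⟨π, a, -, hga⟩ := hg
  obtain ⟨v, hvx, hgv⟩ := hfix
  subst hvx
  have hgM : g = CST.Mq hm0 hζ1 π a := by
    apply LinearEquiv.toLinearMap_injective
    apply LinearMap.ext
    intro w
    funext i
    exact hga w i
  rw [hgM]
  apply CST2.key_closure hm0 hζ1 hcm v π.support.card π a le_rfl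
  intro i
  have h := (CST2.mem_Ln.mp hgv) i
  rwa [Pi.sub_apply, hga] at h
end
end

section
/- Let E be an elliptic curve and let A = {(x_1,…,x_{n+1}) ∈ E^{n+1} : x_1 + ⋯ + x_{n+1} = 0}, with the symmetric group S_{n+1} acting by permuting coordinates. Then for every point x ∈ A, the stabilizer Stab_{S_{n+1}}(x) is generated by transpositions fixing x; consequently A/S_{n+1} is smooth. -/
noncomputable section

lemma perm_fix_mem_closure {α β : Type*} [DecidableEq α] [Fintype α] (f : α → β) :
    ∀ π : Equiv.Perm α, (∀ i, f (π i) = f i) →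
      π ∈ Subgroup.closure
        {τ : Equiv.Perm α | ∃ a b, a ≠ b ∧ f a = f b ∧ τ = Equiv.swap a b} := by
  suffices H : ∀ m (π : Equiv.Perm α), π.support.card = m → (∀ i, f (π i) = f i) →
      π ∈ Subgroup.closure
        {τ : Equiv.Perm α | ∃ a b, a ≠ b ∧ f a = f b ∧ τ = Equiv.swap a b} by
    exact fun π => H _ π rfl
  intro m
  induction m using Nat.strong_induction_on with
  | _ m ih =>
    intro π hn hf
    rcases eq_or_ne π 1 with rfl | hπ
    · exact Subgroup.one_mem _
    · obtain ⟨i, hi⟩ : ∃ i, π i ≠ i := by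
        by_contra h
        push_neg at h
        exact hπ (Equiv.ext h)
      set τ := Equiv.swap i (π i) with hτ
      have hmem : τ ∈ {τ : Equiv.Perm α | ∃ a b, a ≠ b ∧ f a = f b ∧ τ = Equiv.swap a b} :=
        ⟨i, π i, Ne.symm hi, (hf i).symm, rfl⟩
      have hτf : ∀ k, f (τ k) = f k := by
        intro k
        rcases eq_or_ne k i with rfl | hk1
        · simpa [hτ] using hf k
        rcases eq_or_ne k (π i) with rfl | hk2
        · simpa [hτ, Equiv.swap_apply_right] using (hf i).symm
        · simp [hτ, Equiv.swap_apply_of_ne_of_ne hk1 hk2]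
      have hcard : (τ * π).support.card < m := by
        subst hn
        exact Equiv.Perm.card_support_swap_mul hi
      have htpf : ∀ k, f ((τ * π) k) = f k := by
        intro k
        simp only [Equiv.Perm.mul_apply]
        rw [hτf, hf]
      have h1 : τ * π ∈ Subgroup.closure
          {τ : Equiv.Perm α | ∃ a b, a ≠ b ∧ f a = f b ∧ τ = Equiv.swap a b} :=
        ih _ hcard _ rfl htpf
      have : π = τ * (τ * π) := by
        rw [← mul_assoc, hτ, Equiv.swap_mul_self, one_mul]
      rw [this]
      exact Subgroup.mul_mem _ (Subgroup.subset_closure hmem) h1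


/-- Let `E = ℂ ⧸ Λ` be an elliptic curve and let
`A = {(x₁, …, x_{n+1}) ∈ E^{n+1} : x₁ + ⋯ + x_{n+1} = 0}`, with the symmetric group
`S_{n+1}` acting by permuting the coordinates.  Then for every point `x ∈ A` the stabilizer
of `x` in `S_{n+1}` is generated by the transpositions fixing `x`; consequently
(Chevalley–Shephard–Todd) `A/S_{n+1}` is smooth.
Here `E^{n+1} = (Fin (n+1) → ℂ) ⧸ Λ^{n+1}`, a permutation `π` fixes `x` when some (hence
any) representative `v` of `x` satisfies `v ∘ π⁻¹ ≡ v mod Λ^{n+1}`, and `A` is the kernel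
of the sum map `E^{n+1} → E`. -/
theorem stabilizer_generated_by_transpositions {n : ℕ}
    (Λ : AddSubgroup ℂ) (hdisc : DiscreteTopology Λ)
    (hspan : Submodule.span ℝ (Λ : Set ℂ) = ⊤) :
    ∀ x : (Fin (n + 1) → ℂ) ⧸ (AddSubgroup.pi Set.univ fun _ : Fin (n + 1) => Λ),
      x ∈ (QuotientAddGroup.map (AddSubgroup.pi Set.univ fun _ : Fin (n + 1) => Λ) Λ
          (∑ i : Fin (n + 1), Pi.evalAddMonoidHom (fun _ : Fin (n + 1) => ℂ) i)
          (fun v hv => by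
            simpa using AddSubgroup.sum_mem Λ
              (fun i _ => hv i (Set.mem_univ i)))).ker →
      ∀ π : Equiv.Perm (Fin (n + 1)),
        (∃ v : Fin (n + 1) → ℂ,
            QuotientAddGroup.mk' (AddSubgroup.pi Set.univ fun _ : Fin (n + 1) => Λ) v = x ∧
            (fun i => v (π⁻¹ i)) - v ∈ (AddSubgroup.pi Set.univ fun _ : Fin (n + 1) => Λ)) →
        π ∈ Subgroup.closure {τ : Equiv.Perm (Fin (n + 1)) | τ.IsSwap ∧
          ∃ v : Fin (n + 1) → ℂ,
            QuotientAddGroup.mk' (AddSubgroup.pi Set.univ fun _ : Fin (n + 1) => Λ) v = x ∧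
            (fun i => v (τ⁻¹ i)) - v ∈ (AddSubgroup.pi Set.univ fun _ : Fin (n + 1) => Λ)} := by
  rintro x _hx π ⟨v, hv, hπ⟩
  set f : Fin (n + 1) → ℂ ⧸ Λ := fun i => QuotientAddGroup.mk' Λ (v i) with hfdef
  have hmem : ∀ i, v (π⁻¹ i) - v i ∈ Λ := by
    intro i
    simpa using (AddSubgroup.mem_pi _).mp hπ i (Set.mem_univ i)
  have hf : ∀ i, f (π i) = f i := by
    intro i
    have := hmem (π i)
    simp only [Equiv.Perm.inv_def, Equiv.symm_apply_apply] at this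
    simp only [hfdef, QuotientAddGroup.mk'_apply]
    exact QuotientAddGroup.eq.mpr (by simpa [neg_add_eq_sub] using this)
  refine Subgroup.closure_mono ?_ (perm_fix_mem_closure f π hf)
  rintro τ ⟨a, b, hab, hfab, rfl⟩
  refine ⟨⟨a, b, hab, rfl⟩, v, hv, ?_⟩
  have hba : v b - v a ∈ Λ := by
    have := QuotientAddGroup.eq.mp (by simpa [hfdef, QuotientAddGroup.mk'_apply] using hfab)
    simpa [neg_add_eq_sub] using this
  rw [AddSubgroup.mem_pi]
  intro i _
  simp only [Pi.sub_apply, Equiv.swap_inv]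
  rcases eq_or_ne i a with rfl | h1
  · simpa [Equiv.swap_apply_left] using hba
  rcases eq_or_ne i b with rfl | h2
  · simpa [Equiv.swap_apply_right] using Λ.neg_mem hba
  · simp [Equiv.swap_apply_of_ne_of_ne h1 h2, Λ.zero_mem]
end
end

section
/- Let G = G(m,p,n) with m ≥ 2, n ≥ 3 act on an abelian variety A of dimension n with irreducible analytic representation as in Shephard–Todd. Let E_1 ⊆ A be the image of the coordinate line ℂe_1 under the exponential map. Then E_1 is an elliptic curve (i.e., an abelian subvariety of dimension 1), the element (ζ_m, ζ_m^{-1}, 1, …, 1) ∈ H induces an automorphism of E_1 of order m, and hence m ∈ {2,3,4,6}. -/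
noncomputable section

lemma crystallographic {m : ℕ} (hm : 2 ≤ m) {ζ : ℂ} (hζ : IsPrimitiveRoot ζ m)
    {A B : ℤ} (h : ζ ^ 2 = (A : ℂ) * ζ + (B : ℂ)) : m ∈ ({2, 3, 4, 6} : Set ℕ) := by
  have hm0 : m ≠ 0 := by omega
  have habs : ‖ζ‖ = 1 := hζ.norm'_eq_one hm0
  have hmconj : ζ * (starRingEnd ℂ) ζ = 1 := by
    rw [Complex.mul_conj]
    norm_cast
    rw [Complex.normSq_eq_norm_sq, habs, one_pow]
  by_cases h2 : m = 2
  · simp [h2]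
  have hm3 : 3 ≤ m := by omega
  have hsqne : ζ ^ 2 ≠ 1 := by
    intro h1
    have := Nat.le_of_dvd (by norm_num) (hζ.dvd_of_pow_eq_one 2 h1)
    omega
  have hne : ζ ≠ (starRingEnd ℂ) ζ := by
    intro he
    exact hsqne (by rw [sq]; nth_rewrite 2 [he]; exact hmconj)
  have hc : ((starRingEnd ℂ) ζ) ^ 2 = (A : ℂ) * (starRingEnd ℂ) ζ + (B : ℂ) := by
    have := congrArg (starRingEnd ℂ) h
    simpa using this
  have hsum : ζ + (starRingEnd ℂ) ζ = (A : ℂ) := by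
    have hdiff : (ζ - (starRingEnd ℂ) ζ) * (ζ + (starRingEnd ℂ) ζ - A) = 0 := by
      linear_combination h - hc
    rcases mul_eq_zero.mp hdiff with h' | h'
    · exact absurd (sub_eq_zero.mp h') hne
    · exact sub_eq_zero.mp h'
  have hquad : ζ ^ 2 = (A : ℂ) * ζ - 1 := by
    have h0 : (starRingEnd ℂ) ζ = (A : ℂ) - ζ := by linear_combination hsum
    have h1 : ζ * ((A : ℂ) - ζ) = 1 := by rw [← h0]; exact hmconj
    linear_combination -h1
  have hre : (A : ℝ) = 2 * ζ.re := by
    have := congrArg Complex.re hsum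
    simp [Complex.conj_re] at this
    linarith
  have hsq : ζ.re * ζ.re + ζ.im * ζ.im = 1 := by
    have h0 : Complex.normSq ζ = 1 := by
      rw [Complex.normSq_eq_norm_sq, habs]; norm_num
    rw [Complex.normSq_apply] at h0
    exact h0
  have hrelt : |ζ.re| < 1 := by
    rcases lt_or_eq_of_le (abs_le_one_iff_mul_self_le_one.mpr
      (by nlinarith [sq_nonneg ζ.im] : ζ.re * ζ.re ≤ 1)) with h' | h'
    · exact h'
    · exfalso
      have him : ζ.im = 0 := by nlinarith [abs_mul_abs_self ζ.re]
      have hzre : ζ = (ζ.re : ℂ) := Complex.ext rfl (by simp [him])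
      apply hsqne
      rw [hzre]
      have : ζ.re ^ 2 = 1 := by nlinarith [abs_mul_abs_self ζ.re]
      exact_mod_cast this
  have hA : A = -1 ∨ A = 0 ∨ A = 1 := by
    have h1 : |(A : ℝ)| < 2 := by rw [hre, abs_mul]; simp; linarith [abs_nonneg ζ.re]
    have h2 : |A| < 2 := by exact_mod_cast (by exact h1 : (|A| : ℝ) < 2)
    have h3 := abs_lt.mp h2
    omega
  rcases hA with hA | hA | hA <;> subst hA <;> push_cast at hquad
  · have h3 : ζ ^ 3 = 1 := by linear_combination (ζ - 1) * hquad
    have hd := hζ.dvd_of_pow_eq_one 3 h3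
    have : m = 3 := by
      have := Nat.le_of_dvd (by norm_num) hd
      interval_cases m <;> omega
    simp [this]
  · have h4 : ζ ^ 4 = 1 := by linear_combination (ζ ^ 2 - 1) * hquad
    have hd := hζ.dvd_of_pow_eq_one 4 h4
    have : m = 4 := by
      have := Nat.le_of_dvd (by norm_num) hd
      interval_cases m <;> omega
    simp [this]
  · have h3 : ζ ^ 3 = -1 := by linear_combination (ζ + 1) * hquad
    have h6 : ζ ^ 6 = 1 := by
      have h' : ζ ^ 6 = (ζ ^ 3) ^ 2 := by ring
      rw [h', h3]; ring
    have hd := hζ.dvd_of_pow_eq_one 6 h6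
    have : m = 6 := by
      have hle := Nat.le_of_dvd (by norm_num) hd
      have hm3' : m ≠ 3 := by
        intro he
        rw [← he] at h3
        rw [hζ.pow_eq_one] at h3
        norm_num at h3
      interval_cases m <;> omega
    simp [this]

lemma disc_eps {E : Type*} [NormedAddCommGroup E] (S : AddSubgroup E)
    (h : DiscreteTopology S) : ∃ ε > 0, ∀ x ∈ S, ‖x‖ < ε → x = (0 : E) := by
  have h0 : IsOpen ({0} : Set S) := isOpen_discrete _
  obtain ⟨U, hU, hUeq⟩ := isOpen_induced_iff.mp h0
  have h0U : (0 : E) ∈ U := by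
    have : (⟨0, S.zero_mem⟩ : S) ∈ Subtype.val ⁻¹' U := by rw [hUeq]; rfl
    exact this
  obtain ⟨ε, hε, hball⟩ := Metric.isOpen_iff.mp hU 0 h0U
  refine ⟨ε, hε, fun x hx hnorm => ?_⟩
  have hmem : (⟨x, hx⟩ : S) ∈ Subtype.val ⁻¹' U :=
    hball (by simpa [Metric.mem_ball, dist_zero_right] using hnorm)
  rw [hUeq] at hmem
  exact Subtype.ext_iff.mp hmem

lemma disc_of_eps {E : Type*} [NormedAddCommGroup E] (S : Submodule ℤ E)
    {ε : ℝ} (hε : 0 < ε) (h : ∀ x ∈ S, ‖x‖ < ε → x = 0) : DiscreteTopology S := by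
  refine discreteTopology_iff_isOpen_singleton_zero.mpr ?_
  refine isOpen_induced_iff.mpr ⟨Metric.ball 0 ε, Metric.isOpen_ball, ?_⟩
  ext x
  simp only [Set.mem_preimage, Metric.mem_ball, dist_zero_right, Set.mem_singleton_iff]
  constructor
  · intro hx
    exact Subtype.ext (h x x.2 hx)
  · rintro rfl
    simpa using hε


set_option maxHeartbeats 1000000 in
/-- Let `G = G(m,p,n)` with `m ≥ 2`, `n ≥ 3` act on an abelian variety
`A = ℂ^n ⧸ Λ` of dimension `n` with its (irreducible) standard imprimitive reflection
representation, i.e. `Λ` is stable under coordinate permutations and under the diagonal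
elements `(ζ^{a₁}, …, ζ^{aₙ})` with `p ∣ Σ aᵢ`, where `ζ` is a primitive `m`-th root of
unity.  Let `E₁ ⊆ A` be the image of the coordinate line `ℂe₁`.  Then:
(1) `E₁` is an elliptic curve, i.e. `Λ ∩ ℂe₁` is a lattice in `ℂe₁`;
(2) the element `(ζ, ζ⁻¹, 1, …, 1) ∈ H` preserves `E₁`, acting on it by multiplication
by `ζ` (in particular `Λ ∩ ℂe₁` is `ζ`-stable);
(3) this automorphism of `E₁` has order exactly `m`: multiplication by `ζ^k` induces the
identity on `E₁` iff `m ∣ k`; hence `m ∈ {2, 3, 4, 6}`. -/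
theorem coordinate_line_gives_elliptic_curve {n m p : ℕ} (hm : 2 ≤ m) (hn : 3 ≤ n)
    (hp : p ∣ m) (hp1 : 1 ≤ p)
    (ζ : ℂ) (hζ : IsPrimitiveRoot ζ m)
    (Λ : AddSubgroup (Vn n)) (hdisc : DiscreteTopology Λ)
    (hspan : Submodule.span ℝ (Λ : Set (Vn n)) = ⊤)
    (hperm : ∀ π : Equiv.Perm (Fin n), ∀ v ∈ Λ, (fun i => v (π⁻¹ i)) ∈ Λ)
    (hdiag : ∀ a : Fin n → ℕ, (p ∣ ∑ i, a i) → ∀ v ∈ Λ, (fun i => ζ ^ (a i) * v i) ∈ Λ) :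
    let e1 : Vn n := Pi.single (⟨0, by omega⟩ : Fin n) (1 : ℂ)
    (Submodule.span ℝ ((Λ : Set (Vn n)) ∩
        ((ℂ ∙ e1) : Set (Vn n))) =
      (ℂ ∙ e1).restrictScalars ℝ) ∧
    (∀ v ∈ Λ, v ∈ (ℂ ∙ e1) → ζ • v ∈ Λ) ∧
    (∀ k : ℕ,
      ((∀ t : Vn n, t ∈ (ℂ ∙ e1) → ζ ^ k • t - t ∈ Λ) ↔
        m ∣ k)) ∧
    m ∈ ({2, 3, 4, 6} : Set ℕ) := by
  intro e1
  set i0 : Fin n := ⟨0, by omega⟩ with hi0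
  set i1 : Fin n := ⟨1, by omega⟩ with hi1
  set i2 : Fin n := ⟨2, by omega⟩ with hi2
  have hne01 : i0 ≠ i1 := by simp [hi0, hi1, Fin.ext_iff]
  have hne02 : i0 ≠ i2 := by simp [hi0, hi2, Fin.ext_iff]
  have hne12 : i1 ≠ i2 := by simp [hi1, hi2, Fin.ext_iff]
  have he1 : e1 = Pi.single i0 (1 : ℂ) := rfl
  have he1_i0 : e1 i0 = 1 := by rw [he1]; simp
  have he1_ne : ∀ i, i ≠ i0 → e1 i = 0 := by
    intro i hi; rw [he1]; exact Pi.single_eq_of_ne hi 1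
  have hm1 : m - 1 + 1 = m := by omega
  -- Key projection: for v ∈ Λ, (m * (v i0 - v i1)) • e1 ∈ Λ
  have K1 : ∀ v ∈ Λ, ((m : ℂ) * (v i0 - v i1)) • e1 ∈ Λ := by
    intro v hv
    have hw : (fun i => v i - v (Equiv.swap i0 i1 i)) ∈ Λ := by
      have h1 := hperm (Equiv.swap i0 i1) v hv
      rw [Equiv.swap_inv] at h1
      exact Λ.sub_mem hv h1
    set w : Vn n := fun i => v i - v (Equiv.swap i0 i1 i) with hwdef
    set a : ℕ → Fin n → ℕ :=
      fun j i => if i = i1 then j else if i = i2 then j * (m - 1) else 0 with ha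
    have hasum : ∀ j, ∑ i, a j i = j * m := by
      intro j
      have hsplit : ∀ i, a j i =
          (if i = i1 then j else 0) + (if i = i2 then j * (m - 1) else 0) := by
        intro i
        by_cases h1 : i = i1
        · subst h1; simp [ha, hne12]
        · by_cases h2 : i = i2 <;>
            simp [ha, h1, h2, hne12, hne12.symm, hne01, hne01.symm, hne02, hne02.symm]
      rw [Finset.sum_congr rfl (fun i _ => hsplit i), Finset.sum_add_distrib]
      simp only [Finset.sum_ite_eq', Finset.mem_univ, if_true]
      calc j + j * (m - 1) = j * ((m - 1) + 1) := by ring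
        _ = j * m := by rw [hm1]
    have hmem : ∀ j ∈ Finset.range m, (fun i => ζ ^ (a j i) * w i) ∈ Λ := by
      intro j _
      exact hdiag (a j) (by rw [hasum j]; exact Dvd.dvd.mul_left hp j) w hw
    have hsummem : (∑ j ∈ Finset.range m, fun i => ζ ^ (a j i) * w i) ∈ Λ :=
      AddSubgroup.sum_mem Λ hmem
    have heq : (∑ j ∈ Finset.range m, fun i => ζ ^ (a j i) * w i)
        = ((m : ℂ) * (v i0 - v i1)) • e1 := by
      funext i
      rw [Finset.sum_apply]
      by_cases h1 : i = i0
      · subst h1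
        have ha0 : ∀ j, a j i0 = 0 := fun j => by simp [ha, hne01, hne02]
        have hw0 : w i0 = v i0 - v i1 := by
          simp [hwdef, Equiv.swap_apply_left]
        simp_rw [ha0, pow_zero, one_mul, hw0]
        rw [Finset.sum_const, Finset.card_range]
        simp [he1_i0, nsmul_eq_mul]
      · by_cases h2 : i = i1
        · subst h2
          have ha1 : ∀ j, a j i1 = j := fun j => by simp [ha]
          simp_rw [ha1]
          rw [← Finset.sum_mul, hζ.geom_sum_eq_zero (by omega : 1 < m), zero_mul]
          simp [he1_ne i1 (Ne.symm hne01)]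
        · have hwi : w i = 0 := by
            have hsw : Equiv.swap i0 i1 i = i := Equiv.swap_apply_of_ne_of_ne h1 h2
            simp [hwdef, hsw]
          simp [hwi, he1_ne i h1]
    rw [heq] at hsummem
    exact hsummem
  -- Part 2
  have G2 : ∀ v ∈ Λ, v ∈ (ℂ ∙ e1) → ζ • v ∈ Λ := by
    intro v hv hvl
    obtain ⟨c, hc⟩ := Submodule.mem_span_singleton.mp hvl
    set a : Fin n → ℕ := fun i => if i = i0 then 1 else if i = i2 then m - 1 else 0 with ha
    have hasum : ∑ i, a i = m := by
      have hsplit : ∀ i, a i =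
          (if i = i0 then 1 else 0) + (if i = i2 then m - 1 else 0) := by
        intro i
        by_cases h1 : i = i0
        · subst h1; simp [ha, hne02]
        · by_cases h2 : i = i2 <;>
            simp [ha, h1, h2, hne12, hne12.symm, hne01, hne01.symm, hne02, hne02.symm]
      rw [Finset.sum_congr rfl (fun i _ => hsplit i), Finset.sum_add_distrib]
      simp only [Finset.sum_ite_eq', Finset.mem_univ, if_true]
      omega
    have hmem := hdiag a (by rw [hasum]; exact hp) v hv
    have heq : (fun i => ζ ^ (a i) * v i) = ζ • v := by
      funext i
      by_cases h1 : i = i0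
      · subst h1; simp [ha]
      · have hv0 : v i = 0 := by
          rw [← hc]
          simp [he1_ne i h1]
        simp [hv0]
    rwa [heq] at hmem
  -- Part 1
  have G1 : Submodule.span ℝ ((Λ : Set (Vn n)) ∩ ((ℂ ∙ e1) : Set (Vn n)))
      = (ℂ ∙ e1).restrictScalars ℝ := by
    apply le_antisymm
    · rw [Submodule.span_le]
      intro x hx
      exact hx.2
    · intro x hx
      obtain ⟨c, hc⟩ := Submodule.mem_span_singleton.mp
        (show x ∈ (ℂ ∙ e1) from hx)
      set f : Vn n →ₗ[ℂ] ℂ :=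
        (m : ℂ) • ((LinearMap.proj i0 : Vn n →ₗ[ℂ] ℂ) - LinearMap.proj i1) with hf
      set g : Vn n →ₗ[ℝ] Vn n := (f.smulRight e1).restrictScalars ℝ with hg
      have hgv : ∀ v, g v = ((m : ℂ) * (v i0 - v i1)) • e1 := by
        intro v
        simp [hg, hf, LinearMap.smulRight_apply, smul_eq_mul, mul_sub]
      have himg : Submodule.map g (Submodule.span ℝ (Λ : Set (Vn n))) ≤
          Submodule.span ℝ ((Λ : Set (Vn n)) ∩ ((ℂ ∙ e1) : Set (Vn n))) := by
        rw [Submodule.map_span]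
        apply Submodule.span_mono
        rintro _ ⟨v, hv, rfl⟩
        refine ⟨?_, ?_⟩
        · rw [hgv]; exact K1 v hv
        · rw [hgv]
          exact Submodule.mem_span_singleton.mpr ⟨_, rfl⟩
      have hm0 : (m : ℂ) ≠ 0 := by
        exact_mod_cast (by omega : (m : ℕ) ≠ 0)
      have hx' : x ∈ Submodule.map g (Submodule.span ℝ (Λ : Set (Vn n))) := by
        rw [hspan]
        refine ⟨(c / m) • e1, trivial, ?_⟩
        rw [hgv]
        have hv0 : ((c / m) • e1) i0 = c / m := by simp [he1_i0]
        have hv1 : ((c / m) • e1) i1 = 0 := by simp [he1_ne i1 (Ne.symm hne01)]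
        rw [hv0, hv1, sub_zero, ← hc]
        congr 1
        field_simp
      exact himg hx'
  -- discreteness data
  obtain ⟨ε, hε, hεΛ⟩ := disc_eps Λ hdisc
  have hsm : ∀ z : ℂ, z • e1 = Pi.single i0 z := by
    intro z
    rw [he1, ← Pi.single_smul]
    simp
  -- Part 3
  have G3 : ∀ k : ℕ, ((∀ t : Vn n, t ∈ (ℂ ∙ e1) → ζ ^ k • t - t ∈ Λ) ↔ m ∣ k) := by
    intro k
    constructor
    · intro hall
      by_contra hnd
      have hζk : ζ ^ k - 1 ≠ 0 := by
        intro h0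
        exact hnd (hζ.dvd_of_pow_eq_one k (by linear_combination h0))
      set c : ℂ := ((ε / 2 : ℝ) : ℂ) / (ζ ^ k - 1) with hcdef
      have hmem := hall (c • e1) (Submodule.mem_span_singleton.mpr ⟨c, rfl⟩)
      have heq : ζ ^ k • (c • e1) - c • e1 = ((ε / 2 : ℝ) : ℂ) • e1 := by
        rw [smul_smul, ← sub_smul]
        congr 1
        rw [hcdef]
        field_simp
      rw [heq] at hmem
      have hnorm : ‖((ε / 2 : ℝ) : ℂ) • e1‖ < ε := by
        rw [hsm, Pi.norm_single, Complex.norm_real, Real.norm_eq_abs,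
          abs_of_pos (by linarith : (0:ℝ) < ε / 2)]
        linarith
      have h0 := hεΛ _ hmem hnorm
      rw [hsm] at h0
      have h1 := congrFun h0 i0
      simp only [Pi.single_eq_same, Pi.zero_apply, Complex.ofReal_eq_zero] at h1
      linarith
    · intro hk t ht
      have h1 : ζ ^ k = 1 := (hζ.pow_eq_one_iff_dvd k).mpr hk
      rw [h1, one_smul, sub_self]
      exact Λ.zero_mem
  refine ⟨G1, G2, G3, ?_⟩
  -- Part 4: crystallographic restriction
  set Λ' : Submodule ℤ ℂ :=
    { carrier := {z : ℂ | z • e1 ∈ Λ}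
      add_mem' := fun {x y} hx hy => by
        show (x + y) • e1 ∈ Λ
        rw [add_smul]
        exact Λ.add_mem hx hy
      zero_mem' := by
        show (0 : ℂ) • e1 ∈ Λ
        rw [zero_smul]
        exact Λ.zero_mem
      smul_mem' := fun c {x} hx => by
        show (c • x) • e1 ∈ Λ
        rw [smul_assoc]
        exact AddSubgroup.zsmul_mem Λ hx c } with hΛ'
  have hΛ'mem : ∀ z : ℂ, z ∈ Λ' ↔ z • e1 ∈ Λ := fun z => Iff.rfl
  have hstab : ∀ z ∈ Λ', ζ * z ∈ Λ' := by
    intro z hz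
    rw [hΛ'mem, mul_smul]
    exact G2 _ ((hΛ'mem z).mp hz) (Submodule.mem_span_singleton.mpr ⟨z, rfl⟩)
  have hεΛ' : ∀ z ∈ Λ', ‖z‖ < ε → z = 0 := by
    intro z hz hnz
    have h0 := hεΛ (z • e1) ((hΛ'mem z).mp hz)
      (by rw [hsm, Pi.norm_single]; exact hnz)
    have h1 := congrFun h0 i0
    rw [hsm] at h1
    simpa using h1
  haveI hΛ'disc : DiscreteTopology Λ' := disc_of_eps Λ' hε hεΛ'
  have hΛ'span : Submodule.span ℝ (Λ' : Set ℂ) = ⊤ := by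
    rw [eq_top_iff]
    rintro c -
    have h1 : c • e1 ∈ Submodule.span ℝ ((Λ : Set (Vn n)) ∩ ((ℂ ∙ e1) : Set (Vn n))) := by
      rw [G1]
      exact Submodule.mem_span_singleton.mpr ⟨c, rfl⟩
    set pr : Vn n →ₗ[ℝ] ℂ := (LinearMap.proj i0 : Vn n →ₗ[ℂ] ℂ).restrictScalars ℝ with hpr
    have h2 : Submodule.map pr
        (Submodule.span ℝ ((Λ : Set (Vn n)) ∩ ((ℂ ∙ e1) : Set (Vn n)))) ≤
        Submodule.span ℝ (Λ' : Set ℂ) := by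
      rw [Submodule.map_span]
      apply Submodule.span_mono
      rintro _ ⟨v, ⟨hvΛ, hvl⟩, rfl⟩
      obtain ⟨d, hd⟩ := Submodule.mem_span_singleton.mp (show v ∈ (ℂ ∙ e1) from hvl)
      show pr v ∈ (Λ' : Set ℂ)
      have hpv : pr v = d := by
        rw [hpr, ← hd]
        simp [he1_i0]
      rw [hpv]
      show d • e1 ∈ Λ
      rw [hd]
      exact hvΛ
    exact h2 ⟨c • e1, h1, by simp [hpr, he1_i0]⟩
  haveI : IsZLattice ℝ Λ' := ⟨hΛ'span⟩
  haveI := ZLattice.module_finite ℝ Λ'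
  haveI := ZLattice.module_free ℝ Λ'
  have hcard : Fintype.card (Module.Free.ChooseBasisIndex ℤ Λ') = 2 := by
    rw [← Module.finrank_eq_card_chooseBasisIndex, ZLattice.rank ℝ Λ',
      Complex.finrank_real_complex]
  set B := (Module.Free.chooseBasis ℤ Λ').reindex (Fintype.equivFinOfCardEq hcard) with hB
  set u : ℂ := (B 0 : ℂ) with hu'
  set w : ℂ := (B 1 : ℂ) with hw'
  have hu : u ≠ 0 := fun h => B.ne_zero 0 (ZeroMemClass.coe_eq_zero.mp h)
  have hw : w ≠ 0 := fun h => B.ne_zero 1 (ZeroMemClass.coe_eq_zero.mp h)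
  have hrep : ∀ y : Λ', (y : ℂ) = ((B.repr y 0 : ℤ) : ℂ) * u + ((B.repr y 1 : ℤ) : ℂ) * w := by
    intro y
    have h0 := B.sum_repr y
    rw [Fin.sum_univ_two] at h0
    have h2 := congrArg (fun t : Λ' => (t : ℂ)) h0
    simp only [Submodule.coe_add, Submodule.coe_smul, zsmul_eq_mul] at h2
    exact h2.symm
  set y1 : Λ' := ⟨ζ * u, hstab u (B 0).2⟩ with hy1
  set y2 : Λ' := ⟨ζ * w, hstab w (B 1).2⟩ with hy2
  set a : ℤ := B.repr y1 0 with haa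
  set c : ℤ := B.repr y1 1 with hcc
  set b : ℤ := B.repr y2 0 with hbb
  set d : ℤ := B.repr y2 1 with hdd
  have E1 : ζ * u = (a : ℂ) * u + (c : ℂ) * w := hrep y1
  have E2 : ζ * w = (b : ℂ) * u + (d : ℂ) * w := hrep y2
  have hquad : ζ ^ 2 = ((a + d : ℤ) : ℂ) * ζ + ((c * b - a * d : ℤ) : ℂ) := by
    have h0 : (ζ ^ 2 - ((a + d : ℤ) : ℂ) * ζ - ((c * b - a * d : ℤ) : ℂ)) * (u * w) = 0 := by
      push_cast
      linear_combination ((ζ - (d : ℂ)) * w) * E1 + ((c : ℂ) * w) * E2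
    have h1 := (mul_eq_zero.mp h0).resolve_right (mul_ne_zero hu hw)
    linear_combination h1
  exact crystallographic hm hζ hquad
end
end
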